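/- arXiv:2011.03211 — 7 statements merged into one kernel-verified Lean document; each statement's English description precedes it below -/
import Mathlib

section
/- Let f : G → ℝ be bounded, Borel measurable and nonnegative, and let φ, φ̃ ∈ C_00(G) be nonnegative and not identically zero. Then a function h : G → ℝ is G-dominated by φ*f if and only if h is G-dominated by φ̃*f. -/
open MeasureTheory Topology Pointwise
open scoped ENNReal

variable {G : Type*}

section Defs

variable [Group G] [TopologicalSpace G] [MeasurableSpace G]

/-- Convolution of a (positive Borel) measure `μ` with a function `f`:
`(μ * f)(x) = ∫_G f(y⁻¹ x) dμ(y)`. -/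
noncomputable def mConv (μ : Measure G) (f : G → ℝ) : G → ℝ :=
  fun x => ∫ y, f (y⁻¹ * x) ∂μ

/-- Convolution of two functions with respect to a reference measure `m`:
`(φ * f)(x) = ∫_G φ(y) f(y⁻¹ x) dm(y)`. -/
noncomputable def fConv (m : Measure G) (φ f : G → ℝ) : G → ℝ :=
  fun x => ∫ y, φ y * f (y⁻¹ * x) ∂m

/-- A real-valued function is bounded. -/
def IsBdd (f : G → ℝ) : Prop := ∃ C : ℝ, ∀ x, |f x| ≤ C

/-- `M₀₀(G)₊`: finite positive regular Borel measures with compact support. -/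
def MComp (μ : Measure G) : Prop :=
  IsFiniteMeasure μ ∧ μ.Regular ∧ ∃ K : Set G, IsCompact K ∧ μ Kᶜ = 0

/-- `h` is `G`-dominated by `f`. -/
def GDom (f h : G → ℝ) : Prop :=
  ∃ (n : ℕ) (t : Fin n → ℝ) (g : Fin n → G),
    (∀ j, 0 ≤ t j) ∧ ∀ x, |h x| ≤ ∑ j, t j * f ((g j)⁻¹ * x)

/-- `h` is measurably dominated by `f`. -/
def MDom (f h : G → ℝ) : Prop :=
  ∃ μ : Measure G, MComp μ ∧ ∀ x, |h x| ≤ mConv μ f x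

/-- The `G`-dominated "norm" `p_f`. -/
noncomputable def pNorm (f h : G → ℝ) : ℝ :=
  sInf {s : ℝ | ∃ (n : ℕ) (t : Fin n → ℝ) (g : Fin n → G),
    (∀ j, 0 ≤ t j) ∧ (∀ x, |h x| ≤ ∑ j, t j * f ((g j)⁻¹ * x)) ∧ s = ∑ j, t j}

/-- The measurably dominated "norm" `p̄_f`. -/
noncomputable def pBar (f h : G → ℝ) : ℝ :=
  sInf {s : ℝ | ∃ μ : Measure G, MComp μ ∧ (∀ x, |h x| ≤ mConv μ f x) ∧
    s = (μ Set.univ).toReal}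

/-- Bounded right uniformly continuous real functions on `G`. -/
def RUCb (f : G → ℝ) : Prop :=
  IsBdd f ∧ Continuous f ∧
    ∀ ε : ℝ, 0 < ε → ∃ U ∈ 𝓝 (1 : G), ∀ g ∈ U, ∀ x, |f (g⁻¹ * x) - f x| < ε

/-- Bounded left uniformly continuous real functions on `G`. -/
def LUCb (f : G → ℝ) : Prop :=
  IsBdd f ∧ Continuous f ∧
    ∀ ε : ℝ, 0 < ε → ∃ U ∈ 𝓝 (1 : G), ∀ g ∈ U, ∀ x, |f (x * g) - f x| < ε

end Defs

section Aux
set_option linter.unusedSectionVars false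

variable [Group G]

lemma gdom_trans {f₁ f₂ h : G → ℝ} (h21 : GDom f₂ f₁) (h1h : GDom f₁ h) : GDom f₂ h := by
  obtain ⟨n, t, g, ht, hb⟩ := h1h
  obtain ⟨N, s, g', hs, hb'⟩ := h21
  refine ⟨n * N, fun k => t (finProdFinEquiv.symm k).1 * s (finProdFinEquiv.symm k).2,
    fun k => g (finProdFinEquiv.symm k).1 * g' (finProdFinEquiv.symm k).2,
    fun k => mul_nonneg (ht _) (hs _), fun x => ?_⟩
  have hsum : ∑ k : Fin (n * N),
      t (finProdFinEquiv.symm k).1 * s (finProdFinEquiv.symm k).2 *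
        f₂ ((g (finProdFinEquiv.symm k).1 * g' (finProdFinEquiv.symm k).2)⁻¹ * x)
      = ∑ p : Fin n × Fin N, t p.1 * s p.2 * f₂ ((g p.1 * g' p.2)⁻¹ * x) := by
    exact (Equiv.sum_comp finProdFinEquiv.symm
      (fun p : Fin n × Fin N => t p.1 * s p.2 * f₂ ((g p.1 * g' p.2)⁻¹ * x)))
  rw [hsum, Fintype.sum_prod_type]
  calc |h x| ≤ ∑ j, t j * f₁ ((g j)⁻¹ * x) := hb x
    _ ≤ ∑ j, ∑ k, t j * s k * f₂ ((g j * g' k)⁻¹ * x) := by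
        refine Finset.sum_le_sum fun j _ => ?_
        have := (le_abs_self _).trans (hb' ((g j)⁻¹ * x))
        calc t j * f₁ ((g j)⁻¹ * x)
            ≤ t j * ∑ k, s k * f₂ ((g' k)⁻¹ * ((g j)⁻¹ * x)) :=
              mul_le_mul_of_nonneg_left this (ht j)
          _ = ∑ k, t j * s k * f₂ ((g j * g' k)⁻¹ * x) := by
              rw [Finset.mul_sum]
              exact Finset.sum_congr rfl fun k _ => by rw [mul_inv_rev, mul_assoc, mul_assoc]

variable [TopologicalSpace G] [IsTopologicalGroup G] [LocallyCompactSpace G]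
    [T2Space G] [MeasurableSpace G] [BorelSpace G]

lemma integrable_conv (m : Measure G) [m.IsHaarMeasure]
    {f : G → ℝ} (hfm : Measurable f) {C : ℝ} (hC : ∀ x, |f x| ≤ C)
    {φ : G → ℝ} (hφc : Continuous φ) (hφs : HasCompactSupport φ) (x : G) :
    Integrable (fun y => φ y * f (y⁻¹ * x)) m := by
  have hmeas : Measurable fun y : G => φ y * f (y⁻¹ * x) :=
    hφc.measurable.mul (hfm.comp (measurable_inv.mul_const x))
  have hint : Integrable (fun y => ‖φ y‖ * C) m :=
    ((hφc.integrable_of_hasCompactSupport hφs).norm).mul_const C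
  refine hint.mono hmeas.aestronglyMeasurable (Filter.Eventually.of_forall fun y => ?_)
  have h1 : ‖φ y * f (y⁻¹ * x)‖ ≤ ‖φ y‖ * C := by
    rw [norm_mul]
    exact mul_le_mul_of_nonneg_left (by simpa using hC (y⁻¹ * x)) (norm_nonneg _)
  refine h1.trans (le_abs_self _)

lemma integrable_ind (m : Measure G) [m.IsHaarMeasure]
    {f : G → ℝ} (hfm : Measurable f) {C : ℝ} (hC : ∀ x, |f x| ≤ C)
    {V : Set G} (hVm : MeasurableSet V) (hVfin : m V < ⊤) (x : G) :
    Integrable (fun y => V.indicator (fun _ => (1:ℝ)) y * f (y⁻¹ * x)) m := by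
  have hmeas : Measurable fun y : G => V.indicator (fun _ => (1:ℝ)) y * f (y⁻¹ * x) :=
    ((measurable_const.indicator hVm)).mul (hfm.comp (measurable_inv.mul_const x))
  have hint : Integrable (V.indicator fun _ => |C|) m := by
    rw [integrable_indicator_iff hVm]
    exact integrableOn_const hVfin.ne
  refine hint.mono hmeas.aestronglyMeasurable (Filter.Eventually.of_forall fun y => ?_)
  by_cases hy : y ∈ V
  · simp only [Set.indicator_of_mem hy, one_mul, Real.norm_eq_abs, abs_abs]
    exact (hC (y⁻¹ * x)).trans (le_abs_self C)
  · simp [Set.indicator_of_notMem hy]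

lemma gdom_conv (m : Measure G) [m.IsHaarMeasure]
    (f : G → ℝ) (hfm : Measurable f) (hfb : IsBdd f) (hf0 : ∀ x, 0 ≤ f x)
    (φ φ' : G → ℝ)
    (hφc : Continuous φ) (hφs : HasCompactSupport φ)
    (hφ0 : ∀ x, 0 ≤ φ x)
    (hφ'c : Continuous φ') (hφ's : HasCompactSupport φ')
    (hφ'0 : ∀ x, 0 ≤ φ' x) (hφ'ne : φ' ≠ 0) :
    GDom (fConv m φ' f) (fConv m φ f) := by
  obtain ⟨C, hC⟩ := hfb
  -- a point where φ' is positive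
  obtain ⟨y0, hy0⟩ : ∃ y0, φ' y0 ≠ 0 := Function.ne_iff.1 hφ'ne
  have hy0' : 0 < φ' y0 := lt_of_le_of_ne (hφ'0 y0) (Ne.symm hy0)
  set c : ℝ := φ' y0 / 2 with hc
  have hcpos : 0 < c := by positivity
  set V : Set G := {y | c < φ' y} with hV
  have hVopen : IsOpen V := isOpen_lt continuous_const hφ'c
  have hy0V : y0 ∈ V := by
    simp only [hV, Set.mem_setOf_eq, hc]
    linarith
  have hVsub : V ⊆ tsupport φ' := fun y hy =>
    subset_tsupport φ' (Function.mem_support.2 (by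
      intro h0
      simp only [hV, Set.mem_setOf_eq, h0] at hy
      linarith))
  have hVfin : m V < ⊤ := lt_of_le_of_lt (measure_mono hVsub) hφ's.measure_lt_top
  -- bound on φ
  obtain ⟨M, hM⟩ := hφs.exists_bound_of_continuous hφc
  have hMpos : 0 ≤ M := le_trans (norm_nonneg _) (hM 1)
  -- cover tsupport φ by finitely many translates of V
  obtain ⟨τ, hτ⟩ := hφs.elim_finite_subcover (fun g : G => (g * y0⁻¹) • V)
    (fun g => hVopen.smul _)
    (fun k hk => Set.mem_iUnion.2 ⟨k, ⟨y0, hy0V, by show (k * y0⁻¹) * y0 = k; rw [inv_mul_cancel_right]⟩⟩)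
  set n := τ.card
  set gg : Fin n → G := fun j => (τ.equivFin.symm j : G) * y0⁻¹ with hgg
  refine ⟨n, fun _ => M / c, gg, fun _ => by positivity, fun x => ?_⟩
  have hconv0 : 0 ≤ fConv m φ f x :=
    integral_nonneg fun y => mul_nonneg (hφ0 y) (hf0 _)
  rw [abs_of_nonneg hconv0]
  -- step 1: φ y * f(y⁻¹x) ≤ ∑_j M * indicator (gg j • V) y * f (y⁻¹ x)
  have hindint : ∀ j ∈ (Finset.univ : Finset (Fin n)), Integrable
      (fun y => M * (((gg j) • V).indicator (fun _ => (1:ℝ)) y * f (y⁻¹ * x))) m := fun j _ =>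
    (integrable_ind m hfm hC ((hVopen.smul _).measurableSet)
      (by rwa [measure_smul]) x).const_mul M
  have hstep1 : fConv m φ f x ≤
      ∑ j : Fin n, ∫ y, M * (((gg j) • V).indicator (fun _ => (1:ℝ)) y * f (y⁻¹ * x)) ∂m := by
    rw [← integral_finset_sum _ hindint]
    refine integral_mono (integrable_conv m hfm hC hφc hφs x)
      (integrable_finset_sum _ hindint) fun y => ?_
    by_cases hy : y ∈ tsupport φ
    · obtain ⟨j0, hj0⟩ : ∃ j : Fin n, y ∈ (gg j) • V := by
        have := hτ hy
        simp only [Set.mem_iUnion] at this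
        obtain ⟨g, hg, hmem⟩ := this
        exact ⟨τ.equivFin ⟨g, hg⟩, by simpa [hgg, Equiv.symm_apply_apply] using hmem⟩
      calc φ y * f (y⁻¹ * x) ≤ M * f (y⁻¹ * x) :=
            mul_le_mul_of_nonneg_right (le_trans (le_abs_self _) (by simpa using hM y)) (hf0 _)
        _ = M * (((gg j0) • V).indicator (fun _ => (1:ℝ)) y * f (y⁻¹ * x)) := by
            rw [Set.indicator_of_mem hj0, one_mul]
        _ ≤ _ := by
            refine Finset.single_le_sum (f := fun j =>
              M * (((gg j) • V).indicator (fun _ => (1:ℝ)) y * f (y⁻¹ * x))) ?_ (Finset.mem_univ j0)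
            intro j _
            exact mul_nonneg hMpos (mul_nonneg (Set.indicator_nonneg (fun _ _ => zero_le_one) y) (hf0 _))
    · have hy0 : φ y = 0 := image_eq_zero_of_notMem_tsupport hy
      rw [hy0, zero_mul]
      exact Finset.sum_nonneg fun j _ =>
        mul_nonneg hMpos (mul_nonneg (Set.indicator_nonneg (fun _ _ => zero_le_one) y) (hf0 _))
  -- step 2: each translate term
  have hstep2 : ∀ j : Fin n,
      ∫ y, M * (((gg j) • V).indicator (fun _ => (1:ℝ)) y * f (y⁻¹ * x)) ∂m ≤
        (M / c) * fConv m φ' f ((gg j)⁻¹ * x) := by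
    intro j
    have htrans : ∫ y, ((gg j) • V).indicator (fun _ => (1:ℝ)) y * f (y⁻¹ * x) ∂m
        = ∫ z, V.indicator (fun _ => (1:ℝ)) z * f (z⁻¹ * ((gg j)⁻¹ * x)) ∂m := by
      rw [← integral_mul_left_eq_self (fun y => ((gg j) • V).indicator (fun _ => (1:ℝ)) y * f (y⁻¹ * x)) (gg j)]
      refine integral_congr_ae (Filter.Eventually.of_forall fun z => ?_)
      have hmem : (gg j * z ∈ (gg j) • V) ↔ z ∈ V := by
        rw [Set.mem_smul_set_iff_inv_smul_mem]; simp
      show ((gg j) • V).indicator (fun _ => (1:ℝ)) (gg j * z) * f ((gg j * z)⁻¹ * x)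
        = V.indicator (fun _ => (1:ℝ)) z * f (z⁻¹ * ((gg j)⁻¹ * x))
      congr 1
      · by_cases hz : z ∈ V
        · rw [Set.indicator_of_mem (hmem.2 hz), Set.indicator_of_mem hz]
        · rw [Set.indicator_of_notMem (fun hh => hz (hmem.1 hh)), Set.indicator_of_notMem hz]
      · rw [mul_inv_rev, mul_assoc]
    rw [integral_const_mul, htrans]
    rw [div_mul_eq_mul_div, mul_div_assoc]
    refine mul_le_mul_of_nonneg_left ?_ hMpos
    rw [div_eq_inv_mul]
    show _ ≤ c⁻¹ * ∫ z, φ' z * f (z⁻¹ * ((gg j)⁻¹ * x)) ∂m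
    rw [← integral_const_mul]
    refine integral_mono (integrable_ind m hfm hC hVopen.measurableSet hVfin _)
      ((integrable_conv m hfm hC hφ'c hφ's _).const_mul _) fun z => ?_
    by_cases hz : z ∈ V
    · rw [Set.indicator_of_mem hz, one_mul]
      have hz' : c < φ' z := hz
      have : (1:ℝ) ≤ c⁻¹ * φ' z := by
        rw [inv_mul_eq_div, le_div_iff₀ hcpos, one_mul]
        exact hz'.le
      calc f (z⁻¹ * ((gg j)⁻¹ * x)) = 1 * f (z⁻¹ * ((gg j)⁻¹ * x)) := (one_mul _).symm
        _ ≤ c⁻¹ * φ' z * f (z⁻¹ * ((gg j)⁻¹ * x)) := mul_le_mul_of_nonneg_right this (hf0 _)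
        _ = c⁻¹ * (φ' z * f (z⁻¹ * ((gg j)⁻¹ * x))) := mul_assoc _ _ _
    · rw [Set.indicator_of_notMem hz, zero_mul]
      exact mul_nonneg (by positivity) (mul_nonneg (hφ'0 _) (hf0 _))
  calc fConv m φ f x ≤ _ := hstep1
    _ ≤ ∑ j : Fin n, (M / c) * fConv m φ' f ((gg j)⁻¹ * x) :=
        Finset.sum_le_sum fun j _ => hstep2 j

end Aux

theorem statement_6 [Group G] [TopologicalSpace G] [IsTopologicalGroup G] [LocallyCompactSpace G]
    [T2Space G] [MeasurableSpace G] [BorelSpace G]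
    (m : Measure G) [m.IsHaarMeasure]
    (f : G → ℝ) (hfm : Measurable f) (hfb : IsBdd f) (hf0 : ∀ x, 0 ≤ f x)
    (φ φ' : G → ℝ)
    (hφc : Continuous φ) (hφs : HasCompactSupport φ)
    (hφ0 : ∀ x, 0 ≤ φ x) (hφne : φ ≠ 0)
    (hφ'c : Continuous φ') (hφ's : HasCompactSupport φ')
    (hφ'0 : ∀ x, 0 ≤ φ' x) (hφ'ne : φ' ≠ 0)
    (h : G → ℝ) :
    GDom (fConv m φ f) h ↔ GDom (fConv m φ' f) h := by
  constructor
  · exact fun hd => gdom_trans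
      (gdom_conv m f hfm hfb hf0 φ φ' hφc hφs hφ0 hφ'c hφ's hφ'0 hφ'ne) hd
  · exact fun hd => gdom_trans
      (gdom_conv m f hfm hfb hf0 φ' φ hφ'c hφ's hφ'0 hφc hφs hφ0 hφne) hd
end

section
/- Let f : G → ℝ be bounded, Borel measurable and nonnegative, and let φ ∈ C_00(G) be nonnegative and not identically zero. Then a function h : G → ℝ is G-dominated by φ*f if and only if h is measurably dominated by φ*f, i.e., if and only if there exists λ ∈ M_00(G)_+ with |h(x)| ≤ (λ*(φ*f))(x) for all x ∈ G. -/
open MeasureTheory Topology Pointwise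
open scoped ENNReal

variable {G : Type*}

section Aux

set_option linter.unusedSectionVars false


variable [TopologicalSpace G] [MeasurableSpace G] [T1Space G] [OpensMeasurableSpace G]

lemma sum_dirac_apply {ι : Type*} (s : Finset ι) (c : ι → ℝ≥0∞) (a : ι → G) (A : Set G) :
    (∑ i ∈ s, c i • Measure.dirac (a i)) A = ∑ i ∈ s, c i * A.indicator 1 (a i) := by
  rw [Measure.finset_sum_apply]
  simp [Measure.dirac_apply]

lemma sum_dirac_congr {ι : Type*} (s : Finset ι) (c : ι → ℝ≥0∞) (a : ι → G) {A B : Set G}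
    (h : ∀ i ∈ s, a i ∈ A ↔ a i ∈ B) :
    (∑ i ∈ s, c i • Measure.dirac (a i)) A = (∑ i ∈ s, c i • Measure.dirac (a i)) B := by
  rw [sum_dirac_apply, sum_dirac_apply]
  refine Finset.sum_congr rfl fun i hi => ?_
  by_cases hA : a i ∈ A
  · rw [Set.indicator_of_mem hA, Set.indicator_of_mem ((h i hi).1 hA)]
  · rw [Set.indicator_of_notMem hA, Set.indicator_of_notMem (fun hB => hA ((h i hi).2 hB))]

lemma sum_dirac_finite {ι : Type*} (s : Finset ι) (c : ι → ℝ≥0∞) (hc : ∀ i, c i ≠ ∞)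
    (a : ι → G) : IsFiniteMeasure (∑ i ∈ s, c i • Measure.dirac (a i)) := by
  constructor
  rw [sum_dirac_apply]
  exact ENNReal.sum_lt_top.2 fun i _ => by
    simpa using (hc i).lt_top

lemma sum_dirac_regular {ι : Type*} (s : Finset ι) (c : ι → ℝ≥0∞) (hc : ∀ i, c i ≠ ∞)
    (a : ι → G) : (∑ i ∈ s, c i • Measure.dirac (a i)).Regular := by
  set ν := ∑ i ∈ s, c i • Measure.dirac (a i) with hν
  haveI : IsFiniteMeasure ν := sum_dirac_finite s c hc a
  refine { toIsFiniteMeasureOnCompacts := inferInstance, toOuterRegular := ⟨?_⟩,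
           innerRegular := ?_ }
  · intro A hA r hr
    classical
    set T : Finset G := (s.filter (fun i => a i ∉ A)).image a with hT
    refine ⟨(↑T : Set G)ᶜ, ?_, ?_, ?_⟩
    · intro x hx hxT
      obtain ⟨i, hi, hix⟩ := Finset.mem_image.1 hxT
      exact (Finset.mem_filter.1 hi).2 (hix ▸ hx)
    · exact (T.finite_toSet.isClosed).isOpen_compl
    · have : ν (↑T : Set G)ᶜ = ν A := by
        refine sum_dirac_congr s c a fun i hi => ?_
        constructor
        · intro hU
          by_contra hA'
          exact hU (Finset.mem_coe.2 (Finset.mem_image.2 ⟨i, Finset.mem_filter.2 ⟨hi, hA'⟩, rfl⟩))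
        · intro hAi hTi
          obtain ⟨j, hj, hji⟩ := Finset.mem_image.1 (Finset.mem_coe.1 hTi)
          exact (Finset.mem_filter.1 hj).2 (hji ▸ hAi)
      exact this ▸ hr
  · intro U hU r hr
    classical
    set K : Finset G := (s.filter (fun i => a i ∈ U)).image a with hK
    have hKU : (↑K : Set G) ⊆ U := by
      intro x hx
      obtain ⟨i, hi, hix⟩ := Finset.mem_image.1 (Finset.mem_coe.1 hx)
      exact hix ▸ (Finset.mem_filter.1 hi).2
    have : ν (↑K : Set G) = ν U := by
      refine sum_dirac_congr s c a fun i hi => ?_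
      constructor
      · intro hKi; exact hKU hKi
      · intro hUi
        exact Finset.mem_coe.2 (Finset.mem_image.2 ⟨i, Finset.mem_filter.2 ⟨hi, hUi⟩, rfl⟩)
    exact ⟨↑K, hKU, K.finite_toSet.isCompact, this ▸ hr⟩

lemma integrable_smul_dirac [MeasurableSingletonClass G] (F : G → ℝ) (c : ℝ≥0∞) (hc : c ≠ ∞)
    (a : G) : Integrable F (c • Measure.dirac a) := by
  have hae : F =ᵐ[c • Measure.dirac a] (fun _ => F a) := by
    rw [Filter.EventuallyEq, MeasureTheory.ae_iff]
    have h1 : {y | ¬ F y = F a} ⊆ ({a}ᶜ : Set G) := by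
      intro y hy hya
      simp only [Set.mem_singleton_iff] at hya
      exact hy (by rw [hya])
    have h2 : (c • Measure.dirac a) ({a}ᶜ : Set G) = 0 := by
      rw [Measure.smul_apply, Measure.dirac_apply]; simp
    exact measure_mono_null h1 h2
  have : Integrable (fun _ => F a) (c • Measure.dirac a) := by
    refine integrable_const_iff.2 (Or.inr ?_)
    constructor
    rw [Measure.smul_apply, Measure.dirac_apply]
    simpa using hc.lt_top
  exact this.congr hae.symm

end Aux

theorem statement_7 [Group G] [TopologicalSpace G] [IsTopologicalGroup G] [LocallyCompactSpace G]
    [T2Space G] [MeasurableSpace G] [BorelSpace G]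
    (m : Measure G) [m.IsHaarMeasure]
    (f : G → ℝ) (hfm : Measurable f) (hfb : IsBdd f) (hf0 : ∀ x, 0 ≤ f x)
    (φ : G → ℝ) (hφc : Continuous φ) (hφs : HasCompactSupport φ)
    (hφ0 : ∀ x, 0 ≤ φ x) (hφne : φ ≠ 0)
    (h : G → ℝ) :
    GDom (fConv m φ f) h ↔ MDom (fConv m φ f) h := by
  classical
  set F : G → ℝ := fConv m φ f with hF
  have hFnn : ∀ u, 0 ≤ F u := fun u =>
    integral_nonneg fun z => mul_nonneg (hφ0 z) (hf0 _)
  constructor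
  · -- GDom → MDom
    rintro ⟨n, t, g, ht, hb⟩
    set μ : Measure G := ∑ j ∈ Finset.univ, ENNReal.ofReal (t j) • Measure.dirac (g j) with hμ
    have hcne : ∀ j : Fin n, ENNReal.ofReal (t j) ≠ ∞ := fun j => ENNReal.ofReal_ne_top
    refine ⟨μ, ⟨sum_dirac_finite _ _ hcne _, sum_dirac_regular _ _ hcne _,
      Set.range g, (Set.finite_range g).isCompact, ?_⟩, ?_⟩
    · rw [hμ, sum_dirac_apply]
      refine Finset.sum_eq_zero fun j _ => ?_
      rw [Set.indicator_of_notMem (by simp)]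
      simp
    · intro x
      have : mConv μ F x = ∑ j, t j * F ((g j)⁻¹ * x) := by
        rw [mConv, hμ, integral_finset_sum_measure
          (fun j _ => integrable_smul_dirac _ _ (hcne j) _)]
        refine Finset.sum_congr rfl fun j _ => ?_
        rw [integral_smul_measure, integral_dirac, ENNReal.toReal_ofReal (ht j), smul_eq_mul]
      rw [this]
      exact hb x
  · -- MDom → GDom
    rintro ⟨μ, ⟨hfin, hreg, K, hK, hK0⟩, hb⟩
    haveI := hfin
    obtain ⟨C, hC⟩ := hfb
    have hC0 : ∀ x, f x ≤ C := fun x => (le_abs_self _).trans (hC x)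
    obtain ⟨M, hM⟩ := hφc.bounded_above_of_compact_support hφs
    have hM' : ∀ z, φ z ≤ M := fun z => (le_abs_self _).trans (by simpa using hM z)
    have hM0 : 0 ≤ M := le_trans (hφ0 1) (hM' 1)
    obtain ⟨a, ha⟩ : ∃ a, φ a ≠ 0 := by
      by_contra hcon
      push_neg at hcon
      exact hφne (funext hcon)
    have hc : 0 < φ a := lt_of_le_of_ne (hφ0 a) (Ne.symm ha)
    set c : ℝ := φ a with hcdef
    -- compact set L = K * tsupport φ
    set L : Set G := K * tsupport φ with hL
    have hLc : IsCompact L := hK.mul hφs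
    -- open cover
    set U : G → Set G := fun x => {w | c / 2 < φ (a * x⁻¹ * w)} with hU
    have hUo : ∀ x, IsOpen (U x) := fun x =>
      isOpen_lt continuous_const (hφc.comp (continuous_const.mul continuous_id))
    have hcov : L ⊆ ⋃ x, U x := by
      intro x hx
      refine Set.mem_iUnion.2 ⟨x, ?_⟩
      show c / 2 < φ (a * x⁻¹ * x)
      rw [mul_assoc, inv_mul_cancel, mul_one]
      exact half_lt_self hc
    obtain ⟨s, hs⟩ := hLc.elim_finite_subcover U hUo hcov
    -- key pointwise bound
    have key : ∀ y ∈ K, ∀ w, φ (y⁻¹ * w) ≤ (2 * M / c) * ∑ x ∈ s, φ ((x * a⁻¹)⁻¹ * w) := by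
      intro y hy w
      have hRHSnn : 0 ≤ ∑ x ∈ s, φ ((x * a⁻¹)⁻¹ * w) :=
        Finset.sum_nonneg fun x _ => hφ0 _
      by_cases hw : y⁻¹ * w ∈ tsupport φ
      · have hwL : w ∈ L := by
          rw [hL]
          have : w = y * (y⁻¹ * w) := by group
          rw [this]
          exact Set.mul_mem_mul hy hw
        obtain ⟨x, hxs, hxw⟩ := Set.mem_iUnion₂.1 (hs hwL)
        have h1 : c / 2 < φ ((x * a⁻¹)⁻¹ * w) := by
          rw [mul_inv_rev, inv_inv]
          exact hxw
        have h2 : c / 2 ≤ ∑ x' ∈ s, φ ((x' * a⁻¹)⁻¹ * w) :=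
          le_trans h1.le (Finset.single_le_sum
            (f := fun x' => φ ((x' * a⁻¹)⁻¹ * w)) (fun x' _ => hφ0 _) hxs)
        calc φ (y⁻¹ * w) ≤ M := hM' _
          _ = (2 * M / c) * (c / 2) := by field_simp
          _ ≤ (2 * M / c) * ∑ x' ∈ s, φ ((x' * a⁻¹)⁻¹ * w) := by
              apply mul_le_mul_of_nonneg_left h2
              positivity
      · have : φ (y⁻¹ * w) = 0 := image_eq_zero_of_notMem_tsupport hw
        rw [this]
        positivity
    -- translation identity
    have trans_id : ∀ (g : G) (x : G),
        (∫ w, φ (g⁻¹ * w) * f (w⁻¹ * x) ∂m) = F (g⁻¹ * x) := by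
      intro g x
      have eq1 : (fun z => φ (g⁻¹ * (g * z)) * f ((g * z)⁻¹ * x))
          = fun z => φ z * f (z⁻¹ * (g⁻¹ * x)) := by
        funext z
        have e1 : g⁻¹ * (g * z) = z := by group
        have e2 : (g * z)⁻¹ * x = z⁻¹ * (g⁻¹ * x) := by group
        rw [e1, e2]
      calc (∫ w, φ (g⁻¹ * w) * f (w⁻¹ * x) ∂m)
          = ∫ z, φ (g⁻¹ * (g * z)) * f ((g * z)⁻¹ * x) ∂m :=
            (integral_mul_left_eq_self (fun w => φ (g⁻¹ * w) * f (w⁻¹ * x)) g).symm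
        _ = ∫ z, φ z * f (z⁻¹ * (g⁻¹ * x)) ∂m := by rw [eq1]
        _ = F (g⁻¹ * x) := rfl
    -- integrability of each summand
    have hint : ∀ (b : G) (x : G),
        Integrable (fun w => φ (b⁻¹ * w) * f (w⁻¹ * x)) m := by
      intro b x
      have hψc : Continuous fun w => φ (b⁻¹ * w) :=
        hφc.comp (continuous_const.mul continuous_id)
      have hψs : HasCompactSupport fun w => φ (b⁻¹ * w) :=
        hφs.comp_homeomorph (Homeomorph.mulLeft b⁻¹)
      have hψint : Integrable (fun w => C * φ (b⁻¹ * w)) m :=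
        (hψc.integrable_of_hasCompactSupport hψs).const_mul C
      refine hψint.mono' ?_ (Filter.Eventually.of_forall fun w => ?_)
      · exact ((hφc.measurable.comp (measurable_const_mul b⁻¹)).mul
          (hfm.comp (measurable_inv.mul_const x))).aestronglyMeasurable
      · rw [Real.norm_eq_abs, abs_mul, abs_of_nonneg (hφ0 _)]
        calc φ (b⁻¹ * w) * |f (w⁻¹ * x)| ≤ φ (b⁻¹ * w) * C :=
              mul_le_mul_of_nonneg_left (hC _) (hφ0 _)
          _ = C * φ (b⁻¹ * w) := mul_comm _ _
    -- bound on F(y⁻¹x) for y ∈ K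
    have Fbound : ∀ y ∈ K, ∀ x,
        F (y⁻¹ * x) ≤ ∑ x' ∈ s, (2 * M / c) * F ((x' * a⁻¹)⁻¹ * x) := by
      intro y hy x
      rw [← trans_id y x]
      have step1 : (∫ w, φ (y⁻¹ * w) * f (w⁻¹ * x) ∂m)
          ≤ ∫ w, ∑ x' ∈ s, (2 * M / c) * (φ ((x' * a⁻¹)⁻¹ * w) * f (w⁻¹ * x)) ∂m := by
        refine integral_mono_of_nonneg
          (Filter.Eventually.of_forall fun w => mul_nonneg (hφ0 _) (hf0 _))
          (integrable_finset_sum _ fun x' _ => ((hint (x' * a⁻¹) x).const_mul _))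
          (Filter.Eventually.of_forall fun w => ?_)
        have := key y hy w
        calc φ (y⁻¹ * w) * f (w⁻¹ * x)
            ≤ ((2 * M / c) * ∑ x' ∈ s, φ ((x' * a⁻¹)⁻¹ * w)) * f (w⁻¹ * x) :=
              mul_le_mul_of_nonneg_right this (hf0 _)
          _ = ∑ x' ∈ s, (2 * M / c) * (φ ((x' * a⁻¹)⁻¹ * w) * f (w⁻¹ * x)) := by
              rw [Finset.mul_sum, Finset.sum_mul]
              refine Finset.sum_congr rfl fun x' _ => by ring
      refine step1.trans ?_
      rw [integral_finset_sum _ fun x' _ => ((hint (x' * a⁻¹) x).const_mul _)]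
      refine le_of_eq (Finset.sum_congr rfl fun x' _ => ?_)
      rw [MeasureTheory.integral_const_mul, trans_id (x' * a⁻¹) x]
    -- now bound mConv
    set B : ℝ := (μ Set.univ).toReal * (2 * M / c) with hB
    have hB0 : 0 ≤ B := by positivity
    have mbound : ∀ x, mConv μ F x ≤ ∑ x' ∈ s, B * F ((x' * a⁻¹)⁻¹ * x) := by
      intro x
      have step : mConv μ F x ≤ (μ Set.univ).toReal *
          ∑ x' ∈ s, (2 * M / c) * F ((x' * a⁻¹)⁻¹ * x) := by
        rw [mConv]
        have := integral_mono_of_nonneg (μ := μ)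
          (f := fun y => F (y⁻¹ * x))
          (g := fun _ => ∑ x' ∈ s, (2 * M / c) * F ((x' * a⁻¹)⁻¹ * x))
          (Filter.Eventually.of_forall fun y => hFnn _)
          (integrable_const _) ?_
        · calc (∫ y, F (y⁻¹ * x) ∂μ)
              ≤ ∫ _, (∑ x' ∈ s, (2 * M / c) * F ((x' * a⁻¹)⁻¹ * x)) ∂μ := this
            _ = (μ Set.univ).toReal * ∑ x' ∈ s, (2 * M / c) * F ((x' * a⁻¹)⁻¹ * x) := by
                rw [integral_const, smul_eq_mul, Measure.real]
        · have hmem : ∀ᵐ y ∂μ, y ∈ K := by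
            rw [MeasureTheory.ae_iff]
            exact measure_mono_null (fun y hy => hy) hK0
          filter_upwards [hmem] with y hy
          exact Fbound y hy x
      refine step.trans (le_of_eq ?_)
      rw [Finset.mul_sum]
      refine Finset.sum_congr rfl fun x' _ => by rw [hB]; ring
    -- package into GDom
    refine ⟨s.card, fun _ => B, fun j => (s.equivFin.symm j : G) * a⁻¹, fun _ => hB0, ?_⟩
    intro x
    refine (hb x).trans ((mbound x).trans (le_of_eq ?_))
    rw [← Finset.sum_coe_sort s (fun x' => B * F ((x' * a⁻¹)⁻¹ * x))]
    exact (Equiv.sum_comp s.equivFin.symm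
      (fun i : s => B * F (((i : G) * a⁻¹)⁻¹ * x))).symm
end

section
/- Let f, v, h : G → ℝ be bounded Borel measurable functions with f and v nonnegative, suppose h is measurably dominated by v and v is measurably dominated by f. Then h is measurably dominated by f and p̄_f(h) ≤ p̄_v(h) · p̄_f(v), i.e., inf{ν(G) : ν ∈ M_00(G)_+, |h| ≤ ν*f} ≤ inf{λ(G) : λ ∈ M_00(G)_+, |h| ≤ λ*v} · inf{μ(G) : μ ∈ M_00(G)_+, |v| ≤ μ*f}. -/
open MeasureTheory Topology Pointwise
open scoped ENNReal

variable {G : Type*}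

section Helpers

set_option linter.unusedSectionVars false

open Set

theorem exists_theta' {r S : ℝ≥0∞} (hr : r < S) (hS : S ≠ ∞) :
    ∃ θ : ℝ≥0∞, θ < 1 ∧ r < θ * (θ * S) := by
  have hrt : r ≠ ∞ := ne_top_of_lt hr
  set a := r.toReal with ha
  set b := S.toReal with hb
  have hab : a < b := ENNReal.toReal_lt_toReal hrt hS |>.mpr hr
  have ha0 : 0 ≤ a := ENNReal.toReal_nonneg
  have hb0 : 0 < b := lt_of_le_of_lt ha0 hab
  set t := (a + b) / (2 * b) with ht
  have ht0 : 0 ≤ t := by positivity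
  have ht1 : t < 1 := by
    rw [div_lt_one (by positivity)]
    linarith
  have htb : a < t * b := by
    rw [ht, div_mul_eq_mul_div, mul_comm 2 b, ← div_div, mul_div_assoc, div_self hb0.ne',
      mul_one]
    linarith
  refine ⟨ENNReal.ofReal (Real.sqrt t), ?_, ?_⟩
  · rw [show (1 : ℝ≥0∞) = ENNReal.ofReal 1 by simp]
    rw [ENNReal.ofReal_lt_ofReal_iff one_pos]
    calc Real.sqrt t < Real.sqrt 1 := by
          apply Real.sqrt_lt_sqrt ht0 ht1
      _ = 1 := Real.sqrt_one
  · have hSb : S = ENNReal.ofReal b := (ENNReal.ofReal_toReal hS).symm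
    have hra : r = ENNReal.ofReal a := (ENNReal.ofReal_toReal hrt).symm
    rw [hSb, hra, ← ENNReal.ofReal_mul (Real.sqrt_nonneg t), ← ENNReal.ofReal_mul
      (by positivity), ← mul_assoc, Real.mul_self_sqrt ht0]
    rw [ENNReal.ofReal_lt_ofReal_iff (by positivity)]
    exact htb

theorem sInf_mul_le_aux {S A B : Set ℝ} (hA : A.Nonempty) (hB : B.Nonempty)
    (hA0 : ∀ a ∈ A, 0 ≤ a) (hB0 : ∀ b ∈ B, 0 ≤ b)
    (key : ∀ a ∈ A, ∀ b ∈ B, sInf S ≤ a * b) : sInf S ≤ sInf A * sInf B := by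
  have hB0' : (0 : ℝ) ≤ sInf B := le_csInf hB hB0
  have step : ∀ a ∈ A, sInf S ≤ a * sInf B := by
    intro a ha
    rcases eq_or_lt_of_le (hA0 a ha) with heq | hpos
    · obtain ⟨b, hb⟩ := hB
      have := key a ha b hb
      rw [← heq] at this ⊢
      simpa using this
    · have : sInf S / a ≤ sInf B :=
        le_csInf hB fun b hb => (div_le_iff₀ hpos).2 ((key a ha b hb).trans_eq (mul_comm a b))
      calc sInf S = sInf S / a * a := by field_simp
        _ ≤ sInf B * a := mul_le_mul_of_nonneg_right this hpos.le
        _ = a * sInf B := mul_comm _ _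
  rcases eq_or_lt_of_le hB0' with heq | hpos
  · obtain ⟨a, ha⟩ := hA
    have := step a ha
    rw [← heq] at this ⊢
    simpa using this
  · have : sInf S / sInf B ≤ sInf A :=
      le_csInf hA fun a ha => (div_le_iff₀ hpos).2 (step a ha)
    calc sInf S = sInf S / sInf B * sInf B := by field_simp
      _ ≤ sInf A * sInf B := mul_le_mul_of_nonneg_right this hpos.le

variable [Group G] [TopologicalSpace G] [IsTopologicalGroup G] [LocallyCompactSpace G]
    [T2Space G] [MeasurableSpace G] [BorelSpace G]

theorem lsc_left (μ : Measure G) [μ.InnerRegular] {U : Set G} (hU : IsOpen U) :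
    LowerSemicontinuous (fun y : G => μ ((fun z => y * z) ⁻¹' U)) := by
  intro y c hc
  obtain ⟨k, hkU, hk, hck⟩ :=
    ((hU.preimage (continuous_mul_left y)).measurableSet).exists_lt_isCompact hc
  have hyk : IsCompact ((fun z => y * z) '' k) := hk.image (continuous_mul_left y)
  have hykU : (fun z => y * z) '' k ⊆ U := by
    rintro _ ⟨z, hz, rfl⟩; exact hkU hz
  obtain ⟨V, hV, hVU⟩ := compact_open_separated_mul_left hyk hU hykU
  have hmem : (fun v => v * y) '' V ∈ 𝓝 y := by
    have := (Homeomorph.mulRight y).isOpenMap.image_mem_nhds (x := (1 : G)) hV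
    simpa using this
  filter_upwards [hmem]
  rintro _ ⟨v, hv, rfl⟩
  refine hck.trans_le (measure_mono fun z hz => ?_)
  show v * y * z ∈ U
  rw [mul_assoc]
  exact hVU (Set.mul_mem_mul hv ⟨z, hz, rfl⟩)

theorem lsc_right (μ : Measure G) [μ.InnerRegular] {U : Set G} (hU : IsOpen U) :
    LowerSemicontinuous (fun y : G => μ ((fun z => z * y) ⁻¹' U)) := by
  intro y c hc
  obtain ⟨k, hkU, hk, hck⟩ :=
    ((hU.preimage (continuous_mul_right y)).measurableSet).exists_lt_isCompact hc
  have hyk : IsCompact ((fun z => z * y) '' k) := hk.image (continuous_mul_right y)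
  have hykU : (fun z => z * y) '' k ⊆ U := by
    rintro _ ⟨z, hz, rfl⟩; exact hkU hz
  obtain ⟨V, hV, hVU⟩ := compact_open_separated_mul_right hyk hU hykU
  have hmem : (fun v => y * v) '' V ∈ 𝓝 y := by
    have := (Homeomorph.mulLeft y).isOpenMap.image_mem_nhds (x := (1 : G)) hV
    simpa using this
  filter_upwards [hmem]
  rintro _ ⟨v, hv, rfl⟩
  refine hck.trans_le (measure_mono fun z hz => ?_)
  show z * (y * v) ∈ U
  rw [← mul_assoc]
  exact hVU (Set.mul_mem_mul ⟨z, hz, rfl⟩ hv)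

theorem meas_mul_left (μ : Measure G) [IsFiniteMeasure μ] [μ.InnerRegular] {s : Set G}
    (hs : MeasurableSet s) : Measurable fun y : G => μ ((fun z => y * z) ⁻¹' s) := by
  refine MeasurableSpace.induction_on_inter
    (C := fun s _ => Measurable fun y : G => μ ((fun z => y * z) ⁻¹' s))
    BorelSpace.measurable_eq isPiSystem_isOpen ?_ ?_ ?_ ?_ _ hs
  · simp only [Set.preimage_empty, measure_empty]; exact measurable_const
  · exact fun t ht => (lsc_left μ ht).measurable
  · intro t ht h
    have : ∀ y : G, μ ((fun z => y * z) ⁻¹' tᶜ) = μ Set.univ - μ ((fun z => y * z) ⁻¹' t) := by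
      intro y
      rw [Set.preimage_compl,
        measure_compl (ht.preimage (continuous_mul_left y).measurable) (measure_ne_top μ _)]
    simp only [this]
    exact measurable_const.sub h
  · intro t hdisj hmeas hC
    have : ∀ y : G, μ ((fun z => y * z) ⁻¹' ⋃ i, t i) = ∑' i, μ ((fun z => y * z) ⁻¹' t i) := by
      intro y
      rw [Set.preimage_iUnion, measure_iUnion
        (fun i j hij => (hdisj hij).preimage _)
        (fun i => (hmeas i).preimage (continuous_mul_left y).measurable)]
    simp only [this]
    exact Measurable.ennreal_tsum hC

theorem meas_mul_right (μ : Measure G) [IsFiniteMeasure μ] [μ.InnerRegular] {s : Set G}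
    (hs : MeasurableSet s) : Measurable fun y : G => μ ((fun z => z * y) ⁻¹' s) := by
  refine MeasurableSpace.induction_on_inter
    (C := fun s _ => Measurable fun y : G => μ ((fun z => z * y) ⁻¹' s))
    BorelSpace.measurable_eq isPiSystem_isOpen ?_ ?_ ?_ ?_ _ hs
  · simp only [Set.preimage_empty, measure_empty]; exact measurable_const
  · exact fun t ht => (lsc_right μ ht).measurable
  · intro t ht h
    have : ∀ y : G, μ ((fun z => z * y) ⁻¹' tᶜ) = μ Set.univ - μ ((fun z => z * y) ⁻¹' t) := by
      intro y
      rw [Set.preimage_compl,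
        measure_compl (ht.preimage (continuous_mul_right y).measurable) (measure_ne_top μ _)]
    simp only [this]
    exact measurable_const.sub h
  · intro t hdisj hmeas hC
    have : ∀ y : G, μ ((fun z => z * y) ⁻¹' ⋃ i, t i) = ∑' i, μ ((fun z => z * y) ⁻¹' t i) := by
      intro y
      rw [Set.preimage_iUnion, measure_iUnion
        (fun i j hij => (hdisj hij).preimage _)
        (fun i => (hmeas i).preimage (continuous_mul_right y).measurable)]
    simp only [this]
    exact Measurable.ennreal_tsum hC

theorem kernel_meas_left (μ : Measure G) [IsFiniteMeasure μ] [μ.InnerRegular] :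
    Measurable fun y : G => μ.map (fun z => y * z) := by
  apply Measure.measurable_of_measurable_coe
  intro s hs
  simp only [Measure.map_apply (continuous_mul_left _).measurable hs]
  exact meas_mul_left μ hs

theorem kernel_meas_right (μ : Measure G) [IsFiniteMeasure μ] [μ.InnerRegular] :
    Measurable fun y : G => μ.map (fun z => z * y) := by
  apply Measure.measurable_of_measurable_coe
  intro s hs
  simp only [Measure.map_apply (continuous_mul_right _).measurable hs]
  exact meas_mul_right μ hs

/-- The convolution of two measures, via `bind`. -/
noncomputable def convMeas (lam mu : Measure G) : Measure G :=
  lam.bind (fun y => mu.map (fun z => y * z))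

theorem convMeas_apply (lam mu : Measure G) [IsFiniteMeasure mu] [mu.InnerRegular] {s : Set G}
    (hs : MeasurableSet s) :
    convMeas lam mu s = ∫⁻ y, mu ((fun z => y * z) ⁻¹' s) ∂lam := by
  rw [convMeas, Measure.bind_apply hs (kernel_meas_left mu).aemeasurable]
  refine lintegral_congr fun y => ?_
  rw [Measure.map_apply (continuous_mul_left y).measurable hs]

theorem convMeas_univ (lam mu : Measure G) [IsFiniteMeasure mu] [mu.InnerRegular] :
    convMeas lam mu Set.univ = mu Set.univ * lam Set.univ := by
  rw [convMeas_apply lam mu MeasurableSet.univ]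
  simp [lintegral_const]

theorem lintegral_convMeas (lam mu : Measure G) [IsFiniteMeasure mu] [mu.InnerRegular]
    {F : G → ℝ≥0∞} (hF : Measurable F) :
    ∫⁻ w, F w ∂(convMeas lam mu) = ∫⁻ y, ∫⁻ z, F (y * z) ∂mu ∂lam := by
  rw [convMeas, Measure.lintegral_bind (kernel_meas_left mu).aemeasurable hF.aemeasurable]
  refine lintegral_congr fun y => ?_
  rw [lintegral_map hF (continuous_mul_left y).measurable]

theorem exists_piece (mu : Measure G) [mu.InnerRegular] {U : Set G} (hU : IsOpen U)
    {t : ℝ≥0∞} (y : G) (hy : t < mu ((fun z => y * z) ⁻¹' U)) :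
    ∃ L Q : Set G, IsCompact L ∧ y ∈ interior L ∧ IsCompact Q ∧ t < mu Q ∧ L * Q ⊆ U := by
  obtain ⟨Q, hQsub, hQc, htQ⟩ :=
    ((hU.preimage (continuous_mul_left y)).measurableSet).exists_lt_isCompact hy
  have hyQ : IsCompact ((fun z => y * z) '' Q) := hQc.image (continuous_mul_left y)
  have hyQU : (fun z => y * z) '' Q ⊆ U := by rintro _ ⟨q, hq, rfl⟩; exact hQsub hq
  obtain ⟨V, hV, hVU⟩ := compact_open_separated_mul_left hyQ hU hyQU
  have hNopen : IsOpen ((fun v => v * y) '' interior V) :=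
    (Homeomorph.mulRight y).isOpenMap _ isOpen_interior
  have hyN : y ∈ (fun v => v * y) '' interior V := ⟨1, mem_interior_iff_mem_nhds.2 hV, one_mul y⟩
  obtain ⟨L, hLc, hyintL, hLN⟩ := exists_compact_subset hNopen hyN
  refine ⟨L, Q, hLc, hyintL, hQc, htQ, ?_⟩
  rintro _ ⟨w, hw, q, hq, rfl⟩
  obtain ⟨v, hv, rfl⟩ := hLN hw
  show v * y * q ∈ U
  rw [mul_assoc]
  exact hVU (Set.mul_mem_mul (interior_subset hv) ⟨q, hq, rfl⟩)

theorem exists_good (lam mu : Measure G) [IsFiniteMeasure lam] [lam.InnerRegular]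
    [mu.InnerRegular] {U : Set G} (hU : IsOpen U) {θ c : ℝ≥0∞} (hθ : θ < 1)
    {A : Set G} (hA : MeasurableSet A)
    (hcg : ∀ y ∈ A, c ≤ mu ((fun z => y * z) ⁻¹' U))
    (hcfin : c ≠ ∞ ∨ lam A = 0) :
    ∃ k D : Set G, IsCompact k ∧ k ⊆ A ∧ IsCompact D ∧ D ⊆ U ∧
      θ * lam A ≤ lam k ∧ ∀ y ∈ k, θ * c ≤ mu ((fun z => y * z) ⁻¹' D) := by
  rcases eq_or_ne (lam A) 0 with hA0 | hA0
  · exact ⟨∅, ∅, isCompact_empty, empty_subset _, isCompact_empty, empty_subset _,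
      by simp [hA0], by simp⟩
  have hcfin' : c ≠ ∞ := hcfin.resolve_right hA0
  have hθA : θ * lam A < lam A := by
    conv_rhs => rw [← one_mul (lam A)]
    exact ENNReal.mul_lt_mul_left hA0 (measure_ne_top lam A) hθ
  obtain ⟨k, hkA, hkc, hklt⟩ := hA.exists_lt_isCompact hθA
  rcases eq_or_ne c 0 with rfl | hc0
  · exact ⟨k, ∅, hkc, hkA, isCompact_empty, empty_subset _, hklt.le, by simp⟩
  have hyk : ∀ y : {y // y ∈ k}, θ * c < mu ((fun z => (y : G) * z) ⁻¹' U) := by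
    intro y
    refine lt_of_lt_of_le ?_ (hcg y (hkA y.2))
    conv_rhs => rw [← one_mul c]
    exact ENNReal.mul_lt_mul_left hc0 hcfin' hθ
  choose L Q hLc hyintL hQc hQlt hLQ using fun (y : {y // y ∈ k}) =>
    exists_piece mu hU (y : G) (hyk y)
  obtain ⟨s, hs⟩ := hkc.elim_finite_subcover (fun i => interior (L i))
    (fun i => isOpen_interior) (fun x hx => Set.mem_iUnion.2 ⟨⟨x, hx⟩, hyintL ⟨x, hx⟩⟩)
  refine ⟨k, ⋃ i ∈ s, L i * Q i, hkc, hkA,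
    s.finite_toSet.isCompact_biUnion (fun i _ => (hLc i).mul (hQc i)), ?_, hklt.le, ?_⟩
  · exact Set.iUnion₂_subset fun i _ => hLQ i
  · intro y hy
    obtain ⟨i, his, hyi⟩ := Set.mem_iUnion₂.1 (hs hy)
    refine (hQlt i).le.trans (measure_mono fun q hq => ?_)
    show y * q ∈ ⋃ i ∈ s, L i * Q i
    exact Set.mem_iUnion₂.2 ⟨i, his, Set.mul_mem_mul (interior_subset hyi) hq⟩

theorem convMeas_innerReg (lam mu : Measure G) [IsFiniteMeasure lam] [IsFiniteMeasure mu]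
    [lam.InnerRegular] [mu.InnerRegular] {U : Set G} (hU : IsOpen U) {r : ℝ≥0∞}
    (hr : r < convMeas lam mu U) :
    ∃ k, k ⊆ U ∧ IsCompact k ∧ r < convMeas lam mu k := by
  rw [convMeas_apply lam mu hU.measurableSet, MeasureTheory.lintegral] at hr
  simp only [lt_iSup_iff] at hr
  obtain ⟨φ, hφg, hrφ⟩ := hr
  have hSfin : φ.lintegral lam ≠ ∞ := by
    have h1 : φ.lintegral lam = ∫⁻ y, φ y ∂lam := (φ.lintegral_eq_lintegral lam).symm
    have h2 : ∫⁻ y, φ y ∂lam ≤ ∫⁻ _, mu Set.univ ∂lam :=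
      lintegral_mono fun y => (hφg y).trans (measure_mono (subset_univ _))
    rw [lintegral_const] at h2
    exact ne_top_of_le_ne_top (ENNReal.mul_ne_top (measure_ne_top _ _) (measure_ne_top _ _))
      (h1 ▸ h2)
  obtain ⟨θ, hθ1, hθr⟩ := exists_theta' hrφ hSfin
  have key : ∀ c : ℝ≥0∞, ∃ k D : Set G, IsCompact k ∧ k ⊆ φ ⁻¹' {c} ∧ IsCompact D ∧ D ⊆ U ∧
      θ * lam (φ ⁻¹' {c}) ≤ lam k ∧ ∀ y ∈ k, θ * c ≤ mu ((fun z => y * z) ⁻¹' D) := by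
    intro c
    refine exists_good lam mu hU hθ1 (φ.measurableSet_fiber c) (fun y hy => ?_) ?_
    · have hyc : φ y = c := hy
      exact hyc ▸ hφg y
    · by_contra hcon
      push_neg at hcon
      obtain ⟨hce, hl0⟩ := hcon
      have hcr : c ∈ φ.range := by
        by_contra hcr
        refine hl0 ?_
        have : φ ⁻¹' {c} = ∅ := by
          ext y
          simp only [Set.mem_preimage, Set.mem_singleton_iff, Set.mem_empty_iff_false,
            iff_false]
          exact fun h => hcr (h ▸ φ.mem_range_self y)
        simp [this]
      subst hce
      have hle : (⊤ : ℝ≥0∞) * lam (φ ⁻¹' {⊤}) ≤ φ.lintegral lam :=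
        Finset.single_le_sum (f := fun c => c * lam (φ ⁻¹' {c})) (fun _ _ => zero_le) hcr
      rw [ENNReal.top_mul hl0] at hle
      exact hSfin (top_le_iff.1 hle)
  choose k D hkc hkA hDc hDU hklow hkey using key
  have hKc : IsCompact (⋃ c ∈ (↑φ.range : Set ℝ≥0∞), D c) :=
    φ.range.finite_toSet.isCompact_biUnion fun c _ => hDc c
  refine ⟨⋃ c ∈ (↑φ.range : Set ℝ≥0∞), D c, Set.iUnion₂_subset fun c _ => hDU c, hKc, ?_⟩
  rw [convMeas_apply lam mu hKc.isClosed.measurableSet]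
  have hpt : ∀ y : G, ∑ c ∈ φ.range, (k c).indicator (fun _ => θ * c) y ≤
      mu ((fun z => y * z) ⁻¹' ⋃ c ∈ (↑φ.range : Set ℝ≥0∞), D c) := by
    intro y
    by_cases hy : ∃ c ∈ φ.range, y ∈ k c
    · obtain ⟨c, hcr, hyc⟩ := hy
      rw [Finset.sum_eq_single c (fun b _ hbc => Set.indicator_of_notMem (fun hyb => hbc ?_) _)
        (fun h => absurd hcr h)]
      · rw [Set.indicator_of_mem hyc]
        refine (hkey c y hyc).trans (measure_mono fun q hq => ?_)
        exact Set.mem_iUnion₂.2 ⟨c, Finset.mem_coe.2 hcr, hq⟩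
      · have h1 : φ y = b := hkA b hyb
        have h2 : φ y = c := hkA c hyc
        rw [← h1, h2]
    · push_neg at hy
      rw [Finset.sum_eq_zero fun c hc => Set.indicator_of_notMem (hy c hc) _]
      exact zero_le
  calc r < θ * (θ * φ.lintegral lam) := hθr
    _ = ∑ c ∈ φ.range, (θ * c) * (θ * lam (φ ⁻¹' {c})) := by
        rw [SimpleFunc.lintegral, Finset.mul_sum, Finset.mul_sum]
        refine Finset.sum_congr rfl fun c _ => ?_
        ring
    _ ≤ ∑ c ∈ φ.range, (θ * c) * lam (k c) :=
        Finset.sum_le_sum fun c _ => mul_le_mul_right (hklow c) _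
    _ = ∫⁻ y, ∑ c ∈ φ.range, (k c).indicator (fun _ => θ * c) y ∂lam := by
        rw [lintegral_finset_sum _ fun c _ =>
          (measurable_const.indicator (hkc c).isClosed.measurableSet)]
        refine Finset.sum_congr rfl fun c _ => ?_
        rw [lintegral_indicator_const (hkc c).isClosed.measurableSet]
    _ ≤ ∫⁻ y, mu ((fun z => y * z) ⁻¹' ⋃ c ∈ (↑φ.range : Set ℝ≥0∞), D c) ∂lam :=
        lintegral_mono hpt

instance convMeas_finite (lam mu : Measure G) [IsFiniteMeasure lam] [IsFiniteMeasure mu]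
    [mu.InnerRegular] : IsFiniteMeasure (convMeas lam mu) := by
  constructor
  rw [convMeas_univ]
  exact ENNReal.mul_lt_top (measure_lt_top _ _) (measure_lt_top _ _)

/-- The content associated to `convMeas`. -/
noncomputable def convContent (lam mu : Measure G) [IsFiniteMeasure lam] [IsFiniteMeasure mu]
    [mu.InnerRegular] : Content G where
  toFun K := (convMeas lam mu K).toNNReal
  mono' K₁ K₂ h := by
    have := measure_mono (μ := convMeas lam mu) h
    exact ENNReal.toNNReal_mono (measure_ne_top _ _) this
  sup_disjoint' K₁ K₂ hd h₁ h₂ := by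
    have : convMeas lam mu (↑(K₁ ⊔ K₂) : Set G) =
        convMeas lam mu K₁ + convMeas lam mu K₂ := by
      show convMeas lam mu ((K₁ : Set G) ∪ K₂) = _
      exact measure_union hd h₂.measurableSet
    show ((convMeas lam mu) ↑(K₁ ⊔ K₂)).toNNReal = _
    rw [this, ENNReal.toNNReal_add (measure_ne_top _ _) (measure_ne_top _ _)]
  sup_le' K₁ K₂ := by
    have h1 : convMeas lam mu (↑(K₁ ⊔ K₂) : Set G) ≤
        convMeas lam mu K₁ + convMeas lam mu K₂ := by
      show convMeas lam mu ((K₁ : Set G) ∪ K₂) ≤ _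
      exact measure_union_le _ _
    show ((convMeas lam mu) ↑(K₁ ⊔ K₂)).toNNReal ≤ _
    have := ENNReal.toNNReal_mono
      (ENNReal.add_ne_top.2 ⟨measure_ne_top _ _, measure_ne_top _ _⟩) h1
    rwa [ENNReal.toNNReal_add (measure_ne_top _ _) (measure_ne_top _ _)] at this

theorem convMeas_regular (lam mu : Measure G) [IsFiniteMeasure lam] [IsFiniteMeasure mu]
    [lam.InnerRegular] [mu.InnerRegular] : (convMeas lam mu).Regular := by
  have hopen : ∀ U : Set G, IsOpen U →
      (convContent lam mu).measure U = convMeas lam mu U := by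
    intro U hU
    rw [Content.measure_apply _ hU.measurableSet,
      Content.outerMeasure_of_isOpen _ U hU]
    apply le_antisymm
    · refine iSup₂_le fun K hKU => ?_
      calc ((convContent lam mu) K : ℝ≥0∞) = convMeas lam mu K := by
            simp [convContent,
              ENNReal.coe_toNNReal (measure_ne_top _ _)]
        _ ≤ convMeas lam mu U := measure_mono hKU
    · refine le_of_forall_lt fun r hr => ?_
      obtain ⟨k, hkU, hkc, hrk⟩ := convMeas_innerReg lam mu hU hr
      refine lt_of_lt_of_le ?_ ((convContent lam mu).le_innerContent ⟨k, hkc⟩ ⟨U, hU⟩ hkU)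
      calc r < convMeas lam mu k := hrk
        _ = ((convContent lam mu) ⟨k, hkc⟩ : ℝ≥0∞) := by
            simp [convContent,
              ENNReal.coe_toNNReal (measure_ne_top _ _)]
  have heq : convMeas lam mu = (convContent lam mu).measure := by
    refine MeasureTheory.ext_of_generate_finite {s : Set G | IsOpen s} BorelSpace.measurable_eq
      isPiSystem_isOpen (fun s hs => (hopen s hs).symm) (hopen _ isOpen_univ).symm
  rw [heq]
  infer_instance

theorem mConv_nonneg (μ : Measure G) {f : G → ℝ} (hf0 : ∀ x, 0 ≤ f x) (x : G) :
    0 ≤ mConv μ f x := integral_nonneg fun _ => hf0 _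

theorem mConv_eq_toReal (μ : Measure G) {f : G → ℝ} (hf : Measurable f) (hf0 : ∀ x, 0 ≤ f x)
    (x : G) :
    mConv μ f x = (∫⁻ z, ENNReal.ofReal (f (z⁻¹ * x)) ∂μ).toReal := by
  rw [mConv, integral_eq_lintegral_of_nonneg_ae (Filter.Eventually.of_forall fun z => hf0 _)
    ((hf.comp (f := fun z : G => z⁻¹ * x) ((continuous_inv.mul continuous_const).measurable)).aestronglyMeasurable)]

theorem lintegral_ofReal_le (μ : Measure G) {f : G → ℝ} {C : ℝ} (hfb : ∀ x, |f x| ≤ C) (x : G) :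
    ∫⁻ z, ENNReal.ofReal (f (z⁻¹ * x)) ∂μ ≤ ENNReal.ofReal C * μ Set.univ := by
  calc ∫⁻ z, ENNReal.ofReal (f (z⁻¹ * x)) ∂μ ≤ ∫⁻ _, ENNReal.ofReal C ∂μ :=
        lintegral_mono fun z => ENNReal.ofReal_le_ofReal ((le_abs_self _).trans (hfb _))
    _ = ENNReal.ofReal C * μ Set.univ := lintegral_const _

theorem mConv_measurable (μ : Measure G) [IsFiniteMeasure μ] [μ.InnerRegular] {f : G → ℝ}
    (hf : Measurable f) (hf0 : ∀ x, 0 ≤ f x) : Measurable (mConv μ f) := by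
  have hρfin : IsFiniteMeasure (μ.map Inv.inv) := Measure.isFiniteMeasure_map μ _
  have hρreg : (μ.map Inv.inv).InnerRegular :=
    Measure.InnerRegular.map_of_continuous continuous_inv
  have hrw : mConv μ f = fun x =>
      (∫⁻ w, ENNReal.ofReal (f w) ∂((μ.map Inv.inv).map (fun u => u * x))).toReal := by
    funext x
    rw [mConv_eq_toReal μ hf hf0 x]
    congr 1
    have e1 : ∫⁻ u, ENNReal.ofReal (f (u * x)) ∂(μ.map Inv.inv) =
        ∫⁻ z, ENNReal.ofReal (f (z⁻¹ * x)) ∂μ :=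
      lintegral_map (g := Inv.inv) (f := fun u => ENNReal.ofReal (f (u * x)))
        (((hf.comp (continuous_mul_right x).measurable)).ennreal_ofReal) measurable_inv
    have e2 : ∫⁻ w, ENNReal.ofReal (f w) ∂((μ.map Inv.inv).map (fun u => u * x)) =
        ∫⁻ u, ENNReal.ofReal (f (u * x)) ∂(μ.map Inv.inv) :=
      lintegral_map (f := fun w => ENNReal.ofReal (f w)) hf.ennreal_ofReal
        (continuous_mul_right x).measurable
    rw [e2, e1]
  rw [hrw]
  exact ENNReal.measurable_toReal.comp
    ((Measure.measurable_lintegral hf.ennreal_ofReal).comp (kernel_meas_right (μ.map Inv.inv)))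

theorem convMeas_compl_eq_zero (lam mu : Measure G) [IsFiniteMeasure mu] [mu.InnerRegular]
    {K L : Set G} (hK : IsCompact K) (hL : IsCompact L) (hKn : lam Kᶜ = 0) (hLn : mu Lᶜ = 0) :
    convMeas lam mu (K * L)ᶜ = 0 := by
  rw [convMeas_apply lam mu (hK.mul hL).isClosed.measurableSet.compl]
  have hae : ∀ᵐ y ∂lam, y ∈ K := by
    rw [MeasureTheory.ae_iff]
    exact hKn
  have hz : ∀ᵐ y ∂lam, mu ((fun z => y * z) ⁻¹' (K * L)ᶜ) = 0 := by
    filter_upwards [hae] with y hy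
    refine measure_mono_null (fun z hz => ?_) hLn
    exact fun hzL => hz (Set.mul_mem_mul hy hzL)
  calc ∫⁻ y, mu ((fun z => y * z) ⁻¹' (K * L)ᶜ) ∂lam = ∫⁻ _, 0 ∂lam := lintegral_congr_ae hz
    _ = 0 := lintegral_zero

theorem dom_conv (lam mu : Measure G) [IsFiniteMeasure lam] [IsFiniteMeasure mu]
    [lam.InnerRegular] [mu.InnerRegular] {f v h : G → ℝ}
    (hfm : Measurable f) (hfb : IsBdd f) (hf0 : ∀ x, 0 ≤ f x)
    (hvm : Measurable v)
    (hdh : ∀ x, |h x| ≤ mConv lam v x) (hdv : ∀ x, |v x| ≤ mConv mu f x) (x : G) :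
    |h x| ≤ mConv (convMeas lam mu) f x := by
  obtain ⟨Cf, hCf⟩ := hfb
  have hmzx : ∀ w : G, Measurable fun y : G => y⁻¹ * w :=
    fun w => (continuous_inv.mul continuous_const).measurable
  have hmcb : ∀ w : G, ‖mConv mu f w‖ ≤ Cf * (mu Set.univ).toReal := by
    intro w
    refine norm_integral_le_of_norm_le_const (Filter.Eventually.of_forall fun z => ?_)
    rw [Real.norm_eq_abs]
    exact hCf _
  have i2 : Integrable (fun y => mConv mu f (y⁻¹ * x)) lam :=
    Integrable.mono' (integrable_const (Cf * (mu Set.univ).toReal))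
      (((mConv_measurable mu hfm hf0).comp (hmzx x)).aestronglyMeasurable)
      (Filter.Eventually.of_forall fun y => hmcb _)
  have i1 : Integrable (fun y => v (y⁻¹ * x)) lam := by
    refine Integrable.mono' i2 ((hvm.comp (hmzx x)).aestronglyMeasurable)
      (Filter.Eventually.of_forall fun y => ?_)
    rw [Real.norm_eq_abs]
    exact hdv _
  have step1 : mConv lam v x ≤ ∫ y, mConv mu f (y⁻¹ * x) ∂lam := by
    rw [mConv]
    exact integral_mono i1 i2 fun y => (le_abs_self _).trans (hdv _)
  have hfin : ∀ w : G, ∫⁻ z, ENNReal.ofReal (f (z⁻¹ * w)) ∂mu ≠ ∞ := fun w =>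
    ne_top_of_le_ne_top (ENNReal.mul_ne_top ENNReal.ofReal_ne_top (measure_ne_top _ _))
      (lintegral_ofReal_le mu hCf w)
  have step2 : ∫ y, mConv mu f (y⁻¹ * x) ∂lam = mConv (convMeas lam mu) f x := by
    rw [mConv_eq_toReal (convMeas lam mu) hfm hf0 x,
      integral_eq_lintegral_of_nonneg_ae
        (Filter.Eventually.of_forall fun y => mConv_nonneg mu hf0 _)
        (((mConv_measurable mu hfm hf0).comp (hmzx x)).aestronglyMeasurable)]
    congr 1
    have hFmeas : Measurable fun w : G => ENNReal.ofReal (f (w⁻¹ * x)) :=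
      (hfm.comp (hmzx x)).ennreal_ofReal
    rw [lintegral_convMeas lam mu hFmeas]
    refine lintegral_congr fun y => ?_
    rw [mConv_eq_toReal mu hfm hf0, ENNReal.ofReal_toReal (hfin _)]
    refine lintegral_congr fun z => ?_
    rw [mul_inv_rev, mul_assoc]
  exact (hdh x).trans (step1.trans step2.le)

end Helpers

theorem statement_9 [Group G] [TopologicalSpace G] [IsTopologicalGroup G] [LocallyCompactSpace G]
    [T2Space G] [MeasurableSpace G] [BorelSpace G]
    (f v h : G → ℝ)
    (hfm : Measurable f) (hfb : IsBdd f) (hf0 : ∀ x, 0 ≤ f x)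
    (hvm : Measurable v) (hvb : IsBdd v) (hv0 : ∀ x, 0 ≤ v x)
    (hhm : Measurable h) (hhb : IsBdd h)
    (hhv : MDom v h) (hvf : MDom f v) :
    MDom f h ∧ pBar f h ≤ pBar v h * pBar f v := by
  have build : ∀ lam mu : Measure G, MComp lam → MComp mu →
      (∀ x, |h x| ≤ mConv lam v x) → (∀ x, |v x| ≤ mConv mu f x) →
      MComp (convMeas lam mu) ∧ (∀ x, |h x| ≤ mConv (convMeas lam mu) f x) ∧
        (convMeas lam mu Set.univ).toReal = (lam Set.univ).toReal * (mu Set.univ).toReal := by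
    intro lam mu hl hm hdh hdv
    haveI := hl.1; haveI := hl.2.1; haveI := hm.1; haveI := hm.2.1
    haveI : lam.InnerRegular := inferInstance
    haveI : mu.InnerRegular := inferInstance
    obtain ⟨K, hK, hKn⟩ := hl.2.2
    obtain ⟨L, hL, hLn⟩ := hm.2.2
    refine ⟨⟨convMeas_finite lam mu, convMeas_regular lam mu,
      ⟨K * L, hK.mul hL, convMeas_compl_eq_zero lam mu hK hL hKn hLn⟩⟩,
      fun x => dom_conv lam mu hfm hfb hf0 hvm hdh hdv x, ?_⟩
    rw [convMeas_univ lam mu, ENNReal.toReal_mul, mul_comm]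
  obtain ⟨lam, hlamMC, hdomh⟩ := hhv
  obtain ⟨mu, hmuMC, hdomv⟩ := hvf
  obtain ⟨hMC0, hdom0, _⟩ := build lam mu hlamMC hmuMC hdomh hdomv
  refine ⟨⟨convMeas lam mu, hMC0, hdom0⟩, ?_⟩
  rw [pBar, pBar, pBar]
  refine sInf_mul_le_aux ⟨(lam Set.univ).toReal, lam, hlamMC, hdomh, rfl⟩
    ⟨(mu Set.univ).toReal, mu, hmuMC, hdomv, rfl⟩ ?_ ?_ ?_
  · rintro a ⟨lam', _, _, rfl⟩
    exact ENNReal.toReal_nonneg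
  · rintro b ⟨mu', _, _, rfl⟩
    exact ENNReal.toReal_nonneg
  · rintro a ⟨lam', hMC, hdom, rfl⟩ b ⟨mu', hMC', hdom', rfl⟩
    obtain ⟨hmc, hdm, hval⟩ := build lam' mu' hMC hMC' hdom hdom'
    rw [← hval]
    refine csInf_le ⟨0, ?_⟩ ⟨convMeas lam' mu', hmc, hdm, rfl⟩
    rintro s ⟨ν, _, _, rfl⟩
    exact ENNReal.toReal_nonneg
end

section
/- Let f, F, h : G → ℝ be bounded Borel measurable functions with f and F nonnegative. If h is G-dominated by F and F is measurably dominated by f, then h is measurably dominated by f and p̄_f(h) ≤ p_F(h) · p̄_f(F), i.e., inf{μ(G) : μ ∈ M_00(G)_+, |h| ≤ μ*f} ≤ (inf{∑_j t_j : t_j ≥ 0, g_j ∈ G, |h| ≤ ∑_j t_j (g_j·F)}) · (inf{λ(G) : λ ∈ M_00(G)_+, |F| ≤ λ*f}). In particular, convergence of a net in p_F-norm implies its convergence in p̄_f-norm. -/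
open MeasureTheory Topology Pointwise
open scoped ENNReal

variable {G : Type*}

section Aux

theorem myRegular_add {α : Type*} [TopologicalSpace α] [MeasurableSpace α]
    (μ ν : Measure α) [IsFiniteMeasure μ] [IsFiniteMeasure ν]
    [μ.Regular] [ν.Regular] : (μ + ν).Regular := by
  haveI : (μ + ν).OuterRegular := by
    constructor
    intro A hA r hr
    obtain ⟨ε, hε0, hεlt⟩ := ENNReal.lt_iff_exists_add_pos_lt.1 hr
    have hε2 : ((ε : ℝ≥0∞) / 2) ≠ 0 := by
      simp [ENNReal.div_eq_zero_iff, hε0.ne']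
    obtain ⟨U1, hU1A, hU1o, hU1⟩ :=
      Set.exists_isOpen_lt_add A (μ := μ) (measure_ne_top μ A) hε2
    obtain ⟨U2, hU2A, hU2o, hU2⟩ :=
      Set.exists_isOpen_lt_add A (μ := ν) (measure_ne_top ν A) hε2
    refine ⟨U1 ∩ U2, Set.subset_inter hU1A hU2A, hU1o.inter hU2o, ?_⟩
    have h1 : μ (U1 ∩ U2) ≤ μ U1 := measure_mono Set.inter_subset_left
    have h2 : ν (U1 ∩ U2) ≤ ν U2 := measure_mono Set.inter_subset_right
    calc (μ + ν) (U1 ∩ U2) = μ (U1 ∩ U2) + ν (U1 ∩ U2) := rfl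
      _ ≤ μ U1 + ν U2 := add_le_add h1 h2
      _ < (μ A + ε / 2) + (ν A + ε / 2) := ENNReal.add_lt_add hU1 hU2
      _ = (μ + ν) A + ε := by
          rw [show (μ A + (ε:ℝ≥0∞) / 2) + (ν A + (ε:ℝ≥0∞) / 2)
              = (μ A + ν A) + ((ε:ℝ≥0∞) / 2 + (ε:ℝ≥0∞) / 2) by ring,
            ENNReal.add_halves]
          rfl
      _ < r := hεlt
  refine ⟨?_⟩
  intro U hU r hr
  obtain ⟨ε, hε0, hεlt⟩ := ENNReal.lt_iff_exists_add_pos_lt.1 hr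
  have hε2 : ((ε : ℝ≥0∞) / 2) ≠ 0 := by
    simp [ENNReal.div_eq_zero_iff, hε0.ne']
  obtain ⟨K1, hK1U, hK1c, hK1⟩ :=
    (Measure.Regular.innerRegular (μ := μ)).exists_subset_lt_add isCompact_empty hU
      (measure_ne_top μ U) hε2
  obtain ⟨K2, hK2U, hK2c, hK2⟩ :=
    (Measure.Regular.innerRegular (μ := ν)).exists_subset_lt_add isCompact_empty hU
      (measure_ne_top ν U) hε2
  refine ⟨K1 ∪ K2, Set.union_subset hK1U hK2U, hK1c.union hK2c, ?_⟩
  have hsum : μ U + ν U < (μ (K1 ∪ K2) + ν (K1 ∪ K2)) + ε := by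
    calc μ U + ν U < (μ K1 + ε / 2) + (ν K2 + ε / 2) := ENNReal.add_lt_add hK1 hK2
      _ ≤ (μ (K1 ∪ K2) + ε / 2) + (ν (K1 ∪ K2) + ε / 2) := by
          gcongr
          · exact Set.subset_union_left
          · exact Set.subset_union_right
      _ = (μ (K1 ∪ K2) + ν (K1 ∪ K2)) + ((ε:ℝ≥0∞) / 2 + (ε:ℝ≥0∞) / 2) := by ring
      _ = (μ (K1 ∪ K2) + ν (K1 ∪ K2)) + ε := by rw [ENNReal.add_halves]
  have h2 : r + ε < (μ (K1 ∪ K2) + ν (K1 ∪ K2)) + ε := lt_of_lt_of_le hεlt (le_of_lt hsum)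
  have h3 : r < μ (K1 ∪ K2) + ν (K1 ∪ K2) :=
    (ENNReal.add_lt_add_iff_right (by simp)).1 h2
  exact h3

theorem myRegular_sum {α : Type*} [TopologicalSpace α] [MeasurableSpace α]
    {ι : Type*} (s : Finset ι) (μ : ι → Measure α)
    (h : ∀ i ∈ s, (μ i).Regular ∧ IsFiniteMeasure (μ i)) :
    (∑ i ∈ s, μ i).Regular ∧ IsFiniteMeasure (∑ i ∈ s, μ i) := by
  classical
  refine Finset.sum_induction μ (fun m => m.Regular ∧ IsFiniteMeasure m) ?_ ?_ h
  · rintro a b ⟨ha1, ha2⟩ ⟨hb1, hb2⟩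
    haveI := ha1; haveI := ha2; haveI := hb1; haveI := hb2
    exact ⟨myRegular_add a b, inferInstance⟩
  · exact ⟨inferInstance, inferInstance⟩

theorem key_dom [Group G] [TopologicalSpace G] [IsTopologicalGroup G] [LocallyCompactSpace G]
    [T2Space G] [MeasurableSpace G] [BorelSpace G]
    (f F h : G → ℝ) (hfm : Measurable f) (hfb : IsBdd f)
    {n : ℕ} {t : Fin n → ℝ} {g : Fin n → G}
    (ht0 : ∀ j, 0 ≤ t j) (hdom : ∀ x, |h x| ≤ ∑ j, t j * F ((g j)⁻¹ * x))
    {μ : Measure G} (hμ : MComp μ) (hμF : ∀ x, F x ≤ mConv μ f x) :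
    ∃ ν : Measure G, MComp ν ∧ (∀ x, |h x| ≤ mConv ν f x) ∧
      (ν Set.univ).toReal = (∑ j, t j) * (μ Set.univ).toReal := by
  obtain ⟨hfin, hreg, K, hKc, hK0⟩ := hμ
  haveI := hfin; haveI := hreg
  obtain ⟨C, hC⟩ := hfb
  set ν : Measure G :=
    ∑ j : Fin n, (ENNReal.ofReal (t j)) • Measure.map (fun y => g j * y) μ with hν
  have hmapmeas : ∀ j : Fin n, Measurable (fun y : G => g j * y) :=
    fun j => measurable_const_mul _
  have hfinj : ∀ j : Fin n,
      IsFiniteMeasure ((ENNReal.ofReal (t j)) • Measure.map (fun y => g j * y) μ) := by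
    intro j
    constructor
    rw [Measure.smul_apply, smul_eq_mul]
    exact ENNReal.mul_lt_top ENNReal.ofReal_lt_top (measure_lt_top _ _)
  have hRF : ν.Regular ∧ IsFiniteMeasure ν := by
    apply myRegular_sum
    intro j _
    have hmap : (Measure.map (fun y => g j * y) μ).Regular := by
      have := Measure.Regular.map (μ := μ) (Homeomorph.mulLeft (g j))
      simpa [Homeomorph.mulLeft] using this
    haveI := hmap
    exact ⟨Measure.Regular.smul ENNReal.ofReal_ne_top, hfinj j⟩
  have hK'c : IsCompact (⋃ j, (fun y : G => g j * y) '' K) :=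
    isCompact_iUnion (fun j => hKc.image (continuous_mul_left _))
  have hsupp : ν (⋃ j, (fun y : G => g j * y) '' K)ᶜ = 0 := by
    have hmeasK' : MeasurableSet (⋃ j, (fun y : G => g j * y) '' K)ᶜ :=
      hK'c.isClosed.measurableSet.compl
    rw [hν, Measure.finset_sum_apply]
    refine Finset.sum_eq_zero (fun j _ => ?_)
    rw [Measure.smul_apply, Measure.map_apply (hmapmeas j) hmeasK', smul_eq_mul]
    have hsub : (fun y : G => g j * y) ⁻¹' (⋃ i, (fun y : G => g i * y) '' K)ᶜ ⊆ Kᶜ := by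
      intro y hy hyK
      exact hy (Set.mem_iUnion.2 ⟨j, Set.mem_image_of_mem _ hyK⟩)
    have hle := (measure_mono hsub).trans_eq hK0
    rw [le_antisymm hle zero_le, mul_zero]
  have hint : ∀ (m : Measure G) [IsFiniteMeasure m] (x : G),
      Integrable (fun y => f (y⁻¹ * x)) m := by
    intro m _ x
    have hm : Measurable (fun y : G => f (y⁻¹ * x)) :=
      hfm.comp (measurable_inv.mul_const x)
    exact (integrable_const C).mono' hm.aestronglyMeasurable
      (Filter.Eventually.of_forall fun y => hC _)
  have hconv : ∀ x, mConv ν f x = ∑ j, t j * mConv μ f ((g j)⁻¹ * x) := by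
    intro x
    have h1 : mConv ν f x = ∑ j : Fin n, ∫ y, f (y⁻¹ * x)
        ∂((ENNReal.ofReal (t j)) • Measure.map (fun y => g j * y) μ) := by
      rw [show mConv ν f x = ∫ y, f (y⁻¹ * x) ∂ν from rfl, hν]
      exact integral_finset_sum_measure (fun j _ => by
        haveI := hfinj j
        exact hint _ x)
    rw [h1]
    refine Finset.sum_congr rfl (fun j _ => ?_)
    have hmF : Measurable fun y : G => f (y⁻¹ * x) := hfm.comp (measurable_inv.mul_const x)
    rw [integral_smul_measure, ENNReal.toReal_ofReal (ht0 j), smul_eq_mul,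
      integral_map (f := fun y => f (y⁻¹ * x)) (hmapmeas j).aemeasurable
        hmF.aestronglyMeasurable]
    congr 1
    simp only [mConv, mul_inv_rev, mul_assoc]
  have hdom' : ∀ x, |h x| ≤ mConv ν f x := by
    intro x
    rw [hconv x]
    refine (hdom x).trans (Finset.sum_le_sum fun j _ => ?_)
    exact mul_le_mul_of_nonneg_left (hμF _) (ht0 j)
  have hterm : ∀ j : Fin n,
      ((ENNReal.ofReal (t j)) • Measure.map (fun y => g j * y) μ) Set.univ
        = ENNReal.ofReal (t j) * μ Set.univ := by
    intro j
    rw [Measure.smul_apply, smul_eq_mul, Measure.map_apply (hmapmeas j) MeasurableSet.univ,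
      Set.preimage_univ]
  have hmass : (ν Set.univ).toReal = (∑ j, t j) * (μ Set.univ).toReal := by
    haveI : IsFiniteMeasure μ := hfin
    calc (ν Set.univ).toReal
        = (∑ j : Fin n, ENNReal.ofReal (t j) * μ Set.univ).toReal := by
          rw [hν, Measure.finset_sum_apply]
          exact congrArg _ (Finset.sum_congr rfl fun j _ => hterm j)
      _ = ∑ j : Fin n, t j * (μ Set.univ).toReal := by
          have hne : ∀ j ∈ (Finset.univ : Finset (Fin n)),
              ENNReal.ofReal (t j) * μ Set.univ ≠ ∞ :=
            fun j _ => ENNReal.mul_ne_top ENNReal.ofReal_ne_top (ne_of_lt (measure_lt_top μ Set.univ))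
          rw [ENNReal.toReal_sum hne]
          exact Finset.sum_congr rfl fun j _ => by
            rw [ENNReal.toReal_mul, ENNReal.toReal_ofReal (ht0 j)]
      _ = (∑ j, t j) * (μ Set.univ).toReal := (Finset.sum_mul _ _ _).symm
  exact ⟨ν, ⟨hRF.2, hRF.1, _, hK'c, hsupp⟩, hdom', hmass⟩

end Aux

theorem statement_10 [Group G] [TopologicalSpace G] [IsTopologicalGroup G] [LocallyCompactSpace G]
    [T2Space G] [MeasurableSpace G] [BorelSpace G]
    (f F h : G → ℝ)
    (hfm : Measurable f) (hfb : IsBdd f) (hf0 : ∀ x, 0 ≤ f x)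
    (hFm : Measurable F) (hFb : IsBdd F) (hF0 : ∀ x, 0 ≤ F x)
    (hhm : Measurable h) (hhb : IsBdd h)
    (hhF : GDom F h) (hFf : MDom f F) :
    MDom f h ∧ pBar f h ≤ pNorm F h * pBar f F := by
  obtain ⟨n, t, g, ht0, hdom⟩ := hhF
  obtain ⟨μ, hμ, hμF⟩ := hFf
  have hμF' : ∀ x, F x ≤ mConv μ f x := fun x => (le_abs_self _).trans (hμF x)
  obtain ⟨ν, hν, hνh, hmass⟩ := key_dom f F h hfm hfb ht0 hdom hμ hμF'
  refine ⟨⟨ν, hν, hνh⟩, ?_⟩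
  set S : Set ℝ := {s : ℝ | ∃ μ' : Measure G, MComp μ' ∧ (∀ x, |h x| ≤ mConv μ' f x) ∧
    s = (μ' Set.univ).toReal} with hS
  set A : Set ℝ := {s : ℝ | ∃ (n : ℕ) (t : Fin n → ℝ) (g : Fin n → G),
    (∀ j, 0 ≤ t j) ∧ (∀ x, |h x| ≤ ∑ j, t j * F ((g j)⁻¹ * x)) ∧ s = ∑ j, t j} with hA
  set B : Set ℝ := {s : ℝ | ∃ μ' : Measure G, MComp μ' ∧ (∀ x, |F x| ≤ mConv μ' f x) ∧
    s = (μ' Set.univ).toReal} with hB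
  have hgoal : pBar f h = sInf S ∧ pNorm F h = sInf A ∧ pBar f F = sInf B := ⟨rfl, rfl, rfl⟩
  have hSlb : ∀ s ∈ S, (0:ℝ) ≤ s := by rintro s ⟨μ', _, _, rfl⟩; exact ENNReal.toReal_nonneg
  have hSbdd : BddBelow S := ⟨0, hSlb⟩
  have hAne : A.Nonempty := ⟨∑ j, t j, n, t, g, ht0, hdom, rfl⟩
  have hBne : B.Nonempty := ⟨(μ Set.univ).toReal, μ, hμ, hμF, rfl⟩
  have hAlb : ∀ a ∈ A, (0:ℝ) ≤ a := by
    rintro a ⟨n', t', g', ht0', _, rfl⟩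
    exact Finset.sum_nonneg fun j _ => ht0' j
  have hkey : ∀ a ∈ A, ∀ b ∈ B, sInf S ≤ a * b := by
    rintro a ⟨n', t', g', ht0', hdom', rfl⟩ b ⟨μ', hμ', hμF', rfl⟩
    obtain ⟨ν', hν', hν'h, hmass'⟩ := key_dom f F h hfm hfb ht0' hdom' hμ'
      (fun x => (le_abs_self _).trans (hμF' x))
    have hmem : (ν' Set.univ).toReal ∈ S := ⟨ν', hν', hν'h, rfl⟩
    have := csInf_le hSbdd hmem
    rwa [hmass'] at this
  have hBlb : ∀ b ∈ B, (0:ℝ) ≤ b := by rintro b ⟨μ', _, _, rfl⟩; exact ENNReal.toReal_nonneg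
  have hA0 : 0 ≤ sInf A := le_csInf hAne hAlb
  have step1 : ∀ b ∈ B, sInf S ≤ sInf A * b := by
    intro b hb
    rcases lt_or_eq_of_le (hBlb b hb) with hbpos | hb0
    · rw [← div_le_iff₀ hbpos]
      refine le_csInf hAne (fun a ha => ?_)
      rw [div_le_iff₀ hbpos]
      exact hkey a ha b hb
    · obtain ⟨a, ha⟩ := hAne
      have h1 := hkey a ha b hb
      rw [← hb0, mul_zero] at h1 ⊢
      exact h1
  rw [hgoal.1, hgoal.2.1, hgoal.2.2]
  rcases lt_or_eq_of_le hA0 with hApos | hA0'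
  · rw [mul_comm, ← div_le_iff₀ hApos]
    refine le_csInf hBne (fun b hb => ?_)
    rw [div_le_iff₀ hApos, mul_comm]
    exact step1 b hb
  · obtain ⟨b, hb⟩ := hBne
    have h1 := step1 b hb
    rw [← hA0', zero_mul] at h1 ⊢
    exact h1
end

section
/- Let f ∈ C_ru^b(G) be nonnegative and not identically zero, and let φ ∈ C_00(G) be nonnegative and not identically zero. Then for every h : G → ℝ that is G-dominated by φ*f, one has p_{φ*f}(h) = p̄_{φ*f}(h), i.e., inf{∑_j t_j : t_j ≥ 0, g_j ∈ G, |h| ≤ ∑_j t_j (g_j·(φ*f))} = inf{λ(G) : λ ∈ M_00(G)_+, |h| ≤ λ*(φ*f)}. -/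
open MeasureTheory Topology Pointwise
open scoped ENNReal

variable {G : Type*}

section Aux

set_option linter.unusedSectionVars false
set_option maxHeartbeats 1000000

variable [Group G] [TopologicalSpace G] [IsTopologicalGroup G] [LocallyCompactSpace G]
    [T2Space G] [MeasurableSpace G] [BorelSpace G]
    (m : Measure G) [m.IsHaarMeasure]

/-- Uniform continuity of a compactly supported continuous function. -/
lemma aux_unif (φ : G → ℝ) (hφc : Continuous φ) (hφs : HasCompactSupport φ) :
    ∃ C : Set G, IsCompact C ∧ C ∈ 𝓝 (1 : G) ∧ ∀ ε : ℝ, 0 < ε →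
      ∃ U ∈ 𝓝 (1 : G), U ⊆ C ∧ ∀ u ∈ U, ∀ w, |φ (u⁻¹ * w) - φ w| ≤ ε := by
  obtain ⟨C, hCc, hCn⟩ := exists_compact_mem_nhds (1 : G)
  refine ⟨C, hCc, hCn, ?_⟩
  intro ε hε
  set K := tsupport φ with hK
  have hKc : IsCompact K := hφs
  have hK'c : IsCompact (C * K) := hCc.mul hKc
  have key : ∀ z : G, ∃ V W : Set G, V ∈ 𝓝 (1 : G) ∧ W ∈ 𝓝 z ∧
      ∀ u ∈ V, ∀ w ∈ W, dist (φ (u⁻¹ * w)) (φ z) < ε / 2 := by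
    intro z
    have hψ : Continuous (fun p : G × G => φ (p.1⁻¹ * p.2)) := by fun_prop
    have h1 : Filter.Tendsto (fun p : G × G => φ (p.1⁻¹ * p.2)) (𝓝 (1, z)) (𝓝 (φ z)) := by
      have h := hψ.continuousAt (x := ((1 : G), z))
      unfold ContinuousAt at h
      simpa using h
    have h2 : ∀ᶠ p : G × G in 𝓝 (1, z), dist (φ (p.1⁻¹ * p.2)) (φ z) < ε / 2 :=
      Metric.tendsto_nhds.mp h1 (ε / 2) (half_pos hε)
    rw [nhds_prod_eq, Filter.eventually_prod_iff] at h2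
    obtain ⟨pa, hpa, pb, hpb, hab⟩ := h2
    exact ⟨{u | pa u}, {w | pb w}, hpa, hpb, fun u hu w hw => hab hu hw⟩
  choose V W hV hW hVW using key
  obtain ⟨T, -, hT⟩ := hK'c.elim_nhds_subcover W (fun z _ => hW z)
  have hUV : (⋂ z ∈ T, V z) ∈ 𝓝 (1 : G) := (Filter.biInter_finset_mem T).2 fun z _ => hV z
  refine ⟨C ∩ ⋂ z ∈ T, V z, Filter.inter_mem hCn hUV, Set.inter_subset_left, ?_⟩
  intro u hu w
  by_cases hw : ∃ z ∈ T, w ∈ W z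
  · obtain ⟨z, hzT, hwz⟩ := hw
    have huV : u ∈ V z := by
      have := hu.2
      simp only [Set.mem_iInter] at this
      exact this z hzT
    have h1 : dist (φ (u⁻¹ * w)) (φ z) < ε / 2 := hVW z u huV w hwz
    have h2 : dist (φ w) (φ z) < ε / 2 := by
      have := hVW z 1 (mem_of_mem_nhds (hV z)) w hwz
      simpa using this
    rw [Real.dist_eq] at h1 h2
    have : |φ (u⁻¹ * w) - φ w| ≤ |φ (u⁻¹ * w) - φ z| + |φ w - φ z| := by
      rw [abs_sub_comm (φ w) (φ z)]
      exact abs_sub_le _ _ _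
    linarith
  · push_neg at hw
    have hwK' : w ∉ C * K := by
      intro hmem
      obtain ⟨z, hzT, hwz⟩ := Set.mem_iUnion₂.mp (hT hmem)
      exact hw z hzT hwz
    have h1 : φ w = 0 := by
      apply image_eq_zero_of_notMem_tsupport
      intro hwK
      exact hwK' (by simpa using Set.mul_mem_mul (mem_of_mem_nhds hCn) hwK)
    have h2 : φ (u⁻¹ * w) = 0 := by
      apply image_eq_zero_of_notMem_tsupport
      intro hK2
      have : w ∈ C * K := by
        have : u * (u⁻¹ * w) ∈ C * K := Set.mul_mem_mul hu.1 hK2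
        simpa using this
      exact hwK' this
    simp [h1, h2, le_of_lt hε]


lemma aux_integrable (f : G → ℝ) (hfc : Continuous f) (ψ : G → ℝ) (hψc : Continuous ψ)
    (hψs : HasCompactSupport ψ) (x : G) :
    Integrable (fun z => ψ z * f (z⁻¹ * x)) m := by
  apply Continuous.integrable_of_hasCompactSupport
  · fun_prop
  · exact hψs.mul_right

lemma aux_translate (φ f : G → ℝ) (g x : G) :
    fConv m φ f (g⁻¹ * x) = ∫ z, φ (g⁻¹ * z) * f (z⁻¹ * x) ∂m := by
  have := integral_mul_left_eq_self (μ := m) (fun z => φ (g⁻¹ * z) * f (z⁻¹ * x)) g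
  rw [← this]
  unfold fConv
  simp [mul_assoc, mul_inv_rev]

lemma aux_master (f : G → ℝ) (hfc : Continuous f) (hf0 : ∀ x, 0 ≤ f x)
    (φ : G → ℝ) (hφc : Continuous φ) (hφs : HasCompactSupport φ)
    (hφ0 : ∀ x, 0 ≤ φ x) (hφne : φ ≠ 0) :
    ∃ (N : ℕ) (a : Fin N → G), ∀ ε : ℝ, 0 < ε → ∃ U ∈ 𝓝 (1 : G), ∀ u ∈ U, ∀ x,
      |fConv m φ f (u⁻¹ * x) - fConv m φ f x| ≤ ε * ∑ k, fConv m φ f ((a k)⁻¹ * x) := by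
  obtain ⟨C, hCc, hCn, hA⟩ := aux_unif φ hφc hφs
  set S := tsupport φ with hS
  have hSc : IsCompact S := hφs
  set K₂ : Set G := C * S ∪ S with hK₂
  have hK₂c : IsCompact K₂ := (hCc.mul hSc).union hSc
  -- a point where φ is positive
  obtain ⟨x₀, hx₀⟩ : ∃ x₀, φ x₀ ≠ 0 := Function.ne_iff.mp hφne
  have hδ₀ : 0 < φ x₀ := lt_of_le_of_ne (hφ0 x₀) (Ne.symm hx₀)
  set δ₀ := φ x₀ with hδ₀def
  set W₀ : Set G := φ ⁻¹' Set.Ioi (δ₀ / 2) with hW₀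
  have hW₀o : IsOpen W₀ := isOpen_Ioi.preimage hφc
  -- finite cover of K₂ by translates of W₀
  obtain ⟨T, -, hT⟩ := hK₂c.elim_nhds_subcover (fun z => (z * x₀⁻¹) • W₀) (by
    intro z _
    refine (hW₀o.smul _).mem_nhds ?_
    rw [Set.mem_smul_set_iff_inv_smul_mem]
    simp only [smul_eq_mul, mul_inv_rev, inv_inv]
    have : x₀ * z⁻¹ * z = x₀ := by group
    rw [this]
    exact Set.mem_preimage.2 (show δ₀ / 2 < φ x₀ from half_lt_self hδ₀))
  set N := T.card with hN
  set e := T.equivFin with he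
  set a : Fin N → G := fun k => (e.symm k : G) * x₀⁻¹ with ha
  -- pointwise covering bound
  have ind_bound : ∀ z, Set.indicator K₂ (fun _ => (1 : ℝ)) z ≤ (2 / δ₀) * ∑ k, φ ((a k)⁻¹ * z) := by
    intro z
    have hsum0 : 0 ≤ ∑ k, φ ((a k)⁻¹ * z) := Finset.sum_nonneg fun k _ => hφ0 _
    by_cases hz : z ∈ K₂
    · rw [Set.indicator_of_mem hz]
      obtain ⟨w, hwT, hzw⟩ := Set.mem_iUnion₂.mp (hT hz)
      set k : Fin N := e ⟨w, hwT⟩ with hk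
      have hak : a k = w * x₀⁻¹ := by
        simp [ha, hk]
      have h1 : δ₀ / 2 < φ ((a k)⁻¹ * z) := by
        rw [Set.mem_smul_set_iff_inv_smul_mem] at hzw
        rw [hak]
        exact hzw
      have h2 : δ₀ / 2 ≤ ∑ k', φ ((a k')⁻¹ * z) := by
        calc δ₀ / 2 ≤ φ ((a k)⁻¹ * z) := le_of_lt h1
          _ ≤ ∑ k', φ ((a k')⁻¹ * z) :=
            Finset.single_le_sum (f := fun k' => φ ((a k')⁻¹ * z)) (fun k' _ => hφ0 _)
              (Finset.mem_univ k)
      calc (1 : ℝ) = (2 / δ₀) * (δ₀ / 2) := by field_simp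
        _ ≤ (2 / δ₀) * ∑ k', φ ((a k')⁻¹ * z) := by
            apply mul_le_mul_of_nonneg_left h2
            positivity
    · rw [Set.indicator_of_notMem hz]
      positivity
  refine ⟨N, a, ?_⟩
  intro ε hε
  set ε₁ := ε * δ₀ / 2 with hε₁def
  have hε₁ : 0 < ε₁ := by positivity
  obtain ⟨U, hU, hUC, hUb⟩ := hA ε₁ hε₁
  refine ⟨U, hU, ?_⟩
  intro u hu x
  -- integrability facts
  have int1 : Integrable (fun z => φ (u⁻¹ * z) * f (z⁻¹ * x)) m := by
    apply aux_integrable m f hfc _ (by fun_prop)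
    have : (fun z => φ (u⁻¹ * z)) = φ ∘ (Homeomorph.mulLeft u⁻¹) := rfl
    rw [this]
    exact hφs.comp_homeomorph _
  have int2 : Integrable (fun z => φ z * f (z⁻¹ * x)) m := aux_integrable m f hfc φ hφc hφs x
  have intk : ∀ k : Fin N, Integrable (fun z => ε₁ * (2 / δ₀) * (φ ((a k)⁻¹ * z) * f (z⁻¹ * x))) m := by
    intro k
    apply Integrable.const_mul
    apply aux_integrable m f hfc _ (by fun_prop)
    have : (fun z => φ ((a k)⁻¹ * z)) = φ ∘ (Homeomorph.mulLeft (a k)⁻¹) := rfl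
    rw [this]
    exact hφs.comp_homeomorph _
  have intsum : Integrable (fun z => ∑ k, ε₁ * (2 / δ₀) * (φ ((a k)⁻¹ * z) * f (z⁻¹ * x))) m :=
    integrable_finset_sum _ (fun k _ => intk k)
  -- the indicator middle bound
  set mid : G → ℝ := Set.indicator K₂ (fun z => ε₁ * f (z⁻¹ * x)) with hmid
  have intmid : Integrable mid m := by
    rw [hmid, integrable_indicator_iff hK₂c.measurableSet]
    apply ContinuousOn.integrableOn_compact hK₂c
    fun_prop
  have step1 : fConv m φ f (u⁻¹ * x) - fConv m φ f x
      = ∫ z, (φ (u⁻¹ * z) - φ z) * f (z⁻¹ * x) ∂m := by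
    rw [aux_translate m φ f u x]
    have : fConv m φ f x = ∫ z, φ z * f (z⁻¹ * x) ∂m := rfl
    rw [this, ← integral_sub int1 int2]
    congr 1
    funext z
    ring
  have step2 : |∫ z, (φ (u⁻¹ * z) - φ z) * f (z⁻¹ * x) ∂m| ≤ ∫ z, mid z ∂m := by
    calc |∫ z, (φ (u⁻¹ * z) - φ z) * f (z⁻¹ * x) ∂m|
        ≤ ∫ z, |(φ (u⁻¹ * z) - φ z) * f (z⁻¹ * x)| ∂m := by
          have := norm_integral_le_integral_norm (μ := m)
            (f := fun z => (φ (u⁻¹ * z) - φ z) * f (z⁻¹ * x))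
          simpa only [Real.norm_eq_abs] using this
      _ ≤ ∫ z, mid z ∂m := by
          have intabs : Integrable (fun z => |(φ (u⁻¹ * z) - φ z) * f (z⁻¹ * x)|) m := by
            have := (int1.sub int2).abs
            simpa [Pi.sub_apply, sub_mul] using this
          apply integral_mono intabs intmid
          intro z
          show |(φ (u⁻¹ * z) - φ z) * f (z⁻¹ * x)| ≤ mid z
          rw [abs_mul, abs_of_nonneg (hf0 _)]
          by_cases hz : z ∈ K₂
          · rw [hmid]
            rw [Set.indicator_of_mem hz]
            exact mul_le_mul_of_nonneg_right (hUb u hu z) (hf0 _)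
          · have hz1 : φ z = 0 := by
              apply image_eq_zero_of_notMem_tsupport
              intro hzS
              exact hz (Or.inr hzS)
            have hz2 : φ (u⁻¹ * z) = 0 := by
              apply image_eq_zero_of_notMem_tsupport
              intro hzS
              apply hz
              left
              have : u * (u⁻¹ * z) ∈ C * S := Set.mul_mem_mul (hUC hu) hzS
              simpa using this
            rw [hmid, Set.indicator_of_notMem hz]
            simp [hz1, hz2]
  have step3 : ∫ z, mid z ∂m ≤ ε * ∑ k, fConv m φ f ((a k)⁻¹ * x) := by
    have hpt : ∀ z, mid z ≤ ∑ k, ε₁ * (2 / δ₀) * (φ ((a k)⁻¹ * z) * f (z⁻¹ * x)) := by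
      intro z
      have hb := ind_bound z
      have hrw : ∑ k, ε₁ * (2 / δ₀) * (φ ((a k)⁻¹ * z) * f (z⁻¹ * x))
          = (2 / δ₀ * ∑ k, φ ((a k)⁻¹ * z)) * (ε₁ * f (z⁻¹ * x)) := by
        rw [Finset.mul_sum, Finset.sum_mul]
        apply Finset.sum_congr rfl
        intro k _
        ring
      rw [hrw]
      by_cases hz : z ∈ K₂
      · rw [hmid, Set.indicator_of_mem hz]
        have h1 : (1 : ℝ) ≤ 2 / δ₀ * ∑ k, φ ((a k)⁻¹ * z) := by
          have := ind_bound z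
          rwa [Set.indicator_of_mem hz] at this
        have h2 : 0 ≤ ε₁ * f (z⁻¹ * x) := mul_nonneg hε₁.le (hf0 _)
        calc ε₁ * f (z⁻¹ * x) = 1 * (ε₁ * f (z⁻¹ * x)) := by ring
          _ ≤ (2 / δ₀ * ∑ k, φ ((a k)⁻¹ * z)) * (ε₁ * f (z⁻¹ * x)) :=
              mul_le_mul_of_nonneg_right h1 h2
      · rw [hmid, Set.indicator_of_notMem hz]
        have : 0 ≤ 2 / δ₀ * ∑ k, φ ((a k)⁻¹ * z) := by
          apply mul_nonneg (by positivity)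
          exact Finset.sum_nonneg fun k _ => hφ0 _
        exact mul_nonneg this (mul_nonneg hε₁.le (hf0 _))
    calc ∫ z, mid z ∂m ≤ ∫ z, ∑ k, ε₁ * (2 / δ₀) * (φ ((a k)⁻¹ * z) * f (z⁻¹ * x)) ∂m :=
          integral_mono intmid intsum hpt
      _ = ∑ k, ε₁ * (2 / δ₀) * ∫ z, φ ((a k)⁻¹ * z) * f (z⁻¹ * x) ∂m := by
          rw [integral_finset_sum _ (fun k _ => intk k)]
          apply Finset.sum_congr rfl
          intro k _
          rw [integral_const_mul]
      _ = ∑ k, ε₁ * (2 / δ₀) * fConv m φ f ((a k)⁻¹ * x) := by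
          apply Finset.sum_congr rfl
          intro k _
          rw [aux_translate m φ f (a k) x]
      _ = ε * ∑ k, fConv m φ f ((a k)⁻¹ * x) := by
          rw [Finset.mul_sum]
          apply Finset.sum_congr rfl
          intro k _
          have : ε₁ * (2 / δ₀) = ε := by
            rw [hε₁def]
            field_simp
          rw [this]
  calc |fConv m φ f (u⁻¹ * x) - fConv m φ f x|
      = |∫ z, (φ (u⁻¹ * z) - φ z) * f (z⁻¹ * x) ∂m| := by rw [step1]
    _ ≤ ∫ z, mid z ∂m := step2
    _ ≤ ε * ∑ k, fConv m φ f ((a k)⁻¹ * x) := step3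


lemma aux_F_nonneg (φ f : G → ℝ) (hφ0 : ∀ x, 0 ≤ φ x) (hf0 : ∀ x, 0 ≤ f x) (x : G) :
    0 ≤ fConv m φ f x :=
  integral_nonneg fun z => mul_nonneg (hφ0 z) (hf0 _)

lemma aux_F_cont (f : G → ℝ) (hfc : Continuous f) (hf0 : ∀ x, 0 ≤ f x)
    (φ : G → ℝ) (hφc : Continuous φ) (hφs : HasCompactSupport φ)
    (hφ0 : ∀ x, 0 ≤ φ x) (hφne : φ ≠ 0) :
    Continuous (fConv m φ f) := by
  obtain ⟨N, a, hM⟩ := aux_master m f hfc hf0 φ hφc hφs hφ0 hφne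
  rw [continuous_iff_continuousAt]
  intro p
  rw [ContinuousAt, Metric.tendsto_nhds]
  intro ε' hε'
  set R : ℝ := ∑ k, fConv m φ f ((a k)⁻¹ * p) with hR
  have hR0 : 0 ≤ R := Finset.sum_nonneg fun k _ => aux_F_nonneg m φ f hφ0 hf0 _
  have hden : 0 < ε' / (2 * (R + 1)) := by positivity
  obtain ⟨U, hU, hUb⟩ := hM _ hden
  have hNp : (fun x => p * x⁻¹) ⁻¹' U ∈ 𝓝 p := by
    apply ContinuousAt.preimage_mem_nhds (by fun_prop)
    simpa using hU
  filter_upwards [hNp] with x hx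
  have hxp : (p * x⁻¹)⁻¹ * p = x := by group
  have := hUb (p * x⁻¹) hx p
  rw [hxp] at this
  rw [Real.dist_eq]
  calc |fConv m φ f x - fConv m φ f p| ≤ ε' / (2 * (R + 1)) * R := this
    _ < ε' := by
        rw [div_mul_eq_mul_div, div_lt_iff₀ (by positivity)]
        nlinarith

lemma aux_F_bdd (φ f : G → ℝ) (hφc : Continuous φ) (hφs : HasCompactSupport φ)
    (hφ0 : ∀ x, 0 ≤ φ x) (hfc : Continuous f) (hf0 : ∀ x, 0 ≤ f x)
    (Cf : ℝ) (hCf : ∀ x, |f x| ≤ Cf) (x : G) :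
    |fConv m φ f x| ≤ (∫ z, φ z ∂m) * Cf := by
  rw [abs_of_nonneg (aux_F_nonneg m φ f hφ0 hf0 x)]
  have h1 : Integrable (fun z => φ z * f (z⁻¹ * x)) m := aux_integrable m f hfc φ hφc hφs x
  have h2 : Integrable (fun z => φ z * Cf) m :=
    (hφc.integrable_of_hasCompactSupport hφs).mul_const Cf
  calc fConv m φ f x ≤ ∫ z, φ z * Cf ∂m := by
        apply integral_mono h1 h2
        intro z
        exact mul_le_mul_of_nonneg_left ((le_abs_self _).trans (hCf _)) (hφ0 z)
    _ = (∫ z, φ z ∂m) * Cf := integral_mul_const Cf _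


end Aux

set_option maxHeartbeats 1000000
set_option linter.unusedSectionVars false

lemma aux_pack [Group G] [TopologicalSpace G] [MeasurableSpace G]
    (F h : G → ℝ) {ι : Type*} [Fintype ι] (t : ι → ℝ) (g : ι → G)
    (ht : ∀ j, 0 ≤ t j) (hd : ∀ x, |h x| ≤ ∑ j, t j * F ((g j)⁻¹ * x)) :
    (∑ j, t j) ∈ {s : ℝ | ∃ (n : ℕ) (t' : Fin n → ℝ) (g' : Fin n → G),
      (∀ j, 0 ≤ t' j) ∧ (∀ x, |h x| ≤ ∑ j, t' j * F ((g' j)⁻¹ * x)) ∧ s = ∑ j, t' j} := by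
  refine ⟨Fintype.card ι, t ∘ (Fintype.equivFin ι).symm, g ∘ (Fintype.equivFin ι).symm,
    fun j => ht _, ?_, ?_⟩
  · intro x
    simp only [Function.comp_apply]
    rw [Equiv.sum_comp (Fintype.equivFin ι).symm (fun i => t i * F ((g i)⁻¹ * x))]
    exact hd x
  · simp only [Function.comp_apply]
    rw [Equiv.sum_comp (Fintype.equivFin ι).symm t]

theorem statement_11 [Group G] [TopologicalSpace G] [IsTopologicalGroup G] [LocallyCompactSpace G]
    [T2Space G] [MeasurableSpace G] [BorelSpace G]
    (m : Measure G) [m.IsHaarMeasure]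
    (f : G → ℝ) (hf : RUCb f) (hf0 : ∀ x, 0 ≤ f x) (hfne : f ≠ 0)
    (φ : G → ℝ) (hφc : Continuous φ) (hφs : HasCompactSupport φ)
    (hφ0 : ∀ x, 0 ≤ φ x) (hφne : φ ≠ 0)
    (h : G → ℝ) (hdom : GDom (fConv m φ f) h) :
    pNorm (fConv m φ f) h = pBar (fConv m φ f) h := by
  obtain ⟨⟨Cf, hCf⟩, hfc, -⟩ := hf
  set F : G → ℝ := fConv m φ f with hFdef
  have hFc : Continuous F := aux_F_cont m f hfc hf0 φ hφc hφs hφ0 hφne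
  have hF0 : ∀ x, 0 ≤ F x := aux_F_nonneg m φ f hφ0 hf0
  set CF : ℝ := (∫ z, φ z ∂m) * Cf with hCFdef
  have hFbdd : ∀ x, |F x| ≤ CF := aux_F_bdd m φ f hφc hφs hφ0 hfc hf0 Cf hCf
  set SN := {s : ℝ | ∃ (n : ℕ) (t' : Fin n → ℝ) (g' : Fin n → G),
      (∀ j, 0 ≤ t' j) ∧ (∀ x, |h x| ≤ ∑ j, t' j * F ((g' j)⁻¹ * x)) ∧ s = ∑ j, t' j} with hSN
  set SB := {s : ℝ | ∃ μ : Measure G, MComp μ ∧ (∀ x, |h x| ≤ mConv μ F x) ∧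
      s = (μ Set.univ).toReal} with hSB
  -- every G-domination gives a measurable domination with the same mass
  have hSub : SN ⊆ SB := by
    classical
    rintro s ⟨n, t, g, ht, hd, rfl⟩
    set μ : Measure G := ∑ j : Fin n, ENNReal.ofReal (t j) • Measure.dirac (g j) with hμdef
    have hμapp : ∀ X : Set G, μ X = ∑ j, if g j ∈ X then ENNReal.ofReal (t j) else 0 := by
      intro X
      rw [hμdef, Measure.finset_sum_apply]
      apply Finset.sum_congr rfl
      intro j _
      rw [Measure.smul_apply, Measure.dirac_apply, smul_eq_mul, Set.indicator_apply]
      split <;> simp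
    have hfin : IsFiniteMeasure μ := by
      constructor
      rw [hμapp]
      refine ENNReal.sum_lt_top.mpr fun j _ => ?_
      split <;> simp [ENNReal.ofReal_lt_top]
    have hμeq : ∀ X : Set G, (∀ j, (g j ∈ X)) → μ X = ∑ j, ENNReal.ofReal (t j) := by
      intro X hX
      rw [hμapp]
      apply Finset.sum_congr rfl
      intro j _
      rw [if_pos (hX j)]
    haveI := hfin
    have hreg : μ.Regular := by
      haveI : IsFiniteMeasureOnCompacts μ := ⟨fun _ _ => measure_lt_top μ _⟩
      haveI : μ.OuterRegular := by
        constructor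
        intro X hX r hr
        set D : Set G := Set.range g ∩ Xᶜ with hD
        have hDfin : D.Finite := (Set.finite_range g).inter_of_left _
        have hXD : ∀ j, (g j ∈ Dᶜ) ↔ (g j ∈ X) := by
          intro j
          simp [hD, Set.mem_range]
        refine ⟨Dᶜ, fun x hx hxD => hxD.2 hx, hDfin.isClosed.isOpen_compl, ?_⟩
        have : μ Dᶜ = μ X := by
          rw [hμapp, hμapp]
          apply Finset.sum_congr rfl
          intro j _
          simp only [hXD j]
        rwa [this]
      refine Measure.Regular.mk ?_
      intro V hV r hr
      set K0 : Set G := Set.range g ∩ V with hK0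
      have : μ K0 = μ V := by
        rw [hμapp, hμapp]
        apply Finset.sum_congr rfl
        intro j _
        have : g j ∈ K0 ↔ g j ∈ V := by simp [hK0]
        simp only [this]
      exact ⟨K0, Set.inter_subset_right, ((Set.finite_range g).inter_of_left _).isCompact,
        this ▸ hr⟩
    have hsupp : ∃ K : Set G, IsCompact K ∧ μ Kᶜ = 0 := by
      refine ⟨Set.range g, (Set.finite_range g).isCompact, ?_⟩
      rw [hμapp]
      apply Finset.sum_eq_zero
      intro j _
      simp [Set.mem_range]
    -- compute the convolution
    have hconv : ∀ x, mConv μ F x = ∑ j, t j * F ((g j)⁻¹ * x) := by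
      intro x
      have hintF : Integrable (fun y => F (y⁻¹ * x)) μ := by
        refine Integrable.mono' (integrable_const CF) ?_ (Filter.Eventually.of_forall fun y => hFbdd _)
        exact (hFc.comp (by fun_prop)).aestronglyMeasurable
      have : mConv μ F x = ∑ j, ∫ y, F (y⁻¹ * x) ∂(ENNReal.ofReal (t j) • Measure.dirac (g j)) := by
        rw [mConv, hμdef]
        rw [integral_finset_sum_measure]
        intro j _
        haveI : IsFiniteMeasure (ENNReal.ofReal (t j) • Measure.dirac (g j) : Measure G) := by
          constructor
          rw [Measure.smul_apply, smul_eq_mul]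
          exact ENNReal.mul_lt_top ENNReal.ofReal_lt_top (by simp)
        refine Integrable.mono' (integrable_const CF) ?_
          (Filter.Eventually.of_forall fun y => hFbdd _)
        exact (hFc.comp (by fun_prop)).aestronglyMeasurable
      rw [this]
      apply Finset.sum_congr rfl
      intro j _
      rw [integral_smul_measure, integral_dirac, ENNReal.toReal_ofReal (ht j), smul_eq_mul]
    have hmass : (μ Set.univ).toReal = ∑ j, t j := by
      rw [hμeq Set.univ (fun j => Set.mem_univ _), ENNReal.toReal_sum (fun j _ => ENNReal.ofReal_ne_top)]
      exact Finset.sum_congr rfl fun j _ => ENNReal.toReal_ofReal (ht j)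
    exact ⟨μ, ⟨hfin, hreg, hsupp⟩, fun x => (hconv x) ▸ hd x, hmass.symm⟩
  have hSNne : SN.Nonempty := by
    obtain ⟨n, t, g, ht, hd⟩ := hdom
    exact ⟨∑ j, t j, n, t, g, ht, hd, rfl⟩
  have hSBbdd : BddBelow SB := by
    refine ⟨0, ?_⟩
    rintro s ⟨μ, _, _, rfl⟩
    exact ENNReal.toReal_nonneg
  have hSNbdd : BddBelow SN := by
    refine ⟨0, ?_⟩
    rintro s ⟨n, t, g, ht, _, rfl⟩
    exact Finset.sum_nonneg fun j _ => ht j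
  have hSBne : SB.Nonempty := hSNne.mono hSub
  have part1 : pBar F h ≤ pNorm F h := csInf_le_csInf hSBbdd hSNne hSub
  have part2 : pNorm F h ≤ pBar F h := by
    apply le_csInf hSBne
    rintro b ⟨μ, ⟨hfin, hreg, K, hKc, hKnull⟩, hμdom, rfl⟩
    haveI := hfin
    -- suffices to beat it by every ε̂
    by_contra hcon
    push_neg at hcon
    set εh : ℝ := (pNorm F h - (μ Set.univ).toReal) / 2 with hεhdef
    have hεh : 0 < εh := by simp only [hεhdef]; linarith
    have hgoal : pNorm F h ≤ (μ Set.univ).toReal + εh := by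
      classical
      obtain ⟨N, a, hM⟩ := aux_master m f hfc hf0 φ hφc hφs hφ0 hφne
      set c : ℝ := (μ Set.univ).toReal with hcdef
      have hc0 : 0 ≤ c := ENNReal.toReal_nonneg
      set ε : ℝ := εh / (c * N + 1) with hεdef
      have hε : 0 < ε := by positivity
      obtain ⟨U, hU, hUb⟩ := hM ε hε
      set V : Set G := interior U with hVdef
      have hVo : IsOpen V := isOpen_interior
      have hV1 : (1 : G) ∈ V := mem_interior_iff_mem_nhds.2 hU
      obtain ⟨T, -, hT⟩ := hKc.elim_nhds_subcover (fun y => y • V) (fun y _ =>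
        (hVo.smul y).mem_nhds (by rw [Set.mem_smul_set_iff_inv_smul_mem]; simpa using hV1))
      set n := T.card with hndef
      set eT := T.equivFin with heT
      set g : Fin n → G := fun i => ((eT.symm i : G)) with hgdef
      set E : Fin n → Set G := fun i =>
        (K ∩ g i • V) \ ⋃ (j : Fin n) (_ : j < i), g j • V with hEdef
      have hEm : ∀ i, MeasurableSet (E i) := fun i =>
        ((hKc.isClosed.measurableSet.inter (hVo.smul _).measurableSet).diff
          (MeasurableSet.iUnion fun j => MeasurableSet.iUnion fun _ => (hVo.smul _).measurableSet))
      have hcover : ∀ y ∈ K, ∃ i, y ∈ E i ∧ ∀ j, j ≠ i → y ∉ E j := by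
        intro y hy
        set s : Finset (Fin n) := Finset.univ.filter (fun i => y ∈ g i • V) with hs
        have hsne : s.Nonempty := by
          obtain ⟨w, hwT, hyw⟩ := Set.mem_iUnion₂.mp (hT hy)
          refine ⟨eT ⟨w, hwT⟩, ?_⟩
          rw [hs, Finset.mem_filter]
          refine ⟨Finset.mem_univ _, ?_⟩
          have hgw : g (eT ⟨w, hwT⟩) = w := by simp [hgdef]
          rw [hgw]; exact hyw
        set i₀ := s.min' hsne with hi₀
        have hi₀s : i₀ ∈ s := s.min'_mem hsne
        have hi₀V : y ∈ g i₀ • V := (Finset.mem_filter.mp hi₀s).2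
        have hnotlt : ∀ j, j < i₀ → y ∉ g j • V := by
          intro j hj hyj
          have hjs : j ∈ s := by rw [hs, Finset.mem_filter]; exact ⟨Finset.mem_univ _, hyj⟩
          exact absurd (s.min'_le j hjs) (not_le.mpr hj)
        have hyE : y ∈ E i₀ := by
          refine ⟨⟨hy, hi₀V⟩, ?_⟩
          intro hmem
          rw [Set.mem_iUnion] at hmem
          obtain ⟨j, hmem⟩ := hmem
          rw [Set.mem_iUnion] at hmem
          obtain ⟨hj, hmem⟩ := hmem
          exact hnotlt j hj hmem
        refine ⟨i₀, hyE, ?_⟩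
        intro j hj hyEj
        rcases lt_or_gt_of_ne hj with hlt | hgt
        · exact hnotlt j hlt hyEj.1.2
        · exact hyEj.2 (Set.mem_iUnion.mpr ⟨i₀, Set.mem_iUnion.mpr ⟨hgt, hi₀V⟩⟩)
      have hdisj : (↑(Finset.univ : Finset (Fin n)) : Set (Fin n)).PairwiseDisjoint E := by
        intro i _ j _ hij
        rw [Function.onFun, Set.disjoint_left]
        intro y hyi hyj
        rcases lt_or_gt_of_ne hij with hlt | hgt
        · exact hyj.2 (Set.mem_iUnion.mpr ⟨i, Set.mem_iUnion.mpr ⟨hlt, hyi.1.2⟩⟩)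
        · exact hyi.2 (Set.mem_iUnion.mpr ⟨j, Set.mem_iUnion.mpr ⟨hgt, hyj.1.2⟩⟩)
      have hmass : ∑ i, (μ (E i)).toReal ≤ c := by
        have h1 : ∑ i, μ (E i) = μ (⋃ i ∈ Finset.univ, E i) :=
          (measure_biUnion_finset hdisj (fun i _ => hEm i)).symm
        calc ∑ i, (μ (E i)).toReal = (∑ i, μ (E i)).toReal :=
              (ENNReal.toReal_sum (fun i _ => measure_ne_top μ _)).symm
          _ = (μ (⋃ i ∈ Finset.univ, E i)).toReal := by rw [h1]
          _ ≤ c := ENNReal.toReal_mono (measure_ne_top μ _) (measure_mono (Set.subset_univ _))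
      have hkey : ∀ x, mConv μ F x ≤
          ∑ i, (μ (E i)).toReal * (F ((g i)⁻¹ * x) + ε * ∑ k, F ((g i * a k)⁻¹ * x)) := by
        intro x
        set B : Fin n → ℝ := fun i => F ((g i)⁻¹ * x) + ε * ∑ k, F ((g i * a k)⁻¹ * x) with hB
        have hptw : ∀ y ∈ K, F (y⁻¹ * x) ≤ ∑ i, (E i).indicator (fun _ => B i) y := by
          intro y hy
          obtain ⟨i₀, hyE, huniq⟩ := hcover y hy
          rw [Finset.sum_eq_single i₀ (fun j _ hj => Set.indicator_of_notMem (huniq j hj) _)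
            (fun hmem => absurd (Finset.mem_univ i₀) hmem)]
          rw [Set.indicator_of_mem hyE]
          have hyV := hyE.1.2
          rw [Set.mem_smul_set_iff_inv_smul_mem, smul_eq_mul] at hyV
          have hvU : (g i₀)⁻¹ * y ∈ U := interior_subset hyV
          have hyx : ((g i₀)⁻¹ * y)⁻¹ * ((g i₀)⁻¹ * x) = y⁻¹ * x := by group
          have hb := hUb ((g i₀)⁻¹ * y) hvU ((g i₀)⁻¹ * x)
          rw [hyx] at hb
          have h2 : F (y⁻¹ * x) - F ((g i₀)⁻¹ * x) ≤ ε * ∑ k, F ((a k)⁻¹ * ((g i₀)⁻¹ * x)) :=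
            (le_abs_self _).trans hb
          have h3 : ∑ k, F ((a k)⁻¹ * ((g i₀)⁻¹ * x)) = ∑ k, F ((g i₀ * a k)⁻¹ * x) :=
            Finset.sum_congr rfl fun k _ => by rw [show (a k)⁻¹ * ((g i₀)⁻¹ * x) = (g i₀ * a k)⁻¹ * x by group]
          rw [h3] at h2
          rw [hB]
          dsimp only
          linarith
        have hintF : Integrable (fun y => F (y⁻¹ * x)) μ := by
          refine Integrable.mono' (integrable_const CF) ?_
            (Filter.Eventually.of_forall fun y => hFbdd _)
          exact (hFc.comp (by fun_prop)).aestronglyMeasurable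
        have hintW : Integrable (fun y => ∑ i, (E i).indicator (fun _ => B i) y) μ :=
          integrable_finset_sum _ fun i _ => (integrable_const (B i)).indicator (hEm i)
        have hae : ∀ᵐ y ∂μ, F (y⁻¹ * x) ≤ ∑ i, (E i).indicator (fun _ => B i) y := by
          rw [MeasureTheory.ae_iff]
          refine measure_mono_null ?_ hKnull
          intro y hyn
          intro hyK
          exact hyn (hptw y hyK)
        calc mConv μ F x ≤ ∫ y, ∑ i, (E i).indicator (fun _ => B i) y ∂μ :=
              integral_mono_ae hintF hintW hae
          _ = ∑ i, (μ (E i)).toReal * B i := by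
              rw [integral_finset_sum _ fun i _ => (integrable_const (B i)).indicator (hEm i)]
              refine Finset.sum_congr rfl fun i _ => ?_
              rw [integral_indicator_const _ (hEm i), smul_eq_mul]
              rfl
      set tt : Fin n ⊕ Fin n × Fin N → ℝ :=
        Sum.elim (fun i => (μ (E i)).toReal) (fun p => (μ (E p.1)).toReal * ε) with htt
      set gg : Fin n ⊕ Fin n × Fin N → G := Sum.elim g (fun p => g p.1 * a p.2) with hgg
      have htt0 : ∀ j, 0 ≤ tt j := by
        rintro (i | p)
        · simp only [htt, Sum.elim_inl]; exact ENNReal.toReal_nonneg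
        · simp only [htt, Sum.elim_inr]; positivity
      have hdd : ∀ x, |h x| ≤ ∑ j, tt j * F ((gg j)⁻¹ * x) := by
        intro x
        refine (hμdom x).trans ((hkey x).trans (le_of_eq ?_))
        rw [Fintype.sum_sum_type]
        simp only [htt, hgg, Sum.elim_inl, Sum.elim_inr]
        rw [Fintype.sum_prod_type, ← Finset.sum_add_distrib]
        refine Finset.sum_congr rfl fun i _ => ?_
        rw [mul_add, Finset.mul_sum, Finset.mul_sum]
        congr 1
        refine Finset.sum_congr rfl fun k _ => ?_
        ring
      have hsum : ∑ j, tt j ≤ c + εh := by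
        rw [Fintype.sum_sum_type]
        simp only [htt, Sum.elim_inl, Sum.elim_inr]
        rw [Fintype.sum_prod_type]
        have h2 : ∑ i, ∑ _k : Fin N, (μ (E i)).toReal * ε
            = (∑ i, (μ (E i)).toReal) * ((N : ℝ) * ε) := by
          rw [Finset.sum_mul]
          refine Finset.sum_congr rfl fun i _ => ?_
          rw [Finset.sum_const, Finset.card_univ, Fintype.card_fin, nsmul_eq_mul]
          ring
        rw [h2]
        have h3 : (∑ i, (μ (E i)).toReal) * ((N : ℝ) * ε) ≤ c * ((N : ℝ) * ε) := by
          apply mul_le_mul_of_nonneg_right hmass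
          positivity
        have h4 : c * ((N : ℝ) * ε) ≤ εh := by
          rw [hεdef, div_eq_inv_mul]
          rw [show c * ((N : ℝ) * ((c * ↑N + 1)⁻¹ * εh)) = (c * ↑N) * (c * ↑N + 1)⁻¹ * εh by ring]
          have h5 : (c * ↑N) * (c * ↑N + 1)⁻¹ ≤ 1 := by
            rw [mul_inv_le_iff₀ (by positivity)]
            linarith
          nlinarith
        linarith
      have hmem := aux_pack F h tt gg htt0 hdd
      have hpn : pNorm F h = sInf SN := rfl
      rw [hpn]
      calc sInf SN ≤ ∑ j, tt j := csInf_le hSNbdd hmem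
        _ ≤ c + εh := hsum
    simp only [hεhdef] at hgoal
    linarith
  linarith
end

section
/- Let f ∈ C_ru^b(G) be nonnegative and not identically zero, let V = {h ∈ C_ru^b(G) : h is measurably dominated by f}, and let I : V → ℝ be additive and ℝ-homogeneous with I(h) ≥ 0 whenever h ≥ 0, I(f) = 1, and I(λ*h) = I(h) for every λ ∈ M^1_00(G) and h ∈ V. Then |I(h)| ≤ p̄_f(h) for every h ∈ V; that is, for every h ∈ V and every λ ∈ M_00(G)_+ with |h| ≤ λ*f one has |I(h)| ≤ λ(G). Consequently I is continuous with respect to the p̄_f-norm with operator norm equal to one. -/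
open MeasureTheory Topology Pointwise
open scoped ENNReal

variable {G : Type*}

section AuxProofs

variable [Group G] [TopologicalSpace G] [IsTopologicalGroup G] [MeasurableSpace G] [BorelSpace G]

lemma aux_integrable_shift {f : G → ℝ} (hc : Continuous f) {C : ℝ} (hb : ∀ x, |f x| ≤ C)
    (μ : Measure G) [IsFiniteMeasure μ] (x : G) :
    Integrable (fun y => f (y⁻¹ * x)) μ := by
  refine (integrable_const C).mono'
    ((hc.comp (continuous_inv.mul continuous_const)).aestronglyMeasurable) ?_
  exact Filter.Eventually.of_forall fun y => by
    simpa [Real.norm_eq_abs] using hb (y⁻¹ * x)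

lemma aux_conj_nhds {K : Set G} (hK : IsCompact K) {W : Set G} (hW : W ∈ 𝓝 (1 : G)) :
    ∃ U ∈ 𝓝 (1 : G), ∀ g ∈ U, ∀ y ∈ K, y⁻¹ * g * y ∈ W := by
  obtain ⟨W', hsub, hW'o, hW'1⟩ := mem_nhds_iff.mp hW
  have hc : Continuous fun p : G × G => p.1⁻¹ * p.2 * p.1 := by
    continuity
  have hsubset : K ×ˢ ({1} : Set G) ⊆ (fun p : G × G => p.1⁻¹ * p.2 * p.1) ⁻¹' W' := by
    rintro ⟨y, g⟩ ⟨hy, hg⟩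
    simp only [Set.mem_singleton_iff] at hg
    subst hg
    simpa using hW'1
  obtain ⟨u, v, _, hvo, hKu, h1v, huv⟩ :=
    generalized_tube_lemma hK isCompact_singleton (hW'o.preimage hc) hsubset
  refine ⟨v, hvo.mem_nhds (h1v rfl), fun g hg y hy => hsub ?_⟩
  have hm : (y, g) ∈ (fun p : G × G => p.1⁻¹ * p.2 * p.1) ⁻¹' W' :=
    huv (Set.mem_prod.mpr ⟨hKu hy, hg⟩)
  exact hm

lemma aux_rucb_mConv {f : G → ℝ} (hf : RUCb f) {μ : Measure G} (hμ : MComp μ) :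
    RUCb (mConv μ f) := by
  obtain ⟨⟨C, hC⟩, hcont, hru⟩ := hf
  obtain ⟨hfin, _, K, hKc, hK0⟩ := hμ
  haveI := hfin
  have haeK : ∀ᵐ y ∂μ, y ∈ K := by
    rw [MeasureTheory.ae_iff]
    exact hK0
  have hint : ∀ x : G, Integrable (fun y => f (y⁻¹ * x)) μ := fun x =>
    aux_integrable_shift hcont hC μ x
  have key : ∀ ε : ℝ, 0 < ε → ∃ U ∈ 𝓝 (1 : G), ∀ g ∈ U, ∀ x,
      |mConv μ f (g⁻¹ * x) - mConv μ f x| < ε := by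
    intro ε hε
    set M : ℝ := (μ Set.univ).toReal with hM
    have hM0 : 0 ≤ M := ENNReal.toReal_nonneg
    have hε' : 0 < ε / (M + 1) := div_pos hε (by linarith)
    obtain ⟨U₀, hU₀, hU₀e⟩ := hru (ε / (M + 1)) hε'
    obtain ⟨U, hU, hUc⟩ := aux_conj_nhds hKc hU₀
    refine ⟨U, hU, fun g hg x => ?_⟩
    have heq : mConv μ f (g⁻¹ * x) - mConv μ f x
        = ∫ y, (f (y⁻¹ * (g⁻¹ * x)) - f (y⁻¹ * x)) ∂μ := by
      simp only [mConv]
      rw [← integral_sub (hint _) (hint _)]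
    rw [heq]
    have hbound : ‖∫ y, (f (y⁻¹ * (g⁻¹ * x)) - f (y⁻¹ * x)) ∂μ‖ ≤ (ε / (M + 1)) * M := by
      refine le_trans (norm_integral_le_of_norm_le_const ?_) (le_of_eq rfl)
      filter_upwards [haeK] with y hy
      have h1 : y⁻¹ * (g⁻¹ * x) = (y⁻¹ * g * y)⁻¹ * (y⁻¹ * x) := by group
      rw [Real.norm_eq_abs, h1]
      exact le_of_lt (hU₀e _ (hUc g hg y hy) _)
    rw [Real.norm_eq_abs] at hbound
    refine lt_of_le_of_lt hbound ?_
    rw [div_mul_eq_mul_div, div_lt_iff₀ (by linarith : (0:ℝ) < M + 1)]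
    nlinarith
  have hbdd : IsBdd (mConv μ f) := by
    refine ⟨|C| * (μ Set.univ).toReal, fun x => ?_⟩
    have hb := norm_integral_le_of_norm_le_const (μ := μ)
      (f := fun y => f (y⁻¹ * x)) (C := |C|)
      (Filter.Eventually.of_forall fun y => by
        rw [Real.norm_eq_abs]; exact (hC _).trans (le_abs_self C))
    simpa [mConv, Real.norm_eq_abs, Measure.real_def] using hb
  refine ⟨hbdd, ?_, key⟩
  rw [continuous_iff_continuousAt]
  intro x₀
  refine Metric.tendsto_nhds.mpr fun ε hε => ?_
  obtain ⟨U, hU, hUe⟩ := key ε hε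
  have hc1 : ContinuousAt (fun x : G => x₀ * x⁻¹) x₀ :=
    (continuous_const.mul continuous_inv).continuousAt
  have hU' : U ∈ 𝓝 ((fun x : G => x₀ * x⁻¹) x₀) := by simpa using hU
  filter_upwards [hc1.preimage_mem_nhds hU'] with x hx
  have h2 : (x₀ * x⁻¹)⁻¹ * x₀ = x := by group
  have h3 := hUe _ hx x₀
  rw [h2] at h3
  simpa [Real.dist_eq] using h3

lemma aux_regular_dirac [T2Space G] (a : G) : (Measure.dirac a).Regular := by
  haveI h1 : IsFiniteMeasureOnCompacts (Measure.dirac a) := ⟨fun K _ => measure_lt_top _ K⟩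
  haveI h2 : (Measure.dirac a).OuterRegular := by
    constructor
    intro A hA r hr
    by_cases ha : a ∈ A
    · refine ⟨Set.univ, Set.subset_univ A, isOpen_univ, ?_⟩
      have hA1 : Measure.dirac a A = 1 := by
        rw [Measure.dirac_apply' _ hA]; simp [ha]
      have huniv : Measure.dirac a Set.univ = 1 := by simp
      rw [huniv]; rwa [hA1] at hr
    · refine ⟨{a}ᶜ, fun x hx => ?_, isOpen_compl_singleton, ?_⟩
      · simp only [Set.mem_compl_iff, Set.mem_singleton_iff]
        rintro rfl; exact ha hx
      · have h0 : Measure.dirac a {a}ᶜ = 0 := by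
          rw [Measure.dirac_apply' _ (measurableSet_singleton a).compl]
          simp
        rw [h0]
        exact zero_le.trans_lt hr
  refine ⟨fun U hU r hr => ?_⟩
  by_cases ha : a ∈ U
  · refine ⟨{a}, Set.singleton_subset_iff.mpr ha, isCompact_singleton, ?_⟩
    have h1' : Measure.dirac a {a} = 1 := by simp
    rw [h1']
    exact lt_of_lt_of_le hr ((measure_mono (Set.subset_univ U)).trans_eq (by simp))
  · exfalso
    have h0 : Measure.dirac a U = 0 := by
      rw [Measure.dirac_apply' _ hU.measurableSet]; simp [ha]
    rw [h0] at hr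
    exact ENNReal.not_lt_zero hr

lemma aux_regular_add {μ ν : Measure G} [IsFiniteMeasure μ] [IsFiniteMeasure ν]
    (hμ : μ.Regular) (hν : ν.Regular) : (μ + ν).Regular := by
  haveI := hμ; haveI := hν
  haveI h1 : IsFiniteMeasureOnCompacts (μ + ν) := ⟨fun K _ => measure_lt_top _ K⟩
  haveI h2 : (μ + ν).OuterRegular := by
    constructor
    intro A hA r hr
    rw [Measure.add_apply] at hr
    set ε : ℝ≥0∞ := r - (μ A + ν A) with hεdef
    have hε0 : ε ≠ 0 := (tsub_pos_of_lt hr).ne'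
    have hε2 : ε / 2 ≠ 0 := (ENNReal.half_pos hε0).ne'
    obtain ⟨U₁, hAU₁, hU₁o, hU₁⟩ := Set.exists_isOpen_lt_add A (measure_ne_top μ A) hε2
    obtain ⟨U₂, hAU₂, hU₂o, hU₂⟩ := Set.exists_isOpen_lt_add A (measure_ne_top ν A) hε2
    refine ⟨U₁ ∩ U₂, Set.subset_inter hAU₁ hAU₂, hU₁o.inter hU₂o, ?_⟩
    have hle : (μ + ν) (U₁ ∩ U₂) ≤ μ U₁ + ν U₂ := by
      rw [Measure.add_apply]
      exact add_le_add (measure_mono Set.inter_subset_left)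
        (measure_mono Set.inter_subset_right)
    calc (μ + ν) (U₁ ∩ U₂) ≤ μ U₁ + ν U₂ := hle
      _ < (μ A + ε / 2) + (ν A + ε / 2) := ENNReal.add_lt_add hU₁ hU₂
      _ = (μ A + ν A) + ε := by rw [add_add_add_comm, ENNReal.add_halves]
      _ ≤ r := by rw [hεdef, add_tsub_cancel_of_le hr.le]
  refine ⟨fun U hU r hr => ?_⟩
  rw [Measure.add_apply] at hr
  have hμU : μ U ≠ ∞ := measure_ne_top μ U
  have hνU : ν U ≠ ∞ := measure_ne_top ν U
  set ε : ℝ≥0∞ := (μ U + ν U - r) / 2 with hεdef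
  have hε0 : ε ≠ 0 := (ENNReal.half_pos (tsub_pos_of_lt hr).ne').ne'
  obtain ⟨K₁, hK₁U, hK₁c, hK₁⟩ :=
    hμ.innerRegular.exists_subset_lt_add isCompact_empty hU hμU hε0
  obtain ⟨K₂, hK₂U, hK₂c, hK₂⟩ :=
    hν.innerRegular.exists_subset_lt_add isCompact_empty hU hνU hε0
  refine ⟨K₁ ∪ K₂, Set.union_subset hK₁U hK₂U, hK₁c.union hK₂c, ?_⟩
  have hsum_ne : μ U + ν U ≠ ∞ := ENNReal.add_ne_top.mpr ⟨hμU, hνU⟩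
  have hεne : ε + ε ≠ ∞ := by
    rw [hεdef, ENNReal.add_halves]
    exact ne_top_of_le_ne_top hsum_ne tsub_le_self
  have h1 : r + (ε + ε) = μ U + ν U := by
    rw [hεdef, ENNReal.add_halves, add_tsub_cancel_of_le hr.le]
  have h2 : μ U + ν U < ((μ + ν) (K₁ ∪ K₂)) + (ε + ε) := by
    calc μ U + ν U < (μ K₁ + ε) + (ν K₂ + ε) := ENNReal.add_lt_add hK₁ hK₂
      _ = (μ K₁ + ν K₂) + (ε + ε) := by rw [add_add_add_comm]
      _ ≤ ((μ + ν) (K₁ ∪ K₂)) + (ε + ε) := by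
          rw [Measure.add_apply]
          exact add_le_add (add_le_add
            (measure_mono Set.subset_union_left)
            (measure_mono Set.subset_union_right)) le_rfl
  rw [← h1] at h2
  exact lt_of_add_lt_add_right h2

lemma aux_mcomp_add {μ ν : Measure G} (hμ : MComp μ) (hν : MComp ν) : MComp (μ + ν) := by
  obtain ⟨hμf, hμr, K₁, hK₁, hK₁0⟩ := hμ
  obtain ⟨hνf, hνr, K₂, hK₂, hK₂0⟩ := hν
  haveI := hμf; haveI := hνf
  refine ⟨inferInstance, aux_regular_add hμr hνr, K₁ ∪ K₂, hK₁.union hK₂, ?_⟩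
  rw [Measure.add_apply,
    measure_mono_null (Set.compl_subset_compl.mpr Set.subset_union_left) hK₁0,
    measure_mono_null (Set.compl_subset_compl.mpr Set.subset_union_right) hK₂0, add_zero]

lemma aux_mcomp_smul {μ : Measure G} (hμ : MComp μ) {c : ℝ≥0∞} (hc : c ≠ ∞) :
    MComp (c • μ) := by
  obtain ⟨hf, hr, K, hK, hK0⟩ := hμ
  haveI := hf
  refine ⟨⟨?_⟩, hr.smul hc, K, hK, ?_⟩
  · rw [Measure.smul_apply, smul_eq_mul]
    exact ENNReal.mul_lt_top hc.lt_top (measure_lt_top μ _)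
  · rw [Measure.smul_apply, hK0, smul_eq_mul, mul_zero]

lemma aux_mcomp_dirac [T2Space G] : MComp (Measure.dirac (1 : G)) := by
  refine ⟨inferInstance, aux_regular_dirac 1, {1}, isCompact_singleton, ?_⟩
  rw [Measure.dirac_apply' _ (measurableSet_singleton (1 : G)).compl]
  simp

lemma aux_rucb_add {h v : G → ℝ} (hh : RUCb h) (hv : RUCb v) : RUCb (h + v) := by
  obtain ⟨⟨C, hC⟩, hhc, hhr⟩ := hh
  obtain ⟨⟨D, hD⟩, hvc, hvr⟩ := hv
  refine ⟨⟨C + D, fun x => ?_⟩, hhc.add hvc, fun ε hε => ?_⟩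
  · exact (abs_add_le _ _).trans (add_le_add (hC x) (hD x))
  · obtain ⟨U₁, hU₁, hU₁e⟩ := hhr (ε / 2) (by linarith)
    obtain ⟨U₂, hU₂, hU₂e⟩ := hvr (ε / 2) (by linarith)
    refine ⟨U₁ ∩ U₂, Filter.inter_mem hU₁ hU₂, fun g hg x => ?_⟩
    have e1 := hU₁e g hg.1 x
    have e2 := hU₂e g hg.2 x
    simp only [Pi.add_apply]
    calc |h (g⁻¹ * x) + v (g⁻¹ * x) - (h x + v x)|
        = |(h (g⁻¹ * x) - h x) + (v (g⁻¹ * x) - v x)| := by ring_nf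
      _ ≤ |h (g⁻¹ * x) - h x| + |v (g⁻¹ * x) - v x| := abs_add_le _ _
      _ < ε := by linarith

lemma aux_rucb_smul {h : G → ℝ} (c : ℝ) (hh : RUCb h) : RUCb (c • h) := by
  obtain ⟨⟨C, hC⟩, hhc, hhr⟩ := hh
  refine ⟨⟨|c| * C, fun x => ?_⟩, hhc.const_smul c, fun ε hε => ?_⟩
  · simp only [Pi.smul_apply, smul_eq_mul, abs_mul]
    exact mul_le_mul_of_nonneg_left (hC x) (abs_nonneg c)
  · have hε' : 0 < ε / (|c| + 1) := div_pos hε (by positivity)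
    obtain ⟨U, hU, hUe⟩ := hhr (ε / (|c| + 1)) hε'
    refine ⟨U, hU, fun g hg x => ?_⟩
    simp only [Pi.smul_apply, smul_eq_mul]
    have e1 := hUe g hg x
    calc |c * h (g⁻¹ * x) - c * h x| = |c| * |h (g⁻¹ * x) - h x| := by
          rw [← abs_mul]; ring_nf
      _ ≤ |c| * (ε / (|c| + 1)) :=
          mul_le_mul_of_nonneg_left (le_of_lt e1) (abs_nonneg c)
      _ < ε := by
          rw [mul_comm, div_mul_eq_mul_div, div_lt_iff₀ (by positivity : (0:ℝ) < |c| + 1)]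
          nlinarith [abs_nonneg c]

end AuxProofs
theorem statement_12 [Group G] [TopologicalSpace G] [IsTopologicalGroup G] [LocallyCompactSpace G]
    [T2Space G] [MeasurableSpace G] [BorelSpace G]
    (f : G → ℝ) (hf : RUCb f) (hf0 : ∀ x, 0 ≤ f x) (hfne : f ≠ 0)
    (V : Set (G → ℝ)) (hV : V = {h : G → ℝ | RUCb h ∧ MDom f h})
    (I : (G → ℝ) → ℝ)
    (Iadd : ∀ h ∈ V, ∀ v ∈ V, I (h + v) = I h + I v)
    (Ismul : ∀ c : ℝ, ∀ h ∈ V, I (c • h) = c * I h)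
    (Ipos : ∀ h ∈ V, (∀ x, 0 ≤ h x) → 0 ≤ I h)
    (Inorm : I f = 1)
    (Iinv : ∀ μ : Measure G, MComp μ → μ Set.univ = 1 →
      ∀ h ∈ V, I (mConv μ h) = I h) :
    (∀ h ∈ V, ∀ μ : Measure G, MComp μ → (∀ x, |h x| ≤ mConv μ f x) →
      |I h| ≤ (μ Set.univ).toReal) ∧
    (∀ h ∈ V, |I h| ≤ pBar f h) := by
  subst hV
  obtain ⟨⟨Cf, hCf⟩, hfc, -⟩ := id hf
  -- f belongs to V
  have hfV : f ∈ {h : G → ℝ | RUCb h ∧ MDom f h} := by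
    refine ⟨hf, Measure.dirac 1, aux_mcomp_dirac, fun x => ?_⟩
    have : mConv (Measure.dirac (1 : G)) f x = f x := by
      rw [mConv, integral_dirac]
      simp
    rw [this, abs_of_nonneg (hf0 x)]
  -- V is closed under addition
  have hVadd : ∀ h ∈ {h : G → ℝ | RUCb h ∧ MDom f h},
      ∀ v ∈ {h : G → ℝ | RUCb h ∧ MDom f h},
      h + v ∈ {h : G → ℝ | RUCb h ∧ MDom f h} := by
    rintro h ⟨hhr, μ₁, hμ₁, hd₁⟩ v ⟨hvr, μ₂, hμ₂, hd₂⟩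
    refine ⟨aux_rucb_add hhr hvr, μ₁ + μ₂, aux_mcomp_add hμ₁ hμ₂, fun x => ?_⟩
    haveI := hμ₁.1; haveI := hμ₂.1
    have hconv : mConv (μ₁ + μ₂) f x = mConv μ₁ f x + mConv μ₂ f x := by
      rw [mConv]
      exact integral_add_measure (aux_integrable_shift hfc hCf μ₁ x)
        (aux_integrable_shift hfc hCf μ₂ x)
    rw [hconv]
    exact (abs_add_le _ _).trans (add_le_add (hd₁ x) (hd₂ x))
  -- V is closed under scalar multiplication
  have hVsmul : ∀ c : ℝ, ∀ h ∈ {h : G → ℝ | RUCb h ∧ MDom f h},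
      c • h ∈ {h : G → ℝ | RUCb h ∧ MDom f h} := by
    rintro c h ⟨hhr, μ, hμ, hd⟩
    refine ⟨aux_rucb_smul c hhr, (ENNReal.ofReal |c|) • μ,
      aux_mcomp_smul hμ ENNReal.ofReal_ne_top, fun x => ?_⟩
    haveI := hμ.1
    have hconv : mConv ((ENNReal.ofReal |c|) • μ) f x = |c| * mConv μ f x := by
      rw [mConv, integral_smul_measure, ENNReal.toReal_ofReal (abs_nonneg c),
        smul_eq_mul]
      rfl
    rw [hconv]
    simp only [Pi.smul_apply, smul_eq_mul, abs_mul]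
    exact mul_le_mul_of_nonneg_left (hd x) (abs_nonneg c)
  -- convolutions of f belong to V
  have hconvV : ∀ μ : Measure G, MComp μ →
      mConv μ f ∈ {h : G → ℝ | RUCb h ∧ MDom f h} := by
    intro μ hμ
    haveI := hμ.1
    refine ⟨aux_rucb_mConv ⟨⟨Cf, hCf⟩, hfc, hf.2.2⟩ hμ, μ, hμ, fun x => ?_⟩
    have hnn : 0 ≤ mConv μ f x := integral_nonneg fun y => hf0 _
    rw [abs_of_nonneg hnn]
  -- main estimate
  have main : ∀ h ∈ {h : G → ℝ | RUCb h ∧ MDom f h}, ∀ μ : Measure G, MComp μ →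
      (∀ x, |h x| ≤ mConv μ f x) → |I h| ≤ (μ Set.univ).toReal := by
    intro h hh μ hμ hdom
    haveI := hμ.1
    by_cases h0 : μ Set.univ = 0
    · -- μ = 0, hence h = 0
      have hμ0 : μ = 0 := Measure.measure_univ_eq_zero.mp h0
      have hzero : h = 0 := by
        funext x
        have := hdom x
        rw [hμ0] at this
        simp only [mConv, integral_zero_measure] at this
        exact abs_nonpos_iff.mp this
      have hI0 : I h = 0 := by
        rw [hzero]
        have : (0 : G → ℝ) = (0 : ℝ) • f := by simp
        rw [this, Ismul 0 f hfV, zero_mul]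
      rw [hI0, h0]
      simp
    · -- normalize μ
      set c : ℝ := (μ Set.univ).toReal with hc
      have hcpos : 0 < c := ENNReal.toReal_pos h0 (measure_ne_top μ _)
      set ν : Measure G := (μ Set.univ)⁻¹ • μ with hν
      have hν1 : ν Set.univ = 1 := by
        rw [hν, Measure.smul_apply, smul_eq_mul,
          ENNReal.inv_mul_cancel h0 (measure_ne_top μ _)]
      have hνcomp : MComp ν :=
        aux_mcomp_smul hμ (ENNReal.inv_ne_top.mpr h0)
      have hμeq : (μ Set.univ) • ν = μ := by
        rw [hν, smul_smul, ENNReal.mul_inv_cancel h0 (measure_ne_top μ _), one_smul]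
      have hF : mConv μ f = c • mConv ν f := by
        funext x
        rw [Pi.smul_apply, smul_eq_mul, mConv, mConv, ← hμeq, integral_smul_measure,
          smul_eq_mul]
      have hFνV := hconvV ν hνcomp
      have hFV := hconvV μ hμ
      have hIF : I (mConv μ f) = c := by
        rw [hF, Ismul c _ hFνV, Iinv ν hνcomp hν1 f hfV, Inorm, mul_one]
      have hnegV : (-1 : ℝ) • h ∈ {h : G → ℝ | RUCb h ∧ MDom f h} := hVsmul (-1) h hh
      have hp1 : 0 ≤ I (mConv μ f + h) := by
        refine Ipos _ (hVadd _ hFV _ hh) fun x => ?_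
        have h1 := hdom x
        have h2 := neg_abs_le (h x)
        simp only [Pi.add_apply]
        linarith
      have hp2 : 0 ≤ I (mConv μ f + (-1 : ℝ) • h) := by
        refine Ipos _ (hVadd _ hFV _ hnegV) fun x => ?_
        have h1 := hdom x
        have h2 := le_abs_self (h x)
        simp only [Pi.add_apply, Pi.smul_apply, smul_eq_mul]
        linarith
      rw [Iadd _ hFV _ hh, hIF] at hp1
      rw [Iadd _ hFV _ hnegV, hIF, Ismul (-1) h hh] at hp2
      exact abs_le.mpr ⟨by linarith, by linarith⟩
  refine ⟨main, ?_⟩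
  intro h hh
  obtain ⟨-, μ, hμc, hdom⟩ := id hh
  refine le_csInf ⟨(μ Set.univ).toReal, μ, hμc, hdom, rfl⟩ ?_
  rintro b ⟨ν, hνc, hνdom, rfl⟩
  exact main h hh ν hνc hνdom
end

section
/- Let f ∈ C_ru^b(G) be nonnegative and not identically zero, let φ ∈ C_00(G) be nonnegative with ∫_G φ dm_G = 1, and let D be the real linear span of {ψ*h : ψ ∈ C_00(G), h ∈ C_ru^b(G) measurably dominated by f}. Let I : D → ℝ be linear, with I(v) ≥ 0 whenever v ∈ D satisfies v ≥ 0, with I(g·v) = I(v) for all g ∈ G and v ∈ D, and p_{φ*f}-continuous in the sense that there is C ≥ 0 with |I(v)| ≤ C · p_{φ*f}(v) for all v ∈ D. Then I is measurably invariant: I(μ*h) = I(h) for every μ ∈ M^1_00(G) and every h ∈ D. -/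
open MeasureTheory Topology Pointwise
open scoped ENNReal

variable {G : Type*}

set_option linter.unusedSectionVars false
set_option linter.unusedVariables false
set_option maxHeartbeats 1000000

section Helpers

variable [Group G] [TopologicalSpace G] [IsTopologicalGroup G] [LocallyCompactSpace G]
    [T2Space G] [MeasurableSpace G] [BorelSpace G]

theorem myUcL (ψ : G → ℝ) (hc : Continuous ψ) (hs : HasCompactSupport ψ) {ε : ℝ} (hε : 0 < ε) :
    ∃ U ∈ 𝓝 (1 : G), (∀ g ∈ U, g⁻¹ ∈ U) ∧ ∀ g ∈ U, ∀ x, |ψ (g * x) - ψ x| ≤ ε := by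
  obtain ⟨U₀, hU₀c, hU₀⟩ := exists_compact_mem_nhds (1 : G)
  set K : Set G := tsupport ψ with hK
  have hKc : IsCompact K := hs
  set K' : Set G := K ∪ U₀⁻¹ * K with hK'
  have hK'c : IsCompact K' := hKc.union (hU₀c.inv.mul hKc)
  have main : ∀ x₀ : G, ∃ W N : Set G, W ∈ 𝓝 (1 : G) ∧ IsOpen N ∧ x₀ ∈ N ∧
      ∀ g ∈ W, ∀ z ∈ N, |ψ (g * z) - ψ x₀| < ε / 2 := by
    intro x₀
    have hcont : Continuous fun p : G × G => ψ (p.1 * p.2) :=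
      hc.comp (continuous_fst.mul continuous_snd)
    have hopen : IsOpen {p : G × G | |ψ (p.1 * p.2) - ψ x₀| < ε / 2} :=
      isOpen_lt ((hcont.sub continuous_const).abs) continuous_const
    have hmem : ((1 : G), x₀) ∈ {p : G × G | |ψ (p.1 * p.2) - ψ x₀| < ε / 2} := by
      simp [half_pos hε]
    rcases mem_nhds_prod_iff.mp (hopen.mem_nhds hmem) with ⟨W, hW, N, hN, hWN⟩
    rcases mem_nhds_iff.mp hN with ⟨N', hN'N, hN'o, hx₀N'⟩
    exact ⟨W, N', hW, hN'o, hx₀N', fun g hg z hz => hWN (Set.mk_mem_prod hg (hN'N hz))⟩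
  choose W N hW hNo hNmem hWN using main
  obtain ⟨t, ht⟩ := hK'c.elim_finite_subcover (fun i : G => N i) (fun i => hNo i)
    (fun x hx => Set.mem_iUnion.mpr ⟨x, hNmem x⟩)
  have hUmem : (interior U₀ ∩ ⋂ i ∈ t, W i) ∈ 𝓝 (1 : G) := by
    refine Filter.inter_mem (isOpen_interior.mem_nhds (mem_interior_iff_mem_nhds.mpr hU₀)) ?_
    exact (Filter.biInter_finset_mem t).mpr fun i _ => hW i
  set U : Set G := interior U₀ ∩ ⋂ i ∈ t, W i with hUdef
  have key : ∀ g ∈ U, ∀ x, |ψ (g * x) - ψ x| ≤ ε := by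
    intro g hg x
    by_cases hx : x ∈ K'
    · rcases Set.mem_iUnion₂.mp (ht hx) with ⟨i, hit, hxN⟩
      have h1 : |ψ (g * x) - ψ i| < ε / 2 :=
        hWN i g (Set.mem_iInter₂.mp hg.2 i hit) x hxN
      have h2 : |ψ (1 * x) - ψ i| < ε / 2 :=
        hWN i 1 (mem_of_mem_nhds (hW i)) x hxN
      rw [one_mul] at h2
      calc |ψ (g * x) - ψ x| ≤ |ψ (g * x) - ψ i| + |ψ i - ψ x| := abs_sub_le _ _ _
        _ ≤ ε / 2 + ε / 2 := by
            rw [abs_sub_comm (ψ i)]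
            exact add_le_add h1.le h2.le
        _ = ε := by ring
    · have hx1 : ψ x = 0 := by
        have : x ∉ K := fun h => hx (Or.inl h)
        exact image_eq_zero_of_notMem_tsupport this
      have hx2 : ψ (g * x) = 0 := by
        apply image_eq_zero_of_notMem_tsupport
        intro hgx
        apply hx
        refine Or.inr ?_
        refine ⟨g⁻¹, Set.inv_mem_inv.mpr (interior_subset hg.1), g * x, hgx, ?_⟩
        group
      simp [hx1, hx2, hε.le]
  refine ⟨U ∩ U⁻¹, Filter.inter_mem hUmem ?_, fun g hg => ⟨hg.2, by simpa using hg.1⟩,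
    fun g hg => key g hg.1⟩
  have : U⁻¹ = Inv.inv ⁻¹' U := by ext z; simp [Set.mem_inv]
  rw [this]
  exact continuous_inv.continuousAt.preimage_mem_nhds (by simpa using hUmem)

theorem myUcR (ψ : G → ℝ) (hc : Continuous ψ) (hs : HasCompactSupport ψ) {ε : ℝ} (hε : 0 < ε) :
    ∃ U ∈ 𝓝 (1 : G), ∀ g ∈ U, ∀ x, |ψ (x * g) - ψ x| ≤ ε := by
  have hinv : Continuous fun x : G => ψ x⁻¹ := hc.comp continuous_inv
  have hsinv : HasCompactSupport fun x : G => ψ x⁻¹ :=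
    hs.comp_homeomorph (Homeomorph.inv G)
  obtain ⟨U, hU, hUsym, hUb⟩ := myUcL _ hinv hsinv hε
  refine ⟨U, hU, fun g hg x => ?_⟩
  have := hUb g⁻¹ (hUsym g hg) x⁻¹
  simpa [mul_inv_rev] using this

theorem myInt (m : Measure G) [m.IsHaarMeasure] (ψ h : G → ℝ) (hψc : Continuous ψ) (hψs : HasCompactSupport ψ)
    (hhc : Continuous h) (x : G) :
    Integrable (fun y => ψ y * h (y⁻¹ * x)) m := by
  apply Continuous.integrable_of_hasCompactSupport
  · exact hψc.mul (hhc.comp ((continuous_inv.mul continuous_const)))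
  · apply HasCompactSupport.mul_right hψs

theorem myTransl (m : Measure G) [m.IsHaarMeasure] (ψ h : G → ℝ) (g x : G) :
    fConv m ψ h (g⁻¹ * x) = fConv m (fun y => ψ (g⁻¹ * y)) h x := by
  have := integral_mul_left_eq_self (μ := m) (fun y => ψ (g⁻¹ * y) * h (y⁻¹ * x)) g
  simp only [fConv]
  rw [← this]
  congr 1 with y
  have h1 : g⁻¹ * (g * y) = y := by group
  have h2 : (g * y)⁻¹ * x = y⁻¹ * (g⁻¹ * x) := by group
  rw [h1, h2]

theorem myBdd (m : Measure G) [m.IsHaarMeasure] (ψ h : G → ℝ) (hψc : Continuous ψ) (hψs : HasCompactSupport ψ)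
    (hhc : Continuous h) {Ch : ℝ} (hCh : ∀ t, |h t| ≤ Ch) (x : G) :
    |fConv m ψ h x| ≤ (∫ y, |ψ y| ∂m) * Ch := by
  have h1 : |fConv m ψ h x| ≤ ∫ y, |ψ y| * |h (y⁻¹ * x)| ∂m := by
    have := norm_integral_le_integral_norm (fun y => ψ y * h (y⁻¹ * x)) (μ := m)
    simpa [Real.norm_eq_abs, fConv] using this
  refine h1.trans ?_
  rw [← integral_mul_const]
  apply integral_mono
  · have := (myInt m ψ h hψc hψs hhc x).abs
    simpa [abs_mul] using this
  · apply Integrable.mul_const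
    exact (hψc.integrable_of_hasCompactSupport hψs).abs
  · intro y
    simp only [abs_mul]
    have h0 : (0:ℝ) ≤ |ψ y| := abs_nonneg _
    exact mul_le_mul_of_nonneg_left (hCh _) h0

theorem myIntBdd (μ : Measure G) [IsFiniteMeasure μ] (w : G → ℝ) (hw : Continuous w)
    {Cw : ℝ} (hCw : ∀ t, |w t| ≤ Cw) : Integrable w μ := by
  refine ⟨hw.aestronglyMeasurable, ?_⟩
  apply MeasureTheory.HasFiniteIntegral.of_bounded (C := Cw)
  exact Filter.Eventually.of_forall (fun t => by simpa [Real.norm_eq_abs] using hCw t)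

theorem myContFConv (m : Measure G) [m.IsHaarMeasure] (ψ h : G → ℝ) (hψc : Continuous ψ)
    (hψs : HasCompactSupport ψ) (hhc : Continuous h) {Ch : ℝ} (hCh : ∀ t, |h t| ≤ Ch) :
    Continuous (fConv m ψ h) := by
  obtain ⟨U₀, hU₀c, hU₀⟩ := exists_compact_mem_nhds (1 : G)
  set K : Set G := tsupport ψ with hKdef
  set T : Set G := K ∪ U₀⁻¹ * K with hTdef
  have hTc : IsCompact T := hψs.union (hU₀c.inv.mul hψs)
  have hTm : m T < ⊤ := hTc.measure_lt_top
  -- key estimate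
  have key : ∀ ε > (0:ℝ), ∃ U ∈ 𝓝 (1 : G), ∀ g ∈ U, ∀ x,
      |fConv m ψ h (g * x) - fConv m ψ h x| ≤ ε * ((m T).toReal * (Ch + 1)) := by
    intro ε hε
    obtain ⟨U, hU, hUsym, hUb⟩ := myUcL ψ hψc hψs hε
    refine ⟨U ∩ interior U₀, Filter.inter_mem hU
      (isOpen_interior.mem_nhds (mem_interior_iff_mem_nhds.mpr hU₀)), ?_⟩
    intro g hg x
    have htr : fConv m ψ h (g * x) = fConv m (fun y => ψ (g * y)) h x := by
      have := myTransl m ψ h g⁻¹ x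
      simpa using this
    rw [htr]
    have hint1 : Integrable (fun y => ψ (g * y) * h (y⁻¹ * x)) m := by
      apply myInt m _ h (hψc.comp (continuous_const.mul continuous_id)) ?_ hhc
      have : HasCompactSupport fun y => ψ (g * y) :=
        hψs.comp_homeomorph (Homeomorph.mulLeft g)
      exact this
    have hint2 := myInt m ψ h hψc hψs hhc x
    have hsub : fConv m (fun y => ψ (g * y)) h x - fConv m ψ h x
        = ∫ y, (ψ (g * y) - ψ y) * h (y⁻¹ * x) ∂m := by
      simp only [fConv]
      rw [← integral_sub hint1 hint2]
      congr 1 with y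
      ring
    rw [hsub]
    -- the integrand vanishes off T
    have hvan : ∀ y, y ∉ T → (ψ (g * y) - ψ y) * h (y⁻¹ * x) = 0 := by
      intro y hy
      have h1 : ψ y = 0 := image_eq_zero_of_notMem_tsupport (fun hmem => hy (Or.inl hmem))
      have h2 : ψ (g * y) = 0 := by
        apply image_eq_zero_of_notMem_tsupport
        intro hmem
        apply hy
        refine Or.inr ⟨g⁻¹, Set.inv_mem_inv.mpr (interior_subset hg.2), g * y, hmem, by group⟩
      simp [h1, h2]
    rw [← setIntegral_eq_integral_of_forall_compl_eq_zero hvan]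
    have hb : ∀ y ∈ T, ‖(ψ (g * y) - ψ y) * h (y⁻¹ * x)‖ ≤ ε * (Ch + 1) := by
      intro y _
      rw [Real.norm_eq_abs, abs_mul]
      have h1 : |ψ (g * y) - ψ y| ≤ ε := hUb g hg.1 y
      have h2 : |h (y⁻¹ * x)| ≤ Ch + 1 := (hCh _).trans (by linarith)
      have := mul_le_mul h1 h2 (abs_nonneg _) hε.le
      linarith
    have hmeas : AEStronglyMeasurable (fun y => (ψ (g * y) - ψ y) * h (y⁻¹ * x)) (m.restrict T) :=
      by
        have := (hint1.sub hint2).aestronglyMeasurable.restrict (s := T)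
        apply this.congr
        filter_upwards with y
        simp only [Pi.sub_apply]
        ring
    have := norm_setIntegral_le_of_norm_le_const (μ := m) hTm hb
    rw [Real.norm_eq_abs] at this
    calc |∫ y in T, (ψ (g * y) - ψ y) * h (y⁻¹ * x) ∂m| ≤ ε * (Ch + 1) * (m T).toReal := this
      _ = ε * ((m T).toReal * (Ch + 1)) := by ring
  -- conclude continuity
  rw [continuous_iff_continuousAt]
  intro x₀
  rw [ContinuousAt, Metric.tendsto_nhds]
  intro δ hδ
  set M : ℝ := (m T).toReal * (Ch + 1) with hMdef
  have hM0 : 0 ≤ M := by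
    apply mul_nonneg ENNReal.toReal_nonneg
    have := abs_nonneg (h 1)
    linarith [hCh 1]
  have hε : (0:ℝ) < δ / (2 * (M + 1)) := by positivity
  obtain ⟨U, hU, hUb⟩ := key _ hε
  have htend : Filter.Tendsto (fun x => x * x₀⁻¹) (𝓝 x₀) (𝓝 (1 : G)) := by
    have : Continuous fun x : G => x * x₀⁻¹ := continuous_id.mul continuous_const
    have h10 := this.tendsto x₀
    simpa using h10
  filter_upwards [htend.eventually_mem hU] with x hx
  have hxx : fConv m ψ h x = fConv m ψ h ((x * x₀⁻¹) * x₀) := by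
    congr 1
    group
  have := hUb _ hx x₀
  rw [← hxx] at this
  rw [Real.dist_eq]
  have hlt : δ / (2 * (M + 1)) * M < δ := by
    rw [div_mul_eq_mul_div]
    rw [div_lt_iff₀ (by positivity)]
    nlinarith
  linarith

theorem myContMu (μ : Measure G) [IsFiniteMeasure μ] (ψ : G → ℝ) (hψc : Continuous ψ)
    (hψs : HasCompactSupport ψ) :
    Continuous (fun z => ∫ y, ψ (y⁻¹ * z) ∂μ) := by
  obtain ⟨Cψ, hCψ⟩ := hψs.exists_bound_of_continuous hψc
  simp only [Real.norm_eq_abs] at hCψ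
  have hint : ∀ z : G, Integrable (fun y => ψ (y⁻¹ * z)) μ :=
    fun z => myIntBdd μ _ (hψc.comp (continuous_inv.mul continuous_const)) (fun t => hCψ _)
  have key : ∀ ε > (0:ℝ), ∃ U ∈ 𝓝 (1 : G), ∀ s ∈ U, ∀ z₀,
      |(∫ y, ψ (y⁻¹ * (z₀ * s)) ∂μ) - ∫ y, ψ (y⁻¹ * z₀) ∂μ| ≤ ε * (μ Set.univ).toReal := by
    intro ε hε
    obtain ⟨U, hU, hUb⟩ := myUcR ψ hψc hψs hε
    refine ⟨U, hU, fun s hs z₀ => ?_⟩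
    rw [← integral_sub (hint _) (hint _)]
    have hb : ∀ᵐ y ∂μ, ‖ψ (y⁻¹ * (z₀ * s)) - ψ (y⁻¹ * z₀)‖ ≤ ε := by
      filter_upwards with y
      rw [Real.norm_eq_abs]
      have := hUb s hs (y⁻¹ * z₀)
      rw [mul_assoc] at this
      exact this
    have := norm_integral_le_of_norm_le_const hb
    rw [Real.norm_eq_abs] at this
    exact this
  rw [continuous_iff_continuousAt]
  intro z₀
  rw [ContinuousAt, Metric.tendsto_nhds]
  intro δ hδ
  set M : ℝ := (μ Set.univ).toReal with hM
  have hM0 : (0:ℝ) ≤ M := ENNReal.toReal_nonneg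
  have hε : (0:ℝ) < δ / (2 * (M + 1)) := by positivity
  obtain ⟨U, hU, hUb⟩ := key _ hε
  have htend : Filter.Tendsto (fun z => z₀⁻¹ * z) (𝓝 z₀) (𝓝 (1 : G)) := by
    have : Continuous fun z : G => z₀⁻¹ * z := continuous_const.mul continuous_id
    simpa using this.tendsto z₀
  filter_upwards [htend.eventually_mem hU] with z hz
  have := hUb _ hz z₀
  have hzz : z₀ * (z₀⁻¹ * z) = z := by group
  rw [hzz] at this
  rw [Real.dist_eq]
  have hlt : δ / (2 * (M + 1)) * M < δ := by
    rw [div_mul_eq_mul_div, div_lt_iff₀ (by positivity)]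
    nlinarith
  linarith

theorem mySuppMu (μ : Measure G) {Kμ : Set G} (hKμ0 : μ Kμᶜ = 0) (ψ : G → ℝ)
    {z : G} (hz : z ∉ Kμ * tsupport ψ) : (∫ y, ψ (y⁻¹ * z) ∂μ) = 0 := by
  have : ∀ᵐ y ∂μ, ψ (y⁻¹ * z) = 0 := by
    have hae : ∀ᵐ y ∂μ, y ∈ Kμ := by
      rw [MeasureTheory.ae_iff]
      exact hKμ0
    filter_upwards [hae] with y hy
    apply image_eq_zero_of_notMem_tsupport
    intro hmem
    exact hz ⟨y, hy, y⁻¹ * z, hmem, by group⟩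
  calc (∫ y, ψ (y⁻¹ * z) ∂μ) = ∫ _, (0:ℝ) ∂μ := integral_congr_ae this
    _ = 0 := integral_zero _ _

theorem myFubini (m : Measure G) [m.IsHaarMeasure] (μ : Measure G) [IsFiniteMeasure μ]
    {Kμ : Set G} (hKμc : IsCompact Kμ) (hKμ0 : μ Kμᶜ = 0)
    (ψ h : G → ℝ) (hψc : Continuous ψ) (hψs : HasCompactSupport ψ)
    (hhc : Continuous h) {Ch : ℝ} (hCh : ∀ t, |h t| ≤ Ch) :
    mConv μ (fConv m ψ h) = fConv m (fun z => ∫ y, ψ (y⁻¹ * z) ∂μ) h := by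
  -- cutoff function
  obtain ⟨χ, hχ1, -, hχs, hχ01⟩ :=
    exists_continuous_one_zero_of_isCompact hKμc isClosed_empty (Set.disjoint_empty _)
  have hχc : Continuous χ := χ.continuous
  have hμae : ∀ᵐ y ∂μ, y ∈ Kμ := by
    rw [MeasureTheory.ae_iff]; exact hKμ0
  funext x
  have step2 : mConv μ (fConv m ψ h) x
      = ∫ y, (∫ z, ψ (y⁻¹ * z) * h (z⁻¹ * x) ∂m) ∂μ := by
    simp only [mConv]
    congr 1 with y
    exact myTransl m ψ h y x
  rw [step2]
  set F : G → G → ℝ := fun y z => (χ y * ψ (y⁻¹ * z)) * h (z⁻¹ * x) with hF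
  have hFc : Continuous (Function.uncurry F) := by
    apply Continuous.mul
    · exact (hχc.comp continuous_fst).mul
        (hψc.comp ((continuous_fst.inv).mul continuous_snd))
    · exact hhc.comp ((continuous_snd.inv).mul continuous_const)
  have hFs : HasCompactSupport (Function.uncurry F) := by
    apply HasCompactSupport.intro
      ((hχs.prod (hχs.mul hψs)) : IsCompact ((tsupport χ) ×ˢ (tsupport χ * tsupport ψ)))
    rintro ⟨y, z⟩ hyz
    by_cases hy : χ y = 0
    · simp [Function.uncurry, F, hy]
    by_cases hz : ψ (y⁻¹ * z) = 0
    · simp [Function.uncurry, F, hz]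
    exfalso
    apply hyz
    constructor
    · exact subset_tsupport χ hy
    · exact ⟨y, subset_tsupport χ hy, y⁻¹ * z, subset_tsupport ψ hz, by group⟩
  have step3 : ∫ y, (∫ z, ψ (y⁻¹ * z) * h (z⁻¹ * x) ∂m) ∂μ
      = ∫ y, (∫ z, F y z ∂m) ∂μ := by
    apply integral_congr_ae
    filter_upwards [hμae] with y hy
    have : χ y = 1 := hχ1 hy
    simp only [F, this, one_mul]
  rw [step3]
  rw [integral_integral_swap_of_hasCompactSupport hFc hFs]
  have step4 : ∀ z, (∫ y, F y z ∂μ) = (∫ y, ψ (y⁻¹ * z) ∂μ) * h (z⁻¹ * x) := by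
    intro z
    rw [← integral_mul_const]
    apply integral_congr_ae
    filter_upwards [hμae] with y hy
    have : χ y = 1 := hχ1 hy
    simp only [F, this, one_mul]
  simp only [step4]
  rfl

theorem myPartition {K : Set G} (hK : IsCompact K) {V : Set G} (hV : V ∈ 𝓝 (1 : G)) :
    ∃ (n : ℕ) (y : Fin n → G) (P : Fin n → Set G),
      (∀ i, MeasurableSet (P i)) ∧ (Pairwise (Function.onFun Disjoint P)) ∧
      (⋃ i, P i) = K ∧ (∀ i, y i ∈ K) ∧ ∀ i, ∀ p ∈ P i, (y i)⁻¹ * p ∈ V := by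
  classical
  set W : Set G := interior V with hWdef
  have hWo : IsOpen W := isOpen_interior
  have hW1 : (1 : G) ∈ W := mem_interior_iff_mem_nhds.mpr hV
  have hcov : K ⊆ ⋃ k : K, ((k : G) • W) := by
    intro x hx
    refine Set.mem_iUnion.mpr ⟨⟨x, hx⟩, ?_⟩
    rw [Set.mem_smul_set_iff_inv_smul_mem]
    simpa using hW1
  obtain ⟨t, ht⟩ := hK.elim_finite_subcover (fun k : K => (k : G) • W)
    (fun k => hWo.smul _) hcov
  set L := t.toList with hL
  set n := L.length with hn
  set y : Fin n → G := fun i => ((L.get i : K) : G) with hy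
  have hcov2 : K ⊆ ⋃ i : Fin n, (y i) • W := by
    intro x hx
    rcases Set.mem_iUnion₂.mp (ht hx) with ⟨k, hkt, hxk⟩
    have hkL : k ∈ L := Finset.mem_toList.mpr hkt
    rcases List.get_of_mem hkL with ⟨i, hi⟩
    refine Set.mem_iUnion.mpr ⟨i, ?_⟩
    show x ∈ ((L.get i : K) : G) • W
    rw [hi]
    exact hxk
  refine ⟨n, y, fun i => (K ∩ (y i) • W) \ ⋃ j : Fin n, ⋃ (_ : j < i), (y j) • W,
      ?_, ?_, ?_, ?_, ?_⟩
  · intro i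
    have hKm : MeasurableSet K := hK.isClosed.measurableSet
    have hsm : ∀ j : Fin n, MeasurableSet ((y j) • W) := fun j => (hWo.smul _).measurableSet
    exact (hKm.inter (hsm i)).diff (MeasurableSet.iUnion fun j =>
      MeasurableSet.iUnion fun _ => hsm j)
  · intro i j hij
    rcases lt_or_gt_of_ne hij with hlt | hlt
    · refine Set.disjoint_left.mpr ?_
      rintro x ⟨⟨-, hxW⟩, -⟩ ⟨-, hxj⟩
      exact hxj (Set.mem_iUnion.mpr ⟨i, Set.mem_iUnion.mpr ⟨hlt, hxW⟩⟩)
    · refine Set.disjoint_left.mpr ?_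
      rintro x ⟨-, hxi⟩ ⟨⟨-, hxW⟩, -⟩
      exact hxi (Set.mem_iUnion.mpr ⟨j, Set.mem_iUnion.mpr ⟨hlt, hxW⟩⟩)
  · apply Set.Subset.antisymm
    · intro x hx
      rcases Set.mem_iUnion.mp hx with ⟨i, hxi⟩
      exact hxi.1.1
    · intro x hx
      set s : Finset (Fin n) := Finset.univ.filter (fun i => x ∈ (y i) • W) with hs
      have hne : s.Nonempty := by
        rcases Set.mem_iUnion.mp (hcov2 hx) with ⟨i, hi⟩
        exact ⟨i, Finset.mem_filter.mpr ⟨Finset.mem_univ _, hi⟩⟩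
      have hi₀mem : x ∈ (y (s.min' hne)) • W :=
        (Finset.mem_filter.mp (s.min'_mem hne)).2
      refine Set.mem_iUnion.mpr ⟨s.min' hne, ⟨⟨hx, hi₀mem⟩, ?_⟩⟩
      intro hmem
      rcases Set.mem_iUnion.mp hmem with ⟨j, hj⟩
      rcases Set.mem_iUnion.mp hj with ⟨hji, hxj⟩
      have : s.min' hne ≤ j := s.min'_le j (Finset.mem_filter.mpr ⟨Finset.mem_univ _, hxj⟩)
      exact absurd this (not_le.mpr hji)
  · intro i
    exact (L.get i).2
  · intro i p hp
    have hmem : p ∈ (y i) • W := hp.1.2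
    rw [Set.mem_smul_set_iff_inv_smul_mem] at hmem
    exact interior_subset hmem

theorem myCover {K : Set G} (hK : IsCompact K) {φ : G → ℝ} (hφc : Continuous φ)
    (hφ0 : ∀ x, 0 ≤ φ x) {y₀ : G} (hy₀ : 0 < φ y₀) :
    ∃ (c' : ℝ) (N : ℕ) (z : Fin N → G), 0 < c' ∧
      ∀ w ∈ K, c' ≤ ∑ i : Fin N, φ ((z i)⁻¹ * w) := by
  classical
  set c' : ℝ := φ y₀ / 2 with hc'
  have hc'0 : 0 < c' := by positivity
  set O : Set G := {u | c' < φ u} with hO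
  have hOo : IsOpen O := isOpen_lt continuous_const hφc
  have hy₀O : y₀ ∈ O := by
    simp only [O, Set.mem_setOf_eq, hc']
    linarith
  have hcov : K ⊆ ⋃ k : K, (((k : G) * y₀⁻¹) • O) := by
    intro x hx
    refine Set.mem_iUnion.mpr ⟨⟨x, hx⟩, ?_⟩
    rw [Set.mem_smul_set_iff_inv_smul_mem]
    have : (x * y₀⁻¹)⁻¹ • x = y₀ := by
      simp only [smul_eq_mul]; group
    rw [this]
    exact hy₀O
  obtain ⟨t, ht⟩ := hK.elim_finite_subcover (fun k : K => ((k : G) * y₀⁻¹) • O)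
    (fun k => hOo.smul _) hcov
  set L := t.toList with hL
  set N := L.length with hN
  set z : Fin N → G := fun i => ((L.get i : K) : G) * y₀⁻¹ with hz
  refine ⟨c', N, z, hc'0, ?_⟩
  intro w hw
  rcases Set.mem_iUnion₂.mp (ht hw) with ⟨k, hkt, hxk⟩
  rcases List.get_of_mem (Finset.mem_toList.mpr hkt) with ⟨i, hi⟩
  have hiO : w ∈ (z i) • O := by
    show w ∈ (((L.get i : K) : G) * y₀⁻¹) • O
    rw [hi]
    exact hxk
  rw [Set.mem_smul_set_iff_inv_smul_mem] at hiO
  have hterm : c' ≤ φ ((z i)⁻¹ * w) := le_of_lt hiO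
  calc c' ≤ φ ((z i)⁻¹ * w) := hterm
    _ ≤ ∑ j : Fin N, φ ((z j)⁻¹ * w) :=
        Finset.single_le_sum (f := fun j => φ ((z j)⁻¹ * w)) (fun j _ => hφ0 _)
          (Finset.mem_univ i)

theorem myGen (m : Measure G) [m.IsHaarMeasure]
    (f : G → ℝ)
    (φ : G → ℝ) (hφc : Continuous φ) (hφs : HasCompactSupport φ)
    (hφ0 : ∀ x, 0 ≤ φ x) (hφ1 : ∫ x, φ x ∂m = 1)
    (D : Submodule ℝ (G → ℝ))
    (hD : D = Submodule.span ℝ {v : G → ℝ | ∃ ψ h : G → ℝ,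
      Continuous ψ ∧ HasCompactSupport ψ ∧ RUCb h ∧ MDom f h ∧ v = fConv m ψ h})
    (I : (G → ℝ) → ℝ)
    (Iadd : ∀ h ∈ D, ∀ v ∈ D, I (h + v) = I h + I v)
    (Ismul : ∀ c : ℝ, ∀ h ∈ D, I (c • h) = c * I h)
    (Ipos : ∀ v ∈ D, (∀ x, 0 ≤ v x) → 0 ≤ I v)
    (Iinv : ∀ g : G, ∀ v ∈ D, I (fun x => v (g⁻¹ * x)) = I v)
    (μ : Measure G) [IsFiniteMeasure μ] (hμ1 : μ Set.univ = 1)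
    {Kμ : Set G} (hKμc : IsCompact Kμ) (hKμ0 : μ Kμᶜ = 0)
    (ψ h : G → ℝ) (hψc : Continuous ψ) (hψs : HasCompactSupport ψ)
    (hhR : RUCb h) (hhM : MDom f h) :
    I (mConv μ (fConv m ψ h)) = I (fConv m ψ h) := by
  classical
  obtain ⟨⟨Ch, hCh⟩, hhc, hhu⟩ := hhR
  obtain ⟨Cψ, hCψ'⟩ := hψs.exists_bound_of_continuous hψc
  have hCψ : ∀ t, |ψ t| ≤ Cψ := fun t => by simpa [Real.norm_eq_abs] using hCψ' t
  set v : G → ℝ := fConv m ψ h with hv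
  have hvD : v ∈ D := by
    rw [hD]
    exact Submodule.subset_span ⟨ψ, h, hψc, hψs, ⟨⟨Ch, hCh⟩, hhc, hhu⟩, hhM, rfl⟩
  -- the μ-convolution of ψ
  set Φ : G → ℝ := fun z => ∫ y, ψ (y⁻¹ * z) ∂μ with hΦ
  have hΦc : Continuous Φ := myContMu μ ψ hψc hψs
  set K₀ : Set G := Kμ * tsupport ψ with hK₀
  have hK₀c : IsCompact K₀ := hKμc.mul hψs
  have hΦ0 : ∀ z ∉ K₀, Φ z = 0 := fun z hz => mySuppMu μ hKμ0 ψ hz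
  have hΦs : HasCompactSupport Φ := HasCompactSupport.intro hK₀c hΦ0
  have hμv : mConv μ v = fConv m Φ h :=
    myFubini m μ hKμc hKμ0 ψ h hψc hψs hhc hCh
  have hμvD : mConv μ v ∈ D := by
    rw [hμv, hD]
    exact Submodule.subset_span ⟨Φ, h, hΦc, hΦs, ⟨⟨Ch, hCh⟩, hhc, hhu⟩, hhM, rfl⟩
  -- basic I facts
  have Izero : I 0 = 0 := by
    have := Ismul 0 0 D.zero_mem
    simpa using this
  have Isub : ∀ a ∈ D, ∀ b ∈ D, I (a - b) = I a - I b := by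
    intro a ha b hb
    have hnb : -b = (-1 : ℝ) • b := by funext t; simp
    have h1 : I (-b) = -I b := by
      rw [hnb, Ismul (-1) b hb]; ring
    rw [sub_eq_add_neg, Iadd a ha (-b) (by rw [hnb]; exact D.smul_mem _ hb), h1]
    ring
  have Isum : ∀ (k : ℕ) (w : Fin k → (G → ℝ)), (∀ i, w i ∈ D) →
      I (∑ i, w i) = ∑ i, I (w i) := by
    intro k
    induction k with
    | zero => intro w hw; simpa using Izero
    | succ k ih =>
      intro w hw
      rw [Fin.sum_univ_castSucc, Fin.sum_univ_castSucc (f := fun i => I (w i))]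
      rw [Iadd _ (Submodule.sum_mem D fun i _ => hw _) _ (hw _), ih _ (fun i => hw _)]
  -- positivity point of φ
  have hφpos : ∃ y₀, 0 < φ y₀ := by
    by_contra hcon
    push_neg at hcon
    have : φ = 0 := funext fun t => le_antisymm (hcon t) (hφ0 t)
    rw [this] at hφ1
    simp at hφ1
  obtain ⟨y₀, hy₀⟩ := hφpos
  obtain ⟨c', N, z, hc'0, hzcov⟩ := myCover hK₀c hφc hφ0 hy₀
  -- |h|
  set habs : G → ℝ := fun t => |h t| with hhabs
  have habsc : Continuous habs := hhc.abs
  have habsCh : ∀ t, |habs t| ≤ Ch := fun t => by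
    simpa [habs, abs_abs] using hCh t
  have habsR : RUCb habs := by
    refine ⟨⟨Ch, habsCh⟩, habsc, ?_⟩
    intro ε hε
    obtain ⟨U, hU, hUb⟩ := hhu ε hε
    refine ⟨U, hU, fun g hg x => ?_⟩
    exact lt_of_le_of_lt (abs_abs_sub_abs_le_abs_sub _ _) (hUb g hg x)
  have habsM : MDom f habs := by
    obtain ⟨lam, hlam, hdom⟩ := hhM
    exact ⟨lam, hlam, fun t => by simpa [habs, abs_abs] using hdom t⟩
  -- the fixed dominating element E
  set ψz : Fin N → (G → ℝ) := fun i => fun w => φ ((z i)⁻¹ * w) with hψz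
  have hψzc : ∀ i, Continuous (ψz i) :=
    fun i => hφc.comp (continuous_const.mul continuous_id)
  have hψzs : ∀ i, HasCompactSupport (ψz i) := fun i => by
    have : HasCompactSupport fun w => φ ((z i)⁻¹ * w) :=
      hφs.comp_homeomorph (Homeomorph.mulLeft (z i)⁻¹)
    exact this
  set Egen : Fin N → (G → ℝ) := fun i => fConv m (ψz i) habs with hEgen
  have hEgenD : ∀ i, Egen i ∈ D := by
    intro i
    rw [hD]
    exact Submodule.subset_span ⟨ψz i, habs, hψzc i, hψzs i, habsR, habsM, rfl⟩
  set E : G → ℝ := (1/c') • ∑ i, Egen i with hE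
  have hED : E ∈ D := D.smul_mem _ (Submodule.sum_mem D fun i _ => hEgenD i)
  have hEgen0 : ∀ i t, 0 ≤ Egen i t := by
    intro i t
    apply integral_nonneg
    intro y'
    exact mul_nonneg (hφ0 _) (abs_nonneg _)
  have hE0 : ∀ t, 0 ≤ E t := by
    intro t
    have : E t = (1/c') * ∑ i, Egen i t := by
      simp [E, Finset.sum_apply]
    rw [this]
    apply mul_nonneg (by positivity)
    exact Finset.sum_nonneg fun i _ => hEgen0 i t
  have hIE0 : 0 ≤ I E := Ipos E hED hE0
  -- suffices
  suffices hsuff : ∀ ε : ℝ, 0 < ε → |I (mConv μ v) - I v| ≤ ε * I E by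
    by_contra hne
    have habs0 : 0 < |I (mConv μ v) - I v| := abs_pos.mpr (sub_ne_zero.mpr hne)
    have := hsuff (|I (mConv μ v) - I v| / (2 * (I E + 1))) (by positivity)
    rw [div_mul_eq_mul_div] at this
    have h2 : |I (mConv μ v) - I v| * I E / (2 * (I E + 1)) < |I (mConv μ v) - I v| := by
      rw [div_lt_iff₀ (by positivity)]
      nlinarith
    linarith
  intro ε hε
  -- the partition
  obtain ⟨U, hU, hUsym, hUb⟩ := myUcL ψ hψc hψs hε
  obtain ⟨n, y, P, hPm, hPd, hPU, hyK, hPV⟩ := myPartition hKμc hU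
  set cP : Fin n → ℝ := fun i => (μ (P i)).toReal with hcP
  have hcP0 : ∀ i, 0 ≤ cP i := fun i => ENNReal.toReal_nonneg
  -- sum of masses is 1
  have hKμ1 : μ Kμ = 1 := by
    have h1 : μ Kμ + μ Kμᶜ = μ Set.univ :=
      measure_add_measure_compl hKμc.isClosed.measurableSet
    rw [hKμ0, add_zero] at h1
    rw [h1, hμ1]
  have hsum1 : ∑ i, cP i = 1 := by
    have h1 : μ (⋃ i, P i) = ∑' i, μ (P i) := measure_iUnion hPd hPm
    rw [hPU, hKμ1, tsum_fintype] at h1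
    have h2 : (∑ i, μ (P i)).toReal = ∑ i, (μ (P i)).toReal :=
      ENNReal.toReal_sum fun i _ => measure_ne_top μ _
    rw [← h1] at h2
    simpa [cP] using h2.symm
  -- θ
  set θ : G → ℝ := fun w => Φ w - ∑ i, cP i * ψ ((y i)⁻¹ * w) with hθ
  -- Riemann bound
  have hintμ : ∀ w, Integrable (fun y' => ψ (y'⁻¹ * w)) μ := fun w =>
    myIntBdd μ _ (hψc.comp (continuous_inv.mul continuous_const)) (fun t => hCψ _)
  have hθb : ∀ w, |θ w| ≤ ε := by
    intro w
    have hrestr : Φ w = ∑ i, ∫ y' in P i, ψ (y'⁻¹ * w) ∂μ := by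
      have h1 : Φ w = ∫ y' in Kμ, ψ (y'⁻¹ * w) ∂μ := by
        have h2 := integral_add_compl hKμc.isClosed.measurableSet (hintμ w)
        have h3 : μ.restrict Kμᶜ = 0 := Measure.restrict_eq_zero.mpr hKμ0
        rw [h3, integral_zero_measure, add_zero] at h2
        exact h2.symm
      rw [h1, ← hPU, integral_iUnion_fintype hPm hPd (fun i => (hintμ w).integrableOn)]
    have hconst : ∀ i, cP i * ψ ((y i)⁻¹ * w) = ∫ _ in P i, ψ ((y i)⁻¹ * w) ∂μ := by
      intro i
      rw [setIntegral_const]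
      simp [cP, smul_eq_mul, measureReal_def]
    have hθw : θ w = ∑ i, ∫ y' in P i, (ψ (y'⁻¹ * w) - ψ ((y i)⁻¹ * w)) ∂μ := by
      simp only [θ]
      rw [hrestr]
      rw [← Finset.sum_sub_distrib]
      congr 1 with i
      rw [hconst i, ← integral_sub ((hintμ w).integrableOn) (integrable_const _)]
    rw [hθw]
    calc |∑ i, ∫ y' in P i, (ψ (y'⁻¹ * w) - ψ ((y i)⁻¹ * w)) ∂μ|
        ≤ ∑ i, |∫ y' in P i, (ψ (y'⁻¹ * w) - ψ ((y i)⁻¹ * w)) ∂μ| :=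
          Finset.abs_sum_le_sum_abs _ _
      _ ≤ ∑ i, ε * cP i := by
          apply Finset.sum_le_sum
          intro i _
          have hb : ∀ y' ∈ P i, ‖ψ (y'⁻¹ * w) - ψ ((y i)⁻¹ * w)‖ ≤ ε := by
            intro y' hy'
            rw [Real.norm_eq_abs]
            have hgU : (y i)⁻¹ * y' ∈ U := hPV i y' hy'
            have := hUb _ (hUsym _ hgU) ((y i)⁻¹ * w)
            have harg : ((y i)⁻¹ * y')⁻¹ * ((y i)⁻¹ * w) = y'⁻¹ * w := by group
            rw [harg] at this
            exact this
          have hmeas : AEStronglyMeasurable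
              (fun y' => ψ (y'⁻¹ * w) - ψ ((y i)⁻¹ * w)) (μ.restrict (P i)) :=
            (((hψc.comp (continuous_inv.mul continuous_const)).sub
              continuous_const).aestronglyMeasurable).restrict
          have := norm_setIntegral_le_of_norm_le_const (μ := μ)
            (measure_lt_top μ (P i)) hb
          rw [Real.norm_eq_abs] at this
          calc |∫ y' in P i, (ψ (y'⁻¹ * w) - ψ ((y i)⁻¹ * w)) ∂μ|
              ≤ ε * (μ (P i)).toReal := this
            _ = ε * cP i := rfl
      _ = ε := by rw [← Finset.mul_sum, hsum1, mul_one]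
  have hθ0 : ∀ w ∉ K₀, θ w = 0 := by
    intro w hw
    have h1 : Φ w = 0 := hΦ0 w hw
    have h2 : ∀ i, ψ ((y i)⁻¹ * w) = 0 := by
      intro i
      apply image_eq_zero_of_notMem_tsupport
      intro hmem
      exact hw ⟨y i, hyK i, (y i)⁻¹ * w, hmem, by group⟩
    simp only [θ, h1, h2, mul_zero, Finset.sum_const_zero, sub_zero]
  have hθc : Continuous θ :=
    hΦc.sub (continuous_finset_sum _ fun i _ =>
      continuous_const.mul (hψc.comp (continuous_const.mul continuous_id)))
  have hθs : HasCompactSupport θ := HasCompactSupport.intro hK₀c hθ0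
  -- the element W₁ = θ * h and the Riemann sum Sv
  set W₁ : G → ℝ := fConv m θ h with hW₁
  have hW₁D : W₁ ∈ D := by
    rw [hD]
    exact Submodule.subset_span ⟨θ, h, hθc, hθs, ⟨⟨Ch, hCh⟩, hhc, hhu⟩, hhM, rfl⟩
  set Sv : G → ℝ := ∑ i, cP i • (fun t => v ((y i)⁻¹ * t)) with hSv
  have hyv : ∀ i, (fun t => v ((y i)⁻¹ * t)) = fConv m (fun w => ψ ((y i)⁻¹ * w)) h := by
    intro i
    funext t
    exact myTransl m ψ h (y i) t
  have hyvD : ∀ i, (fun t => v ((y i)⁻¹ * t)) ∈ D := by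
    intro i
    rw [hyv i, hD]
    refine Submodule.subset_span ⟨fun w => ψ ((y i)⁻¹ * w), h,
      hψc.comp (continuous_const.mul continuous_id),
      hψs.comp_homeomorph (Homeomorph.mulLeft (y i)⁻¹),
      ⟨⟨Ch, hCh⟩, hhc, hhu⟩, hhM, rfl⟩
  have hSvD : Sv ∈ D := Submodule.sum_mem D fun i _ => D.smul_mem _ (hyvD i)
  -- the decomposition
  have hdecomp : fConv m Φ h = W₁ + Sv := by
    funext t
    have hint1 : Integrable (fun y' => Φ y' * h (y'⁻¹ * t)) m :=
      myInt m Φ h hΦc hΦs hhc t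
    have hint2 : ∀ i, Integrable (fun y' => cP i * (ψ ((y i)⁻¹ * y') * h (y'⁻¹ * t))) m := by
      intro i
      exact (myInt m _ h (hψc.comp (continuous_const.mul continuous_id))
        (hψs.comp_homeomorph (Homeomorph.mulLeft (y i)⁻¹)) hhc t).const_mul _
    have hstep : W₁ t = fConv m Φ h t - ∑ i, cP i * fConv m (fun w => ψ ((y i)⁻¹ * w)) h t := by
      have hrw : (fun y' => θ y' * h (y'⁻¹ * t))
          = fun y' => Φ y' * h (y'⁻¹ * t)
            - ∑ i, cP i * (ψ ((y i)⁻¹ * y') * h (y'⁻¹ * t)) := by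
        funext y'
        simp only [θ, sub_mul, Finset.sum_mul]
        congr 1
        apply Finset.sum_congr rfl
        intro i _
        ring
      show (∫ y', θ y' * h (y'⁻¹ * t) ∂m) = _
      rw [hrw, integral_sub hint1 (integrable_finset_sum _ fun i _ => hint2 i),
        integral_finset_sum _ fun i _ => hint2 i]
      congr 1
      apply Finset.sum_congr rfl
      intro i _
      rw [MeasureTheory.integral_const_mul]
      rfl
    have hSvt : Sv t = ∑ i, cP i * v ((y i)⁻¹ * t) := by
      simp [Sv, Finset.sum_apply, smul_eq_mul]
    have hPi : (W₁ + Sv) t = W₁ t + Sv t := rfl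
    rw [hPi, hstep, hSvt]
    have : ∀ i, fConv m (fun w => ψ ((y i)⁻¹ * w)) h t = v ((y i)⁻¹ * t) := by
      intro i
      rw [← myTransl m ψ h (y i) t]
    rw [Finset.sum_congr rfl (fun i _ => by rw [this i])]
    ring
  -- the pointwise bound on W₁
  have hbound : ∀ t, |W₁ t| ≤ ε * E t := by
    intro t
    have hb1 : |W₁ t| ≤ ∫ y', |θ y'| * |h (y'⁻¹ * t)| ∂m := by
      have := norm_integral_le_integral_norm (fun y' => θ y' * h (y'⁻¹ * t)) (μ := m)
      simpa [Real.norm_eq_abs, abs_mul, W₁, fConv] using this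
    have habs_int : Integrable (fun y' => |θ y'| * |h (y'⁻¹ * t)|) m := by
      have := (myInt m θ h hθc hθs hhc t).abs
      simpa [abs_mul] using this
    have hbig_int : Integrable
        (fun y' => ε * ((1/c') * ∑ i, φ ((z i)⁻¹ * y') * |h (y'⁻¹ * t)|)) m := by
      apply Integrable.const_mul
      apply Integrable.const_mul
      apply integrable_finset_sum
      intro i _
      exact myInt m (ψz i) habs (hψzc i) (hψzs i) habsc t
    have hb2 : ∫ y', |θ y'| * |h (y'⁻¹ * t)| ∂m
        = ∫ y' in K₀, |θ y'| * |h (y'⁻¹ * t)| ∂m := by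
      symm
      apply setIntegral_eq_integral_of_forall_compl_eq_zero
      intro y' hy'
      rw [hθ0 y' hy', abs_zero, zero_mul]
    have hb3 : ∫ y' in K₀, |θ y'| * |h (y'⁻¹ * t)| ∂m
        ≤ ∫ y' in K₀, ε * ((1/c') * ∑ i, φ ((z i)⁻¹ * y') * |h (y'⁻¹ * t)|) ∂m := by
      apply setIntegral_mono_on habs_int.integrableOn hbig_int.integrableOn
        hK₀c.isClosed.measurableSet
      intro y' hy'
      have h1 : |θ y'| ≤ ε := hθb y'
      have h2 : (1:ℝ) ≤ (1/c') * ∑ i, φ ((z i)⁻¹ * y') := by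
        rw [div_mul_eq_mul_div, one_mul, le_div_iff₀ hc'0, one_mul]
        exact hzcov y' hy'
      calc |θ y'| * |h (y'⁻¹ * t)| ≤ ε * |h (y'⁻¹ * t)| :=
            mul_le_mul_of_nonneg_right h1 (abs_nonneg _)
        _ = ε * (1 * |h (y'⁻¹ * t)|) := by ring
        _ ≤ ε * (((1/c') * ∑ i, φ ((z i)⁻¹ * y')) * |h (y'⁻¹ * t)|) := by
            apply mul_le_mul_of_nonneg_left _ hε.le
            exact mul_le_mul_of_nonneg_right h2 (abs_nonneg _)
        _ = ε * ((1/c') * ∑ i, φ ((z i)⁻¹ * y') * |h (y'⁻¹ * t)|) := by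
            rw [mul_assoc, Finset.sum_mul]
    have hb4 : ∫ y' in K₀, ε * ((1/c') * ∑ i, φ ((z i)⁻¹ * y') * |h (y'⁻¹ * t)|) ∂m
        ≤ ∫ y', ε * ((1/c') * ∑ i, φ ((z i)⁻¹ * y') * |h (y'⁻¹ * t)|) ∂m := by
      apply setIntegral_le_integral hbig_int
      filter_upwards with y'
      have : (0:ℝ) ≤ ∑ i, φ ((z i)⁻¹ * y') * |h (y'⁻¹ * t)| :=
        Finset.sum_nonneg fun i _ => mul_nonneg (hφ0 _) (abs_nonneg _)
      positivity
    have hb5 : ∫ y', ε * ((1/c') * ∑ i, φ ((z i)⁻¹ * y') * |h (y'⁻¹ * t)|) ∂m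
        = ε * E t := by
      rw [MeasureTheory.integral_const_mul, MeasureTheory.integral_const_mul,
        integral_finset_sum _ (fun i _ => myInt m (ψz i) habs (hψzc i) (hψzs i) habsc t)]
      have hEt : E t = (1/c') * ∑ i, Egen i t := by
        simp [E, Finset.sum_apply]
      rw [hEt]
      rfl
    calc |W₁ t| ≤ ∫ y', |θ y'| * |h (y'⁻¹ * t)| ∂m := hb1
      _ = ∫ y' in K₀, |θ y'| * |h (y'⁻¹ * t)| ∂m := hb2
      _ ≤ ∫ y' in K₀, ε * ((1/c') * ∑ i, φ ((z i)⁻¹ * y') * |h (y'⁻¹ * t)|) ∂m := hb3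
      _ ≤ ∫ y', ε * ((1/c') * ∑ i, φ ((z i)⁻¹ * y') * |h (y'⁻¹ * t)|) ∂m := hb4
      _ = ε * E t := hb5
  -- conclusion
  have hIW : |I W₁| ≤ ε * I E := by
    have h1 : 0 ≤ I (ε • E - W₁) := by
      apply Ipos _ (D.sub_mem (D.smul_mem _ hED) hW₁D)
      intro t
      have := hbound t
      have hEt : (ε • E - W₁) t = ε * E t - W₁ t := by
        simp [smul_eq_mul]
      rw [hEt]
      have := abs_le.mp (hbound t)
      linarith [this.2]
    have h2 : 0 ≤ I (ε • E + W₁) := by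
      apply Ipos _ (D.add_mem (D.smul_mem _ hED) hW₁D)
      intro t
      have hEt : (ε • E + W₁) t = ε * E t + W₁ t := by
        simp [smul_eq_mul]
      rw [hEt]
      have := abs_le.mp (hbound t)
      linarith [this.1]
    rw [Isub _ (D.smul_mem _ hED) _ hW₁D, Ismul _ _ hED] at h1
    rw [Iadd _ (D.smul_mem _ hED) _ hW₁D, Ismul _ _ hED] at h2
    rw [abs_le]
    constructor <;> linarith
  -- I Sv = I v
  have hISv : I Sv = I v := by
    rw [hSv, Isum n _ (fun i => D.smul_mem _ (hyvD i))]
    have : ∀ i, I (cP i • (fun t => v ((y i)⁻¹ * t))) = cP i * I v := by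
      intro i
      rw [Ismul _ _ (hyvD i), Iinv (y i) v hvD]
    rw [Finset.sum_congr rfl (fun i _ => this i), ← Finset.sum_mul, hsum1, one_mul]
  -- put it together
  have hfinal : I (mConv μ v) = I W₁ + I v := by
    rw [hμv, hdecomp, Iadd _ hW₁D _ hSvD, hISv]
  rw [hfinal]
  have : I W₁ + I v - I v = I W₁ := by ring
  rw [this]
  exact hIW

end Helpers


theorem statement_14 [Group G] [TopologicalSpace G] [IsTopologicalGroup G] [LocallyCompactSpace G]
    [T2Space G] [MeasurableSpace G] [BorelSpace G]
    (m : Measure G) [m.IsHaarMeasure]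
    (f : G → ℝ) (hf : RUCb f) (hf0 : ∀ x, 0 ≤ f x) (hfne : f ≠ 0)
    (φ : G → ℝ) (hφc : Continuous φ) (hφs : HasCompactSupport φ)
    (hφ0 : ∀ x, 0 ≤ φ x) (hφ1 : ∫ x, φ x ∂m = 1)
    (D : Submodule ℝ (G → ℝ))
    (hD : D = Submodule.span ℝ {v : G → ℝ | ∃ ψ h : G → ℝ,
      Continuous ψ ∧ HasCompactSupport ψ ∧ RUCb h ∧ MDom f h ∧ v = fConv m ψ h})
    (I : (G → ℝ) → ℝ)
    (Iadd : ∀ h ∈ D, ∀ v ∈ D, I (h + v) = I h + I v)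
    (Ismul : ∀ c : ℝ, ∀ h ∈ D, I (c • h) = c * I h)
    (Ipos : ∀ v ∈ D, (∀ x, 0 ≤ v x) → 0 ≤ I v)
    (Iinv : ∀ g : G, ∀ v ∈ D, I (fun x => v (g⁻¹ * x)) = I v)
    (C : ℝ) (hC : 0 ≤ C)
    (Icont : ∀ v ∈ D, |I v| ≤ C * pNorm (fConv m φ f) v) :
    ∀ μ : Measure G, MComp μ → μ Set.univ = 1 →
      ∀ h ∈ D, I (mConv μ h) = I h := by
  intro μ hμMC hμ1 h₀ hh₀
  obtain ⟨hμfin, hμreg, Kμ, hKμc, hKμ0⟩ := hμMC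
  haveI := hμfin
  have hh₀' : h₀ ∈ Submodule.span ℝ {v : G → ℝ | ∃ ψ h : G → ℝ,
      Continuous ψ ∧ HasCompactSupport ψ ∧ RUCb h ∧ MDom f h ∧ v = fConv m ψ h} := by
    rw [← hD]; exact hh₀
  have key : ∀ (w : G → ℝ), w ∈ Submodule.span ℝ {v : G → ℝ | ∃ ψ h : G → ℝ,
      Continuous ψ ∧ HasCompactSupport ψ ∧ RUCb h ∧ MDom f h ∧ v = fConv m ψ h} →
      (w ∈ D ∧ Continuous w ∧ (∃ Cw : ℝ, ∀ x, |w x| ≤ Cw) ∧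
        mConv μ w ∈ D ∧ I (mConv μ w) = I w) := by
    intro w hw
    induction hw using Submodule.span_induction with
    | mem x hx =>
      obtain ⟨ψ, h, hψc, hψs, hhR, hhM, rfl⟩ := hx
      obtain ⟨⟨Ch, hCh⟩, hhc, hhu⟩ := hhR
      have hxD : fConv m ψ h ∈ D := by
        rw [hD]
        exact Submodule.subset_span ⟨ψ, h, hψc, hψs, ⟨⟨Ch, hCh⟩, hhc, hhu⟩, hhM, rfl⟩
      refine ⟨hxD, myContFConv m ψ h hψc hψs hhc hCh,
        ⟨(∫ y, |ψ y| ∂m) * Ch, fun x => myBdd m ψ h hψc hψs hhc hCh x⟩, ?_, ?_⟩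
      · rw [myFubini m μ hKμc hKμ0 ψ h hψc hψs hhc hCh, hD]
        refine Submodule.subset_span ⟨fun z => ∫ y, ψ (y⁻¹ * z) ∂μ, h,
          myContMu μ ψ hψc hψs, ?_, ⟨⟨Ch, hCh⟩, hhc, hhu⟩, hhM, rfl⟩
        exact HasCompactSupport.intro (hKμc.mul hψs)
          (fun z hz => mySuppMu μ hKμ0 ψ hz)
      · exact myGen m f φ hφc hφs hφ0 hφ1 D hD I Iadd Ismul Ipos Iinv μ hμ1
          hKμc hKμ0 ψ h hψc hψs ⟨⟨Ch, hCh⟩, hhc, hhu⟩ hhM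
    | zero =>
      have hm0 : mConv μ (0 : G → ℝ) = 0 := by
        funext t
        simp [mConv]
      refine ⟨D.zero_mem, continuous_const, ⟨0, fun x => by simp⟩, ?_, ?_⟩
      · rw [hm0]; exact D.zero_mem
      · rw [hm0]
    | add x y hx hy ihx ihy =>
      obtain ⟨hxD, hxc, ⟨Cx, hCx⟩, hxμD, hxI⟩ := ihx
      obtain ⟨hyD, hyc, ⟨Cy, hCy⟩, hyμD, hyI⟩ := ihy
      have hmadd : mConv μ (x + y) = mConv μ x + mConv μ y := by
        funext t
        have hix : Integrable (fun u => x (u⁻¹ * t)) μ :=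
          myIntBdd μ _ (hxc.comp (continuous_inv.mul continuous_const)) (fun u => hCx _)
        have hiy : Integrable (fun u => y (u⁻¹ * t)) μ :=
          myIntBdd μ _ (hyc.comp (continuous_inv.mul continuous_const)) (fun u => hCy _)
        have : mConv μ (x + y) t = ∫ u, (x (u⁻¹ * t) + y (u⁻¹ * t)) ∂μ := rfl
        rw [this, integral_add hix hiy]
        rfl
      refine ⟨D.add_mem hxD hyD, hxc.add hyc,
        ⟨Cx + Cy, fun t => (abs_add_le _ _).trans (add_le_add (hCx t) (hCy t))⟩, ?_, ?_⟩
      · rw [hmadd]; exact D.add_mem hxμD hyμD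
      · rw [hmadd, Iadd _ hxμD _ hyμD, hxI, hyI, Iadd _ hxD _ hyD]
    | smul a x hx ihx =>
      obtain ⟨hxD, hxc, ⟨Cx, hCx⟩, hxμD, hxI⟩ := ihx
      have hmsmul : mConv μ (a • x) = a • mConv μ x := by
        funext t
        have : mConv μ (a • x) t = ∫ u, a * x (u⁻¹ * t) ∂μ := rfl
        rw [this, MeasureTheory.integral_const_mul]
        rfl
      refine ⟨D.smul_mem a hxD, (continuous_const.mul hxc : Continuous fun t => a * x t),
        ⟨|a| * Cx, fun t => ?_⟩, ?_, ?_⟩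
      · have : |(a • x) t| = |a| * |x t| := by
          simp [abs_mul]
        rw [this]
        exact mul_le_mul_of_nonneg_left (hCx t) (abs_nonneg a)
      · rw [hmsmul]; exact D.smul_mem a hxμD
      · rw [hmsmul, Ismul a _ hxμD, hxI, Ismul a _ hxD]
  exact (key h₀ hh₀').2.2.2.2
end
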